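/- arXiv:1702.00760 — 6 statements merged into one kernel-verified Lean document; each statement's English description precedes it below -/
import Mathlib

section
/- Let α > -1/2 and γ ∈ ℝ be fixed, and for 0 ≤ B ≤ 1 define I(B) = ∫_{-1}^{1} (1 - B s)^γ (1 - s²)^{α - 1/2} ds. Then uniformly in 0 ≤ B < 1: if α + γ + 1/2 < 0 there are constants c, C > 0 with c·(1-B)^{α+γ+1/2} ≤ I(B) ≤ C·(1-B)^{α+γ+1/2}; if α + γ + 1/2 = 0 then c·(1 + log(1/(1-B))) ≤ I(B) ≤ C·(1 + log(1/(1-B))); and if α + γ + 1/2 > 0 then c ≤ I(B) ≤ C. -/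
open MeasureTheory Set intervalIntegral

namespace Stmt0Aux

lemma rpow_le_max {x a b g : ℝ} (ha : 0 < a) (hax : a ≤ x) (hxb : x ≤ b) :
    x ^ g ≤ max (a ^ g) (b ^ g) := by
  rcases le_or_gt 0 g with hg | hg
  · exact le_max_of_le_right (Real.rpow_le_rpow (ha.trans_le hax).le hxb hg)
  · exact le_max_of_le_left (Real.rpow_le_rpow_of_nonpos ha hax hg.le)

lemma min_le_rpow {x a b g : ℝ} (ha : 0 < a) (hax : a ≤ x) (hxb : x ≤ b) :
    min (a ^ g) (b ^ g) ≤ x ^ g := by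
  rcases le_or_gt 0 g with hg | hg
  · exact min_le_of_left_le (Real.rpow_le_rpow ha.le hax hg)
  · exact min_le_of_right_le (Real.rpow_le_rpow_of_nonpos (ha.trans_le hax) hxb hg.le)

lemma intInt_one_sub (p : ℝ) (hp : -1 < p) (a b : ℝ) :
    IntervalIntegrable (fun s : ℝ => (1 - s) ^ p) volume a b := by
  have := (intervalIntegrable_rpow' (a := 1 - a) (b := 1 - b) hp).comp_sub_left 1
  simpa using this

lemma intInt_one_add (q : ℝ) (hq : -1 < q) (a b : ℝ) :
    IntervalIntegrable (fun s : ℝ => (1 + s) ^ q) volume a b := by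
  have := (intervalIntegrable_rpow' (a := a + 1) (b := b + 1) hq).comp_add_right 1
  simpa [add_comm] using this

lemma integral_one_sub_rpow {p : ℝ} (a b : ℝ)
    (h : -1 < p ∨ p ≠ -1 ∧ (0 : ℝ) ∉ uIcc (1 - b) (1 - a)) :
    ∫ s in a..b, (1 - s) ^ p = ((1 - a) ^ (p + 1) - (1 - b) ^ (p + 1)) / (p + 1) := by
  have h1 := intervalIntegral.integral_comp_sub_left (a := a) (b := b) (fun x : ℝ => x ^ p) 1
  rw [h1, integral_rpow h]

lemma integral_one_add_rpow {q : ℝ} (a b : ℝ)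
    (h : -1 < q ∨ q ≠ -1 ∧ (0 : ℝ) ∉ uIcc (1 + a) (1 + b)) :
    ∫ s in a..b, (1 + s) ^ q = ((1 + b) ^ (q + 1) - (1 + a) ^ (q + 1)) / (q + 1) := by
  have h1 := intervalIntegral.integral_comp_add_left (a := a) (b := b) (fun x : ℝ => x ^ q) 1
  rw [h1, integral_rpow h]

lemma integral_one_sub_inv {a b : ℝ} (h : (0 : ℝ) ∉ uIcc (1 - b) (1 - a)) :
    ∫ s in a..b, (1 - s) ^ (-1 : ℝ) = Real.log ((1 - a) / (1 - b)) := by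
  have h1 := intervalIntegral.integral_comp_sub_left (a := a) (b := b) (fun x : ℝ => x ^ (-1:ℝ)) 1
  rw [h1]
  simp only [Real.rpow_neg_one]
  rw [integral_inv h]




variable {γ A B : ℝ}

lemma base_pos (hB0 : 0 ≤ B) (hB1 : B < 1) {s : ℝ} (hs : s ≤ 1) : 0 < 1 - B * s := by
  have h := mul_le_mul_of_nonneg_left hs hB0
  rw [mul_one] at h; linarith

lemma base_ge (hB0 : 0 ≤ B) {s : ℝ} (hs : s ≤ 1) : 1 - B ≤ 1 - B * s := by
  have h := mul_le_mul_of_nonneg_left hs hB0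
  rw [mul_one] at h; linarith

lemma base_le_two (hB0 : 0 ≤ B) (hB1 : B ≤ 1) {s : ℝ} (hs : -1 ≤ s) : 1 - B * s ≤ 2 := by
  have h := mul_le_mul_of_nonneg_left hs hB0
  rw [mul_neg_one] at h; linarith

lemma half_le_base (hB0 : 0 ≤ B) (hB1 : B ≤ 1) {s : ℝ} (hs1 : -1 ≤ s) (hs2 : s ≤ 1) :
    (1 - s) / 2 ≤ 1 - B * s := by
  nlinarith [mul_nonneg (by linarith : (0:ℝ) ≤ 1 + s) (by linarith : (0:ℝ) ≤ 1 - B),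
    mul_nonneg hB0 (by linarith : (0:ℝ) ≤ 1 - s)]

lemma base_le_sum (hB1 : B ≤ 1) {s : ℝ} (hs : s ≤ 1) : 1 - B * s ≤ (1 - B) + (1 - s) := by
  nlinarith [mul_nonneg (by linarith : (0:ℝ) ≤ 1 - B) (by linarith : (0:ℝ) ≤ 1 - s)]

lemma F_eq {s : ℝ} (hs1 : -1 ≤ s) (hs2 : s ≤ 1) :
    (1 - B * s) ^ γ * (1 - s ^ 2) ^ A = (1 - B * s) ^ γ * ((1 - s) ^ A * (1 + s) ^ A) := by
  rw [show (1 - s ^ 2 : ℝ) = (1 - s) * (1 + s) by ring,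
    Real.mul_rpow (by linarith) (by linarith)]

lemma F_nonneg (hB0 : 0 ≤ B) (hB1 : B < 1) {s : ℝ} (hs2 : s ≤ 1) (hs1 : -1 ≤ s) :
    0 ≤ (1 - B * s) ^ γ * (1 - s ^ 2) ^ A :=
  mul_nonneg (Real.rpow_nonneg (base_pos hB0 hB1 hs2).le _)
    (Real.rpow_nonneg (by nlinarith) _)

lemma measF : Measurable fun s : ℝ => (1 - B * s) ^ γ * (1 - s ^ 2) ^ A := by
  fun_prop

lemma intIntF (hA : -1 < A) (hB0 : 0 ≤ B) (hB1 : B < 1) :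
    IntervalIntegrable (fun s : ℝ => (1 - B * s) ^ γ * (1 - s ^ 2) ^ A) volume (-1) 1 := by
  set M : ℝ := max ((1 - B) ^ γ) (2 ^ γ) * max 1 (2 ^ A) with hM
  have hMnn : 0 ≤ M := mul_nonneg (le_max_of_le_right (Real.rpow_nonneg (by norm_num) _))
    (le_max_of_le_left zero_le_one)
  have key : ∀ s : ℝ, -1 ≤ s → s ≤ 1 →
      (1 - B * s) ^ γ ≤ max ((1 - B) ^ γ) (2 ^ γ) := fun s hs1 hs2 =>
    rpow_le_max (by linarith) (base_ge hB0 hs2) (base_le_two hB0 hB1.le hs1)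
  have h1 : IntervalIntegrable (fun s : ℝ => (1 - B * s) ^ γ * (1 - s ^ 2) ^ A) volume 0 1 := by
    apply IntervalIntegrable.mono_fun' ((intInt_one_sub A hA 0 1).const_mul M)
      measF.aestronglyMeasurable
    rw [Filter.EventuallyLE, ae_restrict_iff' measurableSet_uIoc]
    apply ae_of_all
    intro s hs
    rw [uIoc_of_le (by norm_num : (0:ℝ) ≤ 1)] at hs
    obtain ⟨hs0, hs1⟩ := hs
    have hs1' : -1 ≤ s := by linarith
    have hnn := F_nonneg (γ := γ) (A := A) hB0 hB1 hs1 hs1'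
    rw [Real.norm_eq_abs, abs_of_nonneg hnn, F_eq hs1' hs1]
    have h2 : (1 + s) ^ A ≤ max 1 (2 ^ A) := by
      have := rpow_le_max (x := 1 + s) (a := 1) (b := 2) (g := A) one_pos
        (by linarith) (by linarith)
      simpa using this
    calc (1 - B * s) ^ γ * ((1 - s) ^ A * (1 + s) ^ A)
        ≤ (max ((1 - B) ^ γ) (2 ^ γ)) * ((1 - s) ^ A * max 1 (2 ^ A)) := by
          apply mul_le_mul (key s hs1' hs1)
            (mul_le_mul_of_nonneg_left h2 (Real.rpow_nonneg (by linarith) _))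
            (mul_nonneg (Real.rpow_nonneg (by linarith) _) (Real.rpow_nonneg (by linarith) _))
            (le_max_of_le_right (Real.rpow_nonneg (by norm_num) _))
      _ = M * (1 - s) ^ A := by ring
  have h2 : IntervalIntegrable (fun s : ℝ => (1 - B * s) ^ γ * (1 - s ^ 2) ^ A) volume (-1) 0 := by
    apply IntervalIntegrable.mono_fun' ((intInt_one_add A hA (-1) 0).const_mul M)
      measF.aestronglyMeasurable
    rw [Filter.EventuallyLE, ae_restrict_iff' measurableSet_uIoc]
    apply ae_of_all
    intro s hs
    rw [uIoc_of_le (by norm_num : (-1:ℝ) ≤ 0)] at hs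
    obtain ⟨hs0, hs1⟩ := hs
    have hs1' : s ≤ 1 := by linarith
    have hs0' : -1 ≤ s := hs0.le
    have hnn := F_nonneg (γ := γ) (A := A) hB0 hB1 hs1' hs0'
    rw [Real.norm_eq_abs, abs_of_nonneg hnn, F_eq hs0' hs1']
    have h2 : (1 - s) ^ A ≤ max 1 (2 ^ A) := by
      have := rpow_le_max (x := 1 - s) (a := 1) (b := 2) (g := A) one_pos
        (by linarith) (by linarith)
      simpa using this
    calc (1 - B * s) ^ γ * ((1 - s) ^ A * (1 + s) ^ A)
        ≤ (max ((1 - B) ^ γ) (2 ^ γ)) * (max 1 (2 ^ A) * (1 + s) ^ A) := by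
          apply mul_le_mul (key s hs0' hs1')
            (mul_le_mul_of_nonneg_right h2 (Real.rpow_nonneg (by linarith) _))
            (mul_nonneg (Real.rpow_nonneg (by linarith) _) (Real.rpow_nonneg (by linarith) _))
            (le_max_of_le_right (Real.rpow_nonneg (by norm_num) _))
      _ = M * (1 + s) ^ A := by ring
  exact h2.trans h1


lemma sub_uIcc {c d : ℝ} (h1 : -1 ≤ c) (h2 : d ≤ 1) (h3 : c ≤ d) :
    Set.uIcc c d ⊆ Set.uIcc (-1:ℝ) 1 := by
  rw [uIcc_of_le h3, uIcc_of_le (by norm_num : (-1:ℝ) ≤ 1)]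
  exact Icc_subset_Icc h1 h2

lemma integral_mono_Ioo {f g : ℝ → ℝ} {a b : ℝ} (hab : a ≤ b)
    (hf : IntervalIntegrable f volume a b) (hg : IntervalIntegrable g volume a b)
    (h : ∀ s ∈ Set.Ioo a b, f s ≤ g s) : ∫ s in a..b, f s ≤ ∫ s in a..b, g s := by
  apply intervalIntegral.integral_mono_ae_restrict hab hf hg
  have hae : ∀ᵐ s : ℝ ∂(volume.restrict (Icc a b)), s ≠ a ∧ s ≠ b := by
    apply Filter.Eventually.filter_mono (ae_mono Measure.restrict_le_self)
    filter_upwards [compl_mem_ae_iff.mpr (measure_singleton a),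
      compl_mem_ae_iff.mpr (measure_singleton b)] with s hsa hsb
    exact ⟨hsa, hsb⟩
  filter_upwards [hae, ae_restrict_mem measurableSet_Icc] with s hne hs
  exact h s ⟨lt_of_le_of_ne hs.1 (Ne.symm hne.1), lt_of_le_of_ne hs.2 hne.2⟩

lemma integral_restrict_le {γ A B : ℝ} (hA : -1 < A) (hB0 : 0 ≤ B) (hB1 : B < 1) {c d : ℝ}
    (hc : -1 ≤ c) (hcd : c ≤ d) (hd : d ≤ 1) :
    ∫ s in c..d, (1 - B * s) ^ γ * (1 - s ^ 2) ^ A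
      ≤ ∫ s in (-1:ℝ)..1, (1 - B * s) ^ γ * (1 - s ^ 2) ^ A := by
  apply intervalIntegral.integral_mono_interval hc hcd hd ?_ (intIntF (γ := γ) hA hB0 hB1)
  rw [Filter.EventuallyLE, ae_restrict_iff' measurableSet_Ioc]
  apply ae_of_all
  intro s hs
  exact F_nonneg hB0 hB1 hs.2 hs.1.le

lemma intInt_prod {p q : ℝ} (hp : -1 < p) (hq : -1 < q) :
    IntervalIntegrable (fun s : ℝ => (1 - s) ^ p * (1 + s) ^ q) volume (-1) 1 := by
  have hmeas : Measurable fun s : ℝ => (1 - s) ^ p * (1 + s) ^ q := by fun_prop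
  have h1 : IntervalIntegrable (fun s : ℝ => (1 - s) ^ p * (1 + s) ^ q) volume 0 1 := by
    apply IntervalIntegrable.mono_fun' ((intInt_one_sub p hp 0 1).const_mul (max 1 (2 ^ q)))
      hmeas.aestronglyMeasurable
    rw [Filter.EventuallyLE, ae_restrict_iff' measurableSet_uIoc]
    apply ae_of_all
    intro s hs
    rw [uIoc_of_le (by norm_num : (0:ℝ) ≤ 1)] at hs
    obtain ⟨hs0, hs1⟩ := hs
    have hnn : 0 ≤ (1 - s) ^ p * (1 + s) ^ q :=
      mul_nonneg (Real.rpow_nonneg (by linarith) _) (Real.rpow_nonneg (by linarith) _)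
    rw [Real.norm_eq_abs, abs_of_nonneg hnn]
    have h2 : (1 + s) ^ q ≤ max 1 (2 ^ q) := by
      simpa using rpow_le_max (x := 1 + s) (a := 1) (b := 2) (g := q) one_pos
        (by linarith) (by linarith)
    calc (1 - s) ^ p * (1 + s) ^ q ≤ (1 - s) ^ p * max 1 (2 ^ q) :=
          mul_le_mul_of_nonneg_left h2 (Real.rpow_nonneg (by linarith) _)
      _ = max 1 (2 ^ q) * (1 - s) ^ p := by ring
  have h2 : IntervalIntegrable (fun s : ℝ => (1 - s) ^ p * (1 + s) ^ q) volume (-1) 0 := by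
    apply IntervalIntegrable.mono_fun' ((intInt_one_add q hq (-1) 0).const_mul (max 1 (2 ^ p)))
      hmeas.aestronglyMeasurable
    rw [Filter.EventuallyLE, ae_restrict_iff' measurableSet_uIoc]
    apply ae_of_all
    intro s hs
    rw [uIoc_of_le (by norm_num : (-1:ℝ) ≤ 0)] at hs
    obtain ⟨hs0, hs1⟩ := hs
    have hnn : 0 ≤ (1 - s) ^ p * (1 + s) ^ q :=
      mul_nonneg (Real.rpow_nonneg (by linarith) _) (Real.rpow_nonneg (by linarith) _)
    rw [Real.norm_eq_abs, abs_of_nonneg hnn]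
    have h2 : (1 - s) ^ p ≤ max 1 (2 ^ p) := by
      simpa using rpow_le_max (x := 1 - s) (a := 1) (b := 2) (g := p) one_pos
        (by linarith) (by linarith)
    exact mul_le_mul_of_nonneg_right h2 (Real.rpow_nonneg (by linarith) _)
  exact h2.trans h1
lemma lower_piece {γ A B : ℝ} (hA : -1 < A) (hB0 : 0 ≤ B) (hB1 : B < 1) :
    min 1 ((3/2:ℝ) ^ γ) * min ((3/4:ℝ) ^ A) 1 * (1/2)
      ≤ ∫ s in (-1/2:ℝ)..0, (1 - B * s) ^ γ * (1 - s ^ 2) ^ A := by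
  have hint := (intIntF (γ := γ) hA hB0 hB1).mono_set
    (sub_uIcc (c := -1/2) (d := 0) (by norm_num) (by norm_num) (by norm_num))
  have h := intervalIntegral.integral_mono_on (by norm_num : (-1/2:ℝ) ≤ 0)
    (_root_.intervalIntegrable_const (μ := volume) (c := min 1 ((3/2:ℝ) ^ γ) * min ((3/4:ℝ) ^ A) 1)) hint ?_
  · calc min 1 ((3/2:ℝ)^γ) * min ((3/4:ℝ)^A) 1 * (1/2)
        = ∫ _ in (-1/2:ℝ)..0, (min 1 ((3/2:ℝ)^γ) * min ((3/4:ℝ)^A) 1) := by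
          rw [intervalIntegral.integral_const, smul_eq_mul]; ring
      _ ≤ _ := h
  · intro s hs
    obtain ⟨h1, h2⟩ := hs
    have hb1 : (1:ℝ) ≤ 1 - B * s := by nlinarith [mul_nonneg hB0 (by linarith : (0:ℝ) ≤ -s)]
    have hb2 : 1 - B * s ≤ 3/2 := by nlinarith [mul_le_mul_of_nonneg_left h1 hB0]
    have e1 : min 1 ((3/2:ℝ)^γ) ≤ (1 - B*s)^γ := by
      simpa using min_le_rpow (x := 1 - B*s) (a := 1) (b := 3/2) (g := γ) one_pos hb1 hb2
    have hc1 : (3/4:ℝ) ≤ 1 - s^2 := by nlinarith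
    have hc2 : 1 - s^2 ≤ 1 := by nlinarith
    have e2 : min ((3/4:ℝ)^A) 1 ≤ (1 - s^2)^A := by
      have := min_le_rpow (x := 1 - s^2) (a := 3/4) (b := 1) (g := A) (by norm_num) hc1 hc2
      simpa using this
    exact mul_le_mul e1 e2 (le_min (Real.rpow_nonneg (by norm_num) _) zero_le_one)
      (Real.rpow_nonneg (by linarith) _)

lemma piece_neg1 {γ A B : ℝ} (hA : -1 < A) (hγ : γ < 0) (hB0 : 0 ≤ B) (hB1 : B < 1) :
    ∫ s in (-1:ℝ)..0, (1 - B * s) ^ γ * (1 - s ^ 2) ^ A ≤ max 1 (2 ^ A) / (A + 1) := by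
  have hint := (intIntF (γ := γ) hA hB0 hB1).mono_set
    (sub_uIcc (c := -1) (d := 0) (by norm_num) (by norm_num) (by norm_num))
  have hg : IntervalIntegrable (fun s : ℝ => max 1 ((2:ℝ) ^ A) * (1 + s) ^ A) volume (-1) 0 :=
    (intInt_one_add A hA _ _).const_mul _
  have hle := integral_mono_Ioo (by norm_num) hint hg ?_
  · calc ∫ s in (-1:ℝ)..0, (1 - B * s) ^ γ * (1 - s ^ 2) ^ A
        ≤ ∫ s in (-1:ℝ)..0, max 1 ((2:ℝ) ^ A) * (1 + s) ^ A := hle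
      _ = max 1 ((2:ℝ) ^ A) * ∫ s in (-1:ℝ)..0, (1 + s) ^ A := by
          rw [intervalIntegral.integral_const_mul]
      _ = max 1 ((2:ℝ) ^ A) * (((1 + (0:ℝ)) ^ (A+1) - (1 + (-1:ℝ)) ^ (A+1)) / (A+1)) := by
          rw [integral_one_add_rpow _ _ (Or.inl hA)]
      _ = max 1 ((2:ℝ) ^ A) / (A + 1) := by
          rw [show (1 + (0:ℝ)) = 1 by norm_num, show (1 + (-1:ℝ)) = 0 by norm_num,
            Real.one_rpow, Real.zero_rpow (by linarith : A + 1 ≠ 0)]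
          ring
  · intro s hs
    obtain ⟨h1, h2⟩ := hs
    rw [F_eq h1.le (by linarith)]
    have hb : (1:ℝ) ≤ 1 - B * s := by nlinarith [mul_nonneg hB0 (by linarith : (0:ℝ) ≤ -s)]
    have e1 : (1 - B*s)^γ ≤ 1 := Real.rpow_le_one_of_one_le_of_nonpos hb hγ.le
    have e2 : (1 - s)^A ≤ max 1 (2^A) := by
      simpa using rpow_le_max (x := 1-s) (a := 1) (b := 2) (g := A) one_pos
        (by linarith) (by linarith)
    calc (1 - B*s)^γ * ((1-s)^A * (1+s)^A) ≤ 1 * (max 1 (2^A) * (1+s)^A) :=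
        mul_le_mul e1 (mul_le_mul_of_nonneg_right e2 (Real.rpow_nonneg (by linarith) _))
          (mul_nonneg (Real.rpow_nonneg (by linarith) _) (Real.rpow_nonneg (by linarith) _))
          zero_le_one
      _ = max 1 (2^A) * (1+s)^A := one_mul _

lemma piece_mid_upper {γ A B : ℝ} (hA : -1 < A) (hγ : γ < 0) (hB0 : 0 ≤ B) (hB1 : B < 1) :
    ∫ s in (0:ℝ)..B, (1 - B * s) ^ γ * (1 - s ^ 2) ^ A
      ≤ (2:ℝ) ^ (-γ) * max 1 (2 ^ A) * ∫ s in (0:ℝ)..B, (1 - s) ^ (γ + A) := by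
  have hgcont : ContinuousOn (fun s : ℝ => (2:ℝ)^(-γ) * max 1 ((2:ℝ)^A) * (1 - s)^(γ+A))
      (Set.uIcc (0:ℝ) B) := by
    apply ContinuousOn.mul continuousOn_const
    apply ContinuousOn.rpow_const (continuousOn_const.sub continuousOn_id)
    intro s hs
    rw [uIcc_of_le hB0] at hs
    refine Or.inl ?_
    have : s < 1 := lt_of_le_of_lt hs.2 hB1
    intro hcon
    have : (1:ℝ) - s > 0 := by linarith
    linarith [show (1:ℝ) - s = 0 from hcon]
  have hgint := hgcont.intervalIntegrable (μ := volume)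
  have hint := (intIntF (γ := γ) hA hB0 hB1).mono_set (sub_uIcc (c := 0) (d := B) (by norm_num) hB1.le hB0)
  have h := integral_mono_Ioo hB0 hint hgint ?_
  · rwa [intervalIntegral.integral_const_mul] at h
  · intro s hs
    obtain ⟨h1, h2⟩ := hs
    have hs1 : s < 1 := h2.trans hB1
    have hpos : (0:ℝ) < 1 - s := by linarith
    rw [F_eq (by linarith) hs1.le]
    have e1 : (1 - B*s)^γ ≤ (1-s)^γ * 2^(-γ) := by
      have h3 : ((1 - s)/2) ^ γ = (1-s)^γ * 2^(-γ) := by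
        rw [Real.div_rpow hpos.le (by norm_num), Real.rpow_neg (by norm_num), div_eq_mul_inv]
      rw [← h3]
      exact Real.rpow_le_rpow_of_nonpos (by linarith) (half_le_base hB0 hB1.le (by linarith) hs1.le)
        hγ.le
    have e2 : (1 + s)^A ≤ max 1 (2^A) := by
      simpa using rpow_le_max (x := 1+s) (a := 1) (b := 2) (g := A) one_pos
        (by linarith) (by linarith)
    calc (1 - B*s)^γ * ((1-s)^A * (1+s)^A)
        ≤ ((1-s)^γ * 2^(-γ)) * ((1-s)^A * max 1 (2^A)) :=
          mul_le_mul e1 (mul_le_mul_of_nonneg_left e2 (Real.rpow_nonneg hpos.le _))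
            (mul_nonneg (Real.rpow_nonneg hpos.le _) (Real.rpow_nonneg (by linarith) _))
            (mul_nonneg (Real.rpow_nonneg hpos.le _) (Real.rpow_nonneg (by norm_num) _))
      _ = 2^(-γ) * max 1 (2^A) * ((1-s)^γ * (1-s)^A) := by ring
      _ = 2^(-γ) * max 1 (2^A) * (1-s)^(γ+A) := by rw [← Real.rpow_add hpos]

lemma piece_mid_lower {γ A B : ℝ} (hA : -1 < A) (hγ : γ < 0) (hB0 : 0 ≤ B) (hB1 : B < 1) :
    (2:ℝ) ^ γ * min 1 (2 ^ A) * ∫ s in (0:ℝ)..B, (1 - s) ^ (γ + A)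
      ≤ ∫ s in (0:ℝ)..B, (1 - B * s) ^ γ * (1 - s ^ 2) ^ A := by
  have hgcont : ContinuousOn (fun s : ℝ => (2:ℝ)^γ * min 1 ((2:ℝ)^A) * (1 - s)^(γ+A))
      (Set.uIcc (0:ℝ) B) := by
    apply ContinuousOn.mul continuousOn_const
    apply ContinuousOn.rpow_const (continuousOn_const.sub continuousOn_id)
    intro s hs
    rw [uIcc_of_le hB0] at hs
    refine Or.inl ?_
    have h1 : s < 1 := lt_of_le_of_lt hs.2 hB1
    intro hcon
    have h2 : (1:ℝ) - s > 0 := by linarith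
    linarith [show (1:ℝ) - s = 0 from hcon]
  have hgint := hgcont.intervalIntegrable (μ := volume)
  have hint := (intIntF (γ := γ) hA hB0 hB1).mono_set (sub_uIcc (c := 0) (d := B) (by norm_num) hB1.le hB0)
  have h := integral_mono_Ioo hB0 hgint hint ?_
  · rwa [intervalIntegral.integral_const_mul] at h
  · intro s hs
    obtain ⟨h1, h2⟩ := hs
    have hs1 : s < 1 := h2.trans hB1
    have hpos : (0:ℝ) < 1 - s := by linarith
    rw [F_eq (by linarith) hs1.le]
    have hb : 1 - B * s ≤ 2 * (1 - s) := by
      have := base_le_sum (B := B) hB1.le hs1.le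
      linarith [h2.le]
    have e1 : 2^γ * (1-s)^γ ≤ (1 - B*s)^γ := by
      have h3 : ((2:ℝ) * (1 - s)) ^ γ = 2^γ * (1-s)^γ :=
        Real.mul_rpow (by norm_num) hpos.le
      rw [← h3]
      exact Real.rpow_le_rpow_of_nonpos (base_pos hB0 hB1 hs1.le) hb hγ.le
    have e2 : min 1 (2^A) ≤ (1 + s)^A := by
      simpa using min_le_rpow (x := 1+s) (a := 1) (b := 2) (g := A) one_pos
        (by linarith) (by linarith)
    calc 2^γ * min 1 ((2:ℝ)^A) * (1-s)^(γ+A)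
        = (2^γ * (1-s)^γ) * ((1-s)^A * min 1 ((2:ℝ)^A)) := by
          rw [Real.rpow_add hpos]; ring
      _ ≤ (1 - B*s)^γ * ((1-s)^A * (1+s)^A) := by
          apply mul_le_mul e1 (mul_le_mul_of_nonneg_left e2 (Real.rpow_nonneg hpos.le _))
            (mul_nonneg (Real.rpow_nonneg hpos.le _)
              (le_min zero_le_one (Real.rpow_nonneg (by norm_num) _)))
            (Real.rpow_nonneg (base_pos hB0 hB1 hs1.le).le _)

lemma piece_end_upper {γ A B : ℝ} (hA : -1 < A) (hγ : γ < 0) (hB0 : 0 ≤ B) (hB1 : B < 1) :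
    ∫ s in B..(1:ℝ), (1 - B * s) ^ γ * (1 - s ^ 2) ^ A
      ≤ max 1 (2 ^ A) / (A + 1) * (1 - B) ^ (γ + A + 1) := by
  have hδ : (0:ℝ) < 1 - B := by linarith
  have hint := (intIntF (γ := γ) hA hB0 hB1).mono_set (sub_uIcc (c := B) (d := 1) (by linarith) le_rfl hB1.le)
  have hg : IntervalIntegrable
      (fun s : ℝ => (1 - B)^γ * max 1 ((2:ℝ)^A) * (1 - s) ^ A) volume B 1 :=
    (intInt_one_sub A hA _ _).const_mul _
  have hle := integral_mono_Ioo hB1.le hint hg ?_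
  · calc ∫ s in B..(1:ℝ), (1 - B * s) ^ γ * (1 - s ^ 2) ^ A
        ≤ ∫ s in B..(1:ℝ), (1 - B)^γ * max 1 ((2:ℝ)^A) * (1 - s) ^ A := hle
      _ = (1 - B)^γ * max 1 ((2:ℝ)^A) * ∫ s in B..(1:ℝ), (1 - s) ^ A := by
          rw [intervalIntegral.integral_const_mul]
      _ = (1 - B)^γ * max 1 ((2:ℝ)^A) * (((1-B)^(A+1) - ((1:ℝ)-1)^(A+1)) / (A+1)) := by
          rw [integral_one_sub_rpow _ _ (Or.inl hA)]
      _ = max 1 ((2:ℝ)^A) / (A+1) * ((1-B)^γ * (1-B)^(A+1)) := by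
          rw [show ((1:ℝ)-1) = 0 by norm_num, Real.zero_rpow (by linarith : A + 1 ≠ 0)]
          ring
      _ = max 1 (2 ^ A) / (A + 1) * (1 - B) ^ (γ + A + 1) := by
          rw [← Real.rpow_add hδ]
          congr 1
          congr 1
          ring
  · intro s hs
    obtain ⟨h1, h2⟩ := hs
    have hs0 : 0 ≤ s := hB0.trans h1.le
    rw [F_eq (by linarith) h2.le]
    have e1 : (1 - B*s)^γ ≤ (1-B)^γ :=
      Real.rpow_le_rpow_of_nonpos hδ (base_ge hB0 h2.le) hγ.le
    have e2 : (1 + s)^A ≤ max 1 (2^A) := by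
      simpa using rpow_le_max (x := 1+s) (a := 1) (b := 2) (g := A) one_pos
        (by linarith) (by linarith)
    calc (1 - B*s)^γ * ((1-s)^A * (1+s)^A)
        ≤ (1-B)^γ * ((1-s)^A * max 1 (2^A)) :=
          mul_le_mul e1 (mul_le_mul_of_nonneg_left e2 (Real.rpow_nonneg (by linarith) _))
            (mul_nonneg (Real.rpow_nonneg (by linarith) _) (Real.rpow_nonneg (by linarith) _))
            (Real.rpow_nonneg hδ.le _)
      _ = (1-B)^γ * max 1 ((2:ℝ)^A) * (1-s)^A := by ring

lemma piece_end_lower {γ A B : ℝ} (hA : -1 < A) (hγ : γ < 0) (hB0 : 0 ≤ B) (hB1 : B < 1) :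
    (2:ℝ)^γ * min 1 (2 ^ A) / (A + 1) * (1 - B) ^ (γ + A + 1)
      ≤ ∫ s in B..(1:ℝ), (1 - B * s) ^ γ * (1 - s ^ 2) ^ A := by
  have hδ : (0:ℝ) < 1 - B := by linarith
  have hint := (intIntF (γ := γ) hA hB0 hB1).mono_set (sub_uIcc (c := B) (d := 1) (by linarith) le_rfl hB1.le)
  have hg : IntervalIntegrable
      (fun s : ℝ => (2:ℝ)^γ * (1 - B)^γ * min 1 ((2:ℝ)^A) * (1 - s) ^ A) volume B 1 :=
    (intInt_one_sub A hA _ _).const_mul _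
  have hle := integral_mono_Ioo hB1.le hg hint ?_
  · calc (2:ℝ)^γ * min 1 (2 ^ A) / (A + 1) * (1 - B) ^ (γ + A + 1)
        = (2:ℝ)^γ * (1-B)^γ * min 1 ((2:ℝ)^A) * (((1-B)^(A+1) - ((1:ℝ)-1)^(A+1)) / (A+1)) := by
          rw [show ((1:ℝ)-1) = 0 by norm_num, Real.zero_rpow (by linarith : A + 1 ≠ 0),
            show γ + A + 1 = γ + (A+1) by ring, Real.rpow_add hδ]
          ring
      _ = ∫ s in B..(1:ℝ), (2:ℝ)^γ * (1-B)^γ * min 1 ((2:ℝ)^A) * (1 - s) ^ A := by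
          rw [intervalIntegral.integral_const_mul, integral_one_sub_rpow _ _ (Or.inl hA)]
      _ ≤ _ := hle
  · intro s hs
    obtain ⟨h1, h2⟩ := hs
    have hs0 : 0 ≤ s := hB0.trans h1.le
    rw [F_eq (by linarith) h2.le]
    have hb : 1 - B * s ≤ 2 * (1 - B) := by
      have := base_le_sum (B := B) hB1.le h2.le
      linarith [h1.le]
    have e1 : 2^γ * (1-B)^γ ≤ (1 - B*s)^γ := by
      have h3 : ((2:ℝ) * (1 - B)) ^ γ = 2^γ * (1-B)^γ := Real.mul_rpow (by norm_num) hδ.le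
      rw [← h3]
      exact Real.rpow_le_rpow_of_nonpos (base_pos hB0 hB1 h2.le) hb hγ.le
    have e2 : min 1 (2^A) ≤ (1 + s)^A := by
      simpa using min_le_rpow (x := 1+s) (a := 1) (b := 2) (g := A) one_pos
        (by linarith) (by linarith)
    calc 2^γ * (1-B)^γ * min 1 ((2:ℝ)^A) * (1-s)^A
        = (2^γ * (1-B)^γ) * ((1-s)^A * min 1 ((2:ℝ)^A)) := by ring
      _ ≤ (1 - B*s)^γ * ((1-s)^A * (1+s)^A) :=
          mul_le_mul e1 (mul_le_mul_of_nonneg_left e2 (Real.rpow_nonneg (by linarith) _))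
            (mul_nonneg (Real.rpow_nonneg (by linarith) _)
              (le_min zero_le_one (Real.rpow_nonneg (by norm_num) _)))
            (Real.rpow_nonneg (base_pos hB0 hB1 h2.le).le _)
lemma branch_neg {γ A : ℝ} (hA : -1 < A) (hT : γ + A + 1 < 0) :
    ∃ c C : ℝ, 0 < c ∧ 0 < C ∧ ∀ B : ℝ, 0 ≤ B → B < 1 →
      c * (1 - B) ^ (γ + A + 1) ≤ (∫ s in (-1:ℝ)..1, (1 - B * s) ^ γ * (1 - s ^ 2) ^ A) ∧
      (∫ s in (-1:ℝ)..1, (1 - B * s) ^ γ * (1 - s ^ 2) ^ A) ≤ C * (1 - B) ^ (γ + A + 1) := by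
  have hγ : γ < 0 := by linarith
  have hA1 : (0:ℝ) < A + 1 := by linarith
  have hTn : (0:ℝ) < -(γ + A + 1) := by linarith
  have hMx : (0:ℝ) < max 1 ((2:ℝ)^A) := lt_max_of_lt_left one_pos
  refine ⟨(2:ℝ)^γ * min 1 ((2:ℝ) ^ A) / (A + 1),
    max 1 ((2:ℝ)^A) / (A + 1) + (2:ℝ)^(-γ) * max 1 ((2:ℝ)^A) / (-(γ+A+1))
      + max 1 ((2:ℝ)^A) / (A + 1), ?_, ?_, ?_⟩
  · exact div_pos (mul_pos (Real.rpow_pos_of_pos two_pos γ)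
      (lt_min one_pos (Real.rpow_pos_of_pos two_pos A))) hA1
  · have h1 : 0 < max 1 ((2:ℝ)^A) / (A+1) := div_pos hMx hA1
    have h2 : 0 < (2:ℝ)^(-γ) * max 1 ((2:ℝ)^A) / (-(γ+A+1)) :=
      div_pos (mul_pos (Real.rpow_pos_of_pos two_pos _) hMx) hTn
    linarith
  intro B hB0 hB1
  have hδ : (0:ℝ) < 1 - B := by linarith
  have i1 := (intIntF (γ := γ) (A := A) hA hB0 hB1).mono_set
    (sub_uIcc (c := -1) (d := 0) (by norm_num) (by norm_num) (by norm_num))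
  have i2 := (intIntF (γ := γ) (A := A) hA hB0 hB1).mono_set
    (sub_uIcc (c := 0) (d := B) (by norm_num) hB1.le hB0)
  have i3 := (intIntF (γ := γ) (A := A) hA hB0 hB1).mono_set
    (sub_uIcc (c := B) (d := 1) (by linarith) le_rfl hB1.le)
  have esplit : (∫ s in (-1:ℝ)..1, (1 - B * s) ^ γ * (1 - s ^ 2) ^ A)
      = (∫ s in (-1:ℝ)..0, (1 - B * s) ^ γ * (1 - s ^ 2) ^ A)
        + (∫ s in (0:ℝ)..B, (1 - B * s) ^ γ * (1 - s ^ 2) ^ A)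
        + (∫ s in B..(1:ℝ), (1 - B * s) ^ γ * (1 - s ^ 2) ^ A) := by
    rw [intervalIntegral.integral_add_adjacent_intervals i1 i2,
      intervalIntegral.integral_add_adjacent_intervals (i1.trans i2) i3]
  constructor
  · exact le_trans (piece_end_lower hA hγ hB0 hB1)
      (integral_restrict_le hA hB0 hB1 (by linarith) hB1.le le_rfl)
  · have hone : (1:ℝ) ≤ (1-B)^(γ+A+1) :=
      Real.one_le_rpow_of_pos_of_le_one_of_nonpos hδ (by linarith) hT.le
    have p1 : (∫ s in (-1:ℝ)..0, (1 - B * s) ^ γ * (1 - s ^ 2) ^ A)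
        ≤ max 1 ((2:ℝ)^A) / (A+1) * (1-B)^(γ+A+1) :=
      (piece_neg1 hA hγ hB0 hB1).trans
        (le_mul_of_one_le_right (div_pos hMx hA1).le hone)
    have hne : γ + A + 1 ≠ 0 := by linarith
    have hmidval := integral_one_sub_rpow (p := γ+A) 0 B (Or.inr ⟨by linarith, by
      rw [show (1:ℝ) - 0 = 1 by norm_num, uIcc_of_le (by linarith : 1 - B ≤ 1)]
      simp only [Set.mem_Icc, not_and_or, not_le]
      left; linarith⟩)
    have hmidle : ∫ s in (0:ℝ)..B, (1 - s)^(γ+A) ≤ (1-B)^(γ+A+1) / (-(γ+A+1)) := by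
      rw [hmidval, show (1:ℝ) - 0 = 1 by norm_num, Real.one_rpow]
      have h1 : (1 - (1-B)^(γ+A+1))/(γ+A+1) = ((1-B)^(γ+A+1) - 1)/(-(γ+A+1)) := by
        rw [div_neg, ← neg_div, neg_sub]
      rw [h1]
      exact (div_le_div_iff_of_pos_right hTn).mpr (by linarith)
    have p2 : (∫ s in (0:ℝ)..B, (1 - B * s) ^ γ * (1 - s ^ 2) ^ A)
        ≤ (2:ℝ)^(-γ) * max 1 ((2:ℝ)^A) / (-(γ+A+1)) * (1-B)^(γ+A+1) := by
      refine (piece_mid_upper hA hγ hB0 hB1).trans ?_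
      rw [div_mul_eq_mul_div, mul_div_assoc]
      exact mul_le_mul_of_nonneg_left hmidle
        (mul_nonneg (Real.rpow_nonneg (by norm_num) _) hMx.le)
    have p3 := piece_end_upper hA hγ hB0 hB1
    rw [esplit]
    calc (∫ s in (-1:ℝ)..0, (1 - B * s) ^ γ * (1 - s ^ 2) ^ A)
        + (∫ s in (0:ℝ)..B, (1 - B * s) ^ γ * (1 - s ^ 2) ^ A)
        + (∫ s in B..(1:ℝ), (1 - B * s) ^ γ * (1 - s ^ 2) ^ A)
        ≤ max 1 ((2:ℝ)^A) / (A+1) * (1-B)^(γ+A+1)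
          + (2:ℝ)^(-γ) * max 1 ((2:ℝ)^A) / (-(γ+A+1)) * (1-B)^(γ+A+1)
          + max 1 ((2:ℝ)^A) / (A+1) * (1-B)^(γ+A+1) :=
          add_le_add (add_le_add p1 p2) p3
      _ = (max 1 ((2:ℝ)^A) / (A + 1) + (2:ℝ)^(-γ) * max 1 ((2:ℝ)^A) / (-(γ+A+1))
          + max 1 ((2:ℝ)^A) / (A + 1)) * (1 - B) ^ (γ + A + 1) := by ring
lemma branch_zero {γ A : ℝ} (hA : -1 < A) (hT : γ + A + 1 = 0) :
    ∃ c C : ℝ, 0 < c ∧ 0 < C ∧ ∀ B : ℝ, 0 ≤ B → B < 1 →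
      c * (1 + Real.log (1 / (1 - B)))
        ≤ (∫ s in (-1:ℝ)..1, (1 - B * s) ^ γ * (1 - s ^ 2) ^ A) ∧
      (∫ s in (-1:ℝ)..1, (1 - B * s) ^ γ * (1 - s ^ 2) ^ A)
        ≤ C * (1 + Real.log (1 / (1 - B))) := by
  have hγ : γ < 0 := by linarith
  have hA1 : (0:ℝ) < A + 1 := by linarith
  have hMx : (0:ℝ) < max 1 ((2:ℝ)^A) := lt_max_of_lt_left one_pos
  have hdp : (0:ℝ) < max 1 ((2:ℝ)^A) / (A+1) := div_pos hMx hA1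
  have hmpos : 0 < min 1 ((3/2:ℝ) ^ γ) * min ((3/4:ℝ) ^ A) 1 * (1/2) :=
    mul_pos (mul_pos (lt_min one_pos (Real.rpow_pos_of_pos (by norm_num) _))
      (lt_min (Real.rpow_pos_of_pos (by norm_num) _) one_pos)) (by norm_num)
  have hkpos : (0:ℝ) < (2:ℝ)^γ * min 1 ((2:ℝ)^A) := mul_pos (Real.rpow_pos_of_pos two_pos _)
    (lt_min one_pos (Real.rpow_pos_of_pos two_pos _))
  have hKpos : (0:ℝ) < (2:ℝ)^(-γ) * max 1 ((2:ℝ)^A) :=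
    mul_pos (Real.rpow_pos_of_pos two_pos _) hMx
  refine ⟨min (min 1 ((3/2:ℝ) ^ γ) * min ((3/4:ℝ) ^ A) 1 * (1/2)) ((2:ℝ)^γ * min 1 ((2:ℝ)^A)),
    max 1 ((2:ℝ)^A)/(A+1) + max 1 ((2:ℝ)^A)/(A+1) + (2:ℝ)^(-γ) * max 1 ((2:ℝ)^A),
    lt_min hmpos hkpos, by linarith, ?_⟩
  intro B hB0 hB1
  have hδ : (0:ℝ) < 1 - B := by linarith
  have hL0 : 0 ≤ Real.log (1 / (1 - B)) := Real.log_nonneg (by rw [le_div_iff₀ hδ]; linarith)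
  have hexp : γ + A = -1 := by linarith
  have hmidval : ∫ s in (0:ℝ)..B, (1 - s)^(γ+A) = Real.log (1 / (1 - B)) := by
    rw [hexp, integral_one_sub_inv (by
      rw [show (1:ℝ) - 0 = 1 by norm_num, uIcc_of_le (by linarith : 1 - B ≤ 1)]
      simp only [Set.mem_Icc, not_and_or, not_le]
      left; linarith)]
    norm_num
  have i1 := (intIntF (γ := γ) (A := A) hA hB0 hB1).mono_set
    (sub_uIcc (c := -1) (d := 0) (by norm_num) (by norm_num) (by norm_num))
  have i12 := (intIntF (γ := γ) (A := A) hA hB0 hB1).mono_set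
    (sub_uIcc (c := -1/2) (d := 0) (by norm_num) (by norm_num) (by norm_num))
  have i2 := (intIntF (γ := γ) (A := A) hA hB0 hB1).mono_set
    (sub_uIcc (c := 0) (d := B) (by norm_num) hB1.le hB0)
  have i3 := (intIntF (γ := γ) (A := A) hA hB0 hB1).mono_set
    (sub_uIcc (c := B) (d := 1) (by linarith) le_rfl hB1.le)
  constructor
  · -- lower bound
    have hsplit : (∫ s in (-1/2:ℝ)..B, (1 - B * s) ^ γ * (1 - s ^ 2) ^ A)
        = (∫ s in (-1/2:ℝ)..0, (1 - B * s) ^ γ * (1 - s ^ 2) ^ A)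
          + (∫ s in (0:ℝ)..B, (1 - B * s) ^ γ * (1 - s ^ 2) ^ A) :=
      (intervalIntegral.integral_add_adjacent_intervals i12 i2).symm
    have hrest : (∫ s in (-1/2:ℝ)..B, (1 - B * s) ^ γ * (1 - s ^ 2) ^ A)
        ≤ ∫ s in (-1:ℝ)..1, (1 - B * s) ^ γ * (1 - s ^ 2) ^ A :=
      integral_restrict_le hA hB0 hB1 (by norm_num) (by linarith) hB1.le
    have hp1 := lower_piece (γ := γ) (A := A) (B := B) hA hB0 hB1
    have hp2 : (2:ℝ)^γ * min 1 ((2:ℝ)^A) * Real.log (1 / (1 - B))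
        ≤ ∫ s in (0:ℝ)..B, (1 - B * s) ^ γ * (1 - s ^ 2) ^ A := by
      have := piece_mid_lower hA hγ hB0 hB1
      rwa [hmidval] at this
    have hmin1 : min (min 1 ((3/2:ℝ) ^ γ) * min ((3/4:ℝ) ^ A) 1 * (1/2))
        ((2:ℝ)^γ * min 1 ((2:ℝ)^A)) ≤ min 1 ((3/2:ℝ) ^ γ) * min ((3/4:ℝ) ^ A) 1 * (1/2) :=
      min_le_left _ _
    have hmin2 := mul_le_mul_of_nonneg_right
      (min_le_right (min 1 ((3/2:ℝ) ^ γ) * min ((3/4:ℝ) ^ A) 1 * (1/2))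
        ((2:ℝ)^γ * min 1 ((2:ℝ)^A))) hL0
    calc min (min 1 ((3/2:ℝ) ^ γ) * min ((3/4:ℝ) ^ A) 1 * (1/2)) ((2:ℝ)^γ * min 1 ((2:ℝ)^A))
          * (1 + Real.log (1 / (1 - B)))
        ≤ (min 1 ((3/2:ℝ) ^ γ) * min ((3/4:ℝ) ^ A) 1 * (1/2))
          + (2:ℝ)^γ * min 1 ((2:ℝ)^A) * Real.log (1 / (1 - B)) := by nlinarith
      _ ≤ (∫ s in (-1/2:ℝ)..0, (1 - B * s) ^ γ * (1 - s ^ 2) ^ A)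
          + (∫ s in (0:ℝ)..B, (1 - B * s) ^ γ * (1 - s ^ 2) ^ A) := add_le_add hp1 hp2
      _ = ∫ s in (-1/2:ℝ)..B, (1 - B * s) ^ γ * (1 - s ^ 2) ^ A := hsplit.symm
      _ ≤ _ := hrest
  · -- upper bound
    have esplit : (∫ s in (-1:ℝ)..1, (1 - B * s) ^ γ * (1 - s ^ 2) ^ A)
        = (∫ s in (-1:ℝ)..0, (1 - B * s) ^ γ * (1 - s ^ 2) ^ A)
          + (∫ s in (0:ℝ)..B, (1 - B * s) ^ γ * (1 - s ^ 2) ^ A)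
          + (∫ s in B..(1:ℝ), (1 - B * s) ^ γ * (1 - s ^ 2) ^ A) := by
      rw [intervalIntegral.integral_add_adjacent_intervals i1 i2,
        intervalIntegral.integral_add_adjacent_intervals (i1.trans i2) i3]
    have p1 := piece_neg1 hA hγ hB0 hB1
    have p2 : (∫ s in (0:ℝ)..B, (1 - B * s) ^ γ * (1 - s ^ 2) ^ A)
        ≤ (2:ℝ)^(-γ) * max 1 ((2:ℝ)^A) * Real.log (1 / (1 - B)) := by
      have := piece_mid_upper hA hγ hB0 hB1
      rwa [hmidval] at this
    have p3 : (∫ s in B..(1:ℝ), (1 - B * s) ^ γ * (1 - s ^ 2) ^ A)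
        ≤ max 1 ((2:ℝ)^A) / (A+1) := by
      have := piece_end_upper hA hγ hB0 hB1
      rwa [hT, Real.rpow_zero, mul_one] at this
    rw [esplit]
    nlinarith [mul_nonneg (mul_nonneg hdp.le (by norm_num : (0:ℝ) ≤ 2)) hL0]
lemma branch_pos {γ A : ℝ} (hA : -1 < A) (hT : 0 < γ + A + 1) :
    ∃ c C : ℝ, 0 < c ∧ 0 < C ∧ ∀ B : ℝ, 0 ≤ B → B < 1 →
      c ≤ (∫ s in (-1:ℝ)..1, (1 - B * s) ^ γ * (1 - s ^ 2) ^ A) ∧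
      (∫ s in (-1:ℝ)..1, (1 - B * s) ^ γ * (1 - s ^ 2) ^ A) ≤ C := by
  have hmpos : 0 < min 1 ((3/2:ℝ) ^ γ) * min ((3/4:ℝ) ^ A) 1 * (1/2) :=
    mul_pos (mul_pos (lt_min one_pos (Real.rpow_pos_of_pos (by norm_num) _))
      (lt_min (Real.rpow_pos_of_pos (by norm_num) _) one_pos)) (by norm_num)
  have lower : ∀ B : ℝ, 0 ≤ B → B < 1 →
      min 1 ((3/2:ℝ) ^ γ) * min ((3/4:ℝ) ^ A) 1 * (1/2)
        ≤ ∫ s in (-1:ℝ)..1, (1 - B * s) ^ γ * (1 - s ^ 2) ^ A := fun B hB0 hB1 =>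
    le_trans (lower_piece hA hB0 hB1)
      (integral_restrict_le hA hB0 hB1 (by norm_num) (by norm_num) (by norm_num))
  rcases le_or_gt 0 γ with hγ | hγ
  · -- γ ≥ 0
    have hJnn : 0 ≤ ∫ s in (-1:ℝ)..1, (1 - s) ^ A * (1 + s) ^ A :=
      intervalIntegral.integral_nonneg (by norm_num) fun u hu =>
        mul_nonneg (Real.rpow_nonneg (by linarith [hu.2]) _)
          (Real.rpow_nonneg (by linarith [hu.1]) _)
    refine ⟨min 1 ((3/2:ℝ) ^ γ) * min ((3/4:ℝ) ^ A) 1 * (1/2),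
      (2:ℝ)^γ * ((∫ s in (-1:ℝ)..1, (1 - s) ^ A * (1 + s) ^ A) + 1), hmpos,
      mul_pos (Real.rpow_pos_of_pos two_pos _) (by linarith), ?_⟩
    intro B hB0 hB1
    refine ⟨lower B hB0 hB1, ?_⟩
    have hcomp := integral_mono_Ioo (by norm_num : (-1:ℝ) ≤ 1) (intIntF (γ := γ) hA hB0 hB1)
      ((intInt_prod hA hA).const_mul ((2:ℝ)^γ)) ?_
    · rw [intervalIntegral.integral_const_mul] at hcomp
      refine hcomp.trans ?_
      exact mul_le_mul_of_nonneg_left (by linarith) (Real.rpow_nonneg (by norm_num) _)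
    · intro s hs
      obtain ⟨h1, h2⟩ := hs
      rw [F_eq h1.le h2.le]
      have e1 : (1 - B*s)^γ ≤ 2^γ :=
        Real.rpow_le_rpow (base_pos hB0 hB1 h2.le).le (base_le_two hB0 hB1.le h1.le) hγ
      exact mul_le_mul e1 le_rfl
        (mul_nonneg (Real.rpow_nonneg (by linarith) _) (Real.rpow_nonneg (by linarith) _))
        (Real.rpow_nonneg (by norm_num) _)
  · -- γ < 0
    have hp : (-1:ℝ) < γ + A := by linarith
    have hJnn : 0 ≤ ∫ s in (-1:ℝ)..1, (1 - s) ^ (γ + A) * (1 + s) ^ A :=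
      intervalIntegral.integral_nonneg (by norm_num) fun u hu =>
        mul_nonneg (Real.rpow_nonneg (by linarith [hu.2]) _)
          (Real.rpow_nonneg (by linarith [hu.1]) _)
    refine ⟨min 1 ((3/2:ℝ) ^ γ) * min ((3/4:ℝ) ^ A) 1 * (1/2),
      (2:ℝ)^(-γ) * ((∫ s in (-1:ℝ)..1, (1 - s) ^ (γ + A) * (1 + s) ^ A) + 1), hmpos,
      mul_pos (Real.rpow_pos_of_pos two_pos _) (by linarith), ?_⟩
    intro B hB0 hB1
    refine ⟨lower B hB0 hB1, ?_⟩
    have hcomp := integral_mono_Ioo (by norm_num : (-1:ℝ) ≤ 1) (intIntF (γ := γ) hA hB0 hB1)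
      ((intInt_prod hp hA).const_mul ((2:ℝ)^(-γ))) ?_
    · rw [intervalIntegral.integral_const_mul] at hcomp
      refine hcomp.trans ?_
      exact mul_le_mul_of_nonneg_left (by linarith) (Real.rpow_nonneg (by norm_num) _)
    · intro s hs
      obtain ⟨h1, h2⟩ := hs
      have hpos : (0:ℝ) < 1 - s := by linarith
      rw [F_eq h1.le h2.le]
      have e1 : (1 - B*s)^γ ≤ (1-s)^γ * 2^(-γ) := by
        have h3 : ((1 - s)/2) ^ γ = (1-s)^γ * 2^(-γ) := by
          rw [Real.div_rpow hpos.le (by norm_num), Real.rpow_neg (by norm_num), div_eq_mul_inv]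
        rw [← h3]
        exact Real.rpow_le_rpow_of_nonpos (by linarith)
          (half_le_base hB0 hB1.le (by linarith) h2.le) hγ.le
      calc (1 - B*s)^γ * ((1-s)^A * (1+s)^A)
          ≤ ((1-s)^γ * 2^(-γ)) * ((1-s)^A * (1+s)^A) :=
            mul_le_mul_of_nonneg_right e1
              (mul_nonneg (Real.rpow_nonneg hpos.le _) (Real.rpow_nonneg (by linarith) _))
        _ = 2^(-γ) * (((1-s)^γ * (1-s)^A) * (1+s)^A) := by ring
        _ = 2^(-γ) * ((1-s)^(γ+A) * (1+s)^A) := by rw [← Real.rpow_add hpos]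
end Stmt0Aux

theorem stmt_0 (α γ : ℝ) (hα : α > -1/2) :
    ∃ c C : ℝ, 0 < c ∧ 0 < C ∧ ∀ B : ℝ, 0 ≤ B → B < 1 →
      (α + γ + 1/2 < 0 →
        c * (1 - B) ^ (α + γ + 1/2) ≤
          (∫ s in (-1:ℝ)..1, (1 - B * s) ^ γ * (1 - s ^ 2) ^ (α - 1/2)) ∧
        (∫ s in (-1:ℝ)..1, (1 - B * s) ^ γ * (1 - s ^ 2) ^ (α - 1/2)) ≤
          C * (1 - B) ^ (α + γ + 1/2)) ∧
      (α + γ + 1/2 = 0 →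
        c * (1 + Real.log (1 / (1 - B))) ≤
          (∫ s in (-1:ℝ)..1, (1 - B * s) ^ γ * (1 - s ^ 2) ^ (α - 1/2)) ∧
        (∫ s in (-1:ℝ)..1, (1 - B * s) ^ γ * (1 - s ^ 2) ^ (α - 1/2)) ≤
          C * (1 + Real.log (1 / (1 - B)))) ∧
      (α + γ + 1/2 > 0 →
        c ≤ (∫ s in (-1:ℝ)..1, (1 - B * s) ^ γ * (1 - s ^ 2) ^ (α - 1/2)) ∧
        (∫ s in (-1:ℝ)..1, (1 - B * s) ^ γ * (1 - s ^ 2) ^ (α - 1/2)) ≤ C) := by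
  have hA : (-1:ℝ) < α - 1/2 := by linarith
  have he : α + γ + 1/2 = γ + (α - 1/2) + 1 := by ring
  rcases lt_trichotomy (α + γ + 1/2) 0 with hT | hT | hT
  · obtain ⟨c, C, hc, hC, h⟩ := Stmt0Aux.branch_neg (γ := γ) (A := α - 1/2) hA (by linarith)
    refine ⟨c, C, hc, hC, fun B hB0 hB1 => ⟨fun _ => by rw [he]; exact h B hB0 hB1,
      fun h0 => absurd h0 (ne_of_lt hT), fun h0 => absurd h0 (not_lt.mpr hT.le)⟩⟩
  · obtain ⟨c, C, hc, hC, h⟩ := Stmt0Aux.branch_zero (γ := γ) (A := α - 1/2) hA (by linarith)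
    refine ⟨c, C, hc, hC, fun B hB0 hB1 => ⟨fun h0 => absurd h0 (not_lt.mpr hT.ge),
      fun _ => h B hB0 hB1, fun h0 => absurd h0 (not_lt.mpr hT.le)⟩⟩
  · obtain ⟨c, C, hc, hC, h⟩ := Stmt0Aux.branch_pos (γ := γ) (A := α - 1/2) hA (by linarith)
    refine ⟨c, C, hc, hC, fun B hB0 hB1 => ⟨fun h0 => absurd h0 (not_lt.mpr hT.le),
      fun h0 => absurd h0 (ne_of_gt hT), fun _ => h B hB0 hB1⟩⟩
end

section
/- Let α ∈ ℝ, β > 0 and γ > -1 be fixed, and for 1 < D < 2 define J(D) = ∫_0^1 (D - s)^{α - 1/2} (1 - s)^{β - 1} s^γ ds. Then uniformly in 1 < D < 2: if α + β < 1/2 then J(D) is comparable (with constants depending only on α, β, γ) to (D-1)^{α+β-1/2}; if α + β = 1/2 then J(D) is comparable to 1 + log(1/(D-1)); and if α + β > 1/2 then J(D) is comparable to 1. -/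
open MeasureTheory intervalIntegral Real Set

section helpers
-- min/max rpow bounds
lemma rpow_ge_min {a b x r : ℝ} (ha : 0 < a) (hax : a ≤ x) (hxb : x ≤ b) :
    min (a ^ r) (b ^ r) ≤ x ^ r := by
  rcases le_or_gt 0 r with hr | hr
  · exact le_trans (min_le_left _ _) (Real.rpow_le_rpow ha.le hax hr)
  · exact le_trans (min_le_right _ _) (Real.rpow_le_rpow_of_nonpos (ha.trans_le hax) hxb hr.le)

lemma rpow_le_max {a b x r : ℝ} (ha : 0 < a) (hax : a ≤ x) (hxb : x ≤ b) :
    x ^ r ≤ max (a ^ r) (b ^ r) := by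
  rcases le_or_gt 0 r with hr | hr
  · exact le_trans (Real.rpow_le_rpow (ha.trans_le hax).le hxb hr) (le_max_right _ _)
  · exact le_trans (Real.rpow_le_rpow_of_nonpos ha hax hr.le) (le_max_left _ _)

lemma min_rpow_pos {a b : ℝ} (ha : 0 < a) (hb : 0 < b) (r : ℝ) : 0 < min (a ^ r) (b ^ r) :=
  lt_min (Real.rpow_pos_of_pos ha r) (Real.rpow_pos_of_pos hb r)

-- integral mono with pointwise bound only on the open interval
lemma integral_mono_Ioo {f g : ℝ → ℝ} {a b : ℝ} (hab : a ≤ b)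
    (hf : IntervalIntegrable f volume a b) (hg : IntervalIntegrable g volume a b)
    (h : ∀ x ∈ Set.Ioo a b, f x ≤ g x) :
    (∫ x in a..b, f x) ≤ ∫ x in a..b, g x := by
  apply intervalIntegral.integral_mono_ae_restrict hab hf hg
  have h2 : ∀ᵐ x ∂(volume.restrict (Icc a b)), x ≠ a ∧ x ≠ b := by
    refine MeasureTheory.ae_restrict_of_ae ?_
    have : (volume ({a, b} : Set ℝ)) = 0 :=
      Set.Finite.measure_zero (Set.toFinite _) _
    filter_upwards [MeasureTheory.measure_eq_zero_iff_ae_notMem.mp this] with x hx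
    simp only [Set.mem_insert_iff, Set.mem_singleton_iff] at hx
    exact ⟨fun h => hx (Or.inl h), fun h => hx (Or.inr h)⟩
  filter_upwards [h2, MeasureTheory.ae_restrict_mem measurableSet_Icc] with x hx hmem
  exact h x ⟨lt_of_le_of_ne hmem.1 (Ne.symm hx.1), lt_of_le_of_ne hmem.2 hx.2⟩

-- Beta-type integrability
lemma betaIntegrable {p q : ℝ} (hp : -1 < p) (hq : -1 < q) :
    IntervalIntegrable (fun s => (1 - s) ^ p * s ^ q) volume 0 1 := by
  apply IntervalIntegrable.trans (b := 1/2)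
  · apply IntervalIntegrable.continuousOn_mul (intervalIntegrable_rpow' hq)
    apply ContinuousOn.rpow_const (by fun_prop)
    intro x hx
    rw [Set.uIcc_of_le (by norm_num)] at hx
    left; intro h; have := hx.2; norm_num at h ⊢; linarith [hx.2, h]
  · have base : IntervalIntegrable (fun s : ℝ => (1 - s) ^ p) volume (1/2) 1 := by
      have := (intervalIntegrable_rpow' (r := p) (a := 1/2) (b := 0) hp).comp_sub_left 1
      norm_num at this; exact this
    apply IntervalIntegrable.mul_continuousOn base
    apply ContinuousOn.rpow_const (by fun_prop)
    intro x hx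
    rw [Set.uIcc_of_le (by norm_num)] at hx
    left; intro h; rw [h] at hx; norm_num at hx
end helpers

section core
variable {α β γ : ℝ}

lemma f_integrable (hβ : 0 < β) (hγ : -1 < γ) {D : ℝ} (hD : 1 < D) :
    IntervalIntegrable (fun s => (D - s) ^ (α - 1/2) * (1 - s) ^ (β - 1) * s ^ γ) volume 0 1 := by
  have hcont : ContinuousOn (fun s : ℝ => (D - s) ^ (α - 1/2)) (Set.uIcc 0 1) := by
    apply ContinuousOn.rpow_const (by fun_prop)
    intro x hx
    rw [Set.uIcc_of_le (by norm_num)] at hx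
    exact Or.inl (by have := hx.2; intro h; nlinarith)
  have h := (betaIntegrable (p := β - 1) (q := γ) (by linarith) hγ).continuousOn_mul hcont
  have heq : (fun s : ℝ => (D - s) ^ (α - 1/2) * ((1 - s) ^ (β - 1) * s ^ γ)) =
      fun s => (D - s) ^ (α - 1/2) * (1 - s) ^ (β - 1) * s ^ γ := by
    funext s; ring
  rwa [heq] at h

lemma f_nonneg {D : ℝ} (hD : 1 ≤ D) :
    ∀ s ∈ Set.Ioc (0:ℝ) 1, 0 ≤ (D - s) ^ (α - 1/2) * (1 - s) ^ (β - 1) * s ^ γ := by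
  intro s hs
  have h1 : (0:ℝ) ≤ D - s := by have := hs.2; linarith
  have h2 : (0:ℝ) ≤ 1 - s := by have := hs.2; linarith
  have h3 : (0:ℝ) ≤ s := hs.1.le
  positivity

lemma f_restrict (hβ : 0 < β) (hγ : -1 < γ) {D a b : ℝ} (hD : 1 < D)
    (h0 : 0 ≤ a) (hab : a ≤ b) (hb : b ≤ 1) :
    (∫ s in a..b, (D - s) ^ (α - 1/2) * (1 - s) ^ (β - 1) * s ^ γ) ≤
      ∫ s in (0:ℝ)..1, (D - s) ^ (α - 1/2) * (1 - s) ^ (β - 1) * s ^ γ := by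
  apply intervalIntegral.integral_mono_interval h0 hab hb
  · filter_upwards [MeasureTheory.ae_restrict_mem measurableSet_Ioc] with x hx
    exact f_nonneg hD.le x hx
  · exact f_integrable hβ hγ hD

-- lower bound of f on a subinterval by a product of min-bounds
lemma f_ptwise_lb {D s dlo dhi slo shi : ℝ}
    (hd : 0 < dlo) (h1 : dlo ≤ D - s) (h2 : D - s ≤ dhi)
    (hs : 0 < slo) (h3 : slo ≤ s) (h4 : s ≤ shi)
    (h5 : (1 - shi) ≤ 1 - s) (h6 : 1 - s ≤ 1 - slo)
    (hos : 0 < 1 - shi) :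
    (min (dlo ^ (α - 1/2)) (dhi ^ (α - 1/2))) *
      (min ((1 - shi) ^ (β - 1)) ((1 - slo) ^ (β - 1))) *
      (min (slo ^ γ) (shi ^ γ)) ≤
    (D - s) ^ (α - 1/2) * (1 - s) ^ (β - 1) * s ^ γ := by
  have hA := rpow_ge_min (r := α - 1/2) hd h1 h2
  have hB := rpow_ge_min (r := β - 1) hos h5 h6
  have hC := rpow_ge_min (r := γ) hs h3 h4
  have pA : 0 ≤ min (dlo ^ (α - 1/2)) (dhi ^ (α - 1/2)) :=
    (min_rpow_pos hd (hd.trans_le (h1.trans h2)) _).le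
  have pB : 0 ≤ min ((1 - shi) ^ (β - 1)) ((1 - slo) ^ (β - 1)) :=
    (min_rpow_pos hos (hos.trans_le (h5.trans h6)) _).le
  have pC : 0 ≤ min (slo ^ γ) (shi ^ γ) := (min_rpow_pos hs (hs.trans_le (h3.trans h4)) _).le
  have hxA : (0:ℝ) ≤ (D - s) ^ (α - 1/2) := Real.rpow_nonneg (by linarith) _
  have hxB : (0:ℝ) ≤ (1 - s) ^ (β - 1) := Real.rpow_nonneg (by linarith) _
  exact mul_le_mul (mul_le_mul hA hB pB hxA) hC pC (by positivity)

end core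

section core2
variable {α β γ : ℝ}

lemma f_integrable_sub (hβ : 0 < β) (hγ : -1 < γ) {D a b : ℝ} (hD : 1 < D)
    (h0 : 0 ≤ a) (ha : a ≤ 1) (h0b : 0 ≤ b) (hb : b ≤ 1) :
    IntervalIntegrable (fun s => (D - s) ^ (α - 1/2) * (1 - s) ^ (β - 1) * s ^ γ) volume a b :=
  (f_integrable hβ hγ hD).mono_set <| Set.uIcc_subset_uIcc
    (by rw [Set.uIcc_of_le (zero_le_one)]; exact ⟨h0, ha⟩)
    (by rw [Set.uIcc_of_le (zero_le_one)]; exact ⟨h0b, hb⟩)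

lemma lower_univ (hβ : 0 < β) (hγ : -1 < γ) {D : ℝ} (hD : 1 < D) (hD2 : D < 2) :
    (min ((1/2:ℝ) ^ (α - 1/2)) (2 ^ (α - 1/2)) * min ((1/2:ℝ) ^ (β - 1)) ((3/4:ℝ) ^ (β - 1)) *
        min ((1/4:ℝ) ^ γ) ((1/2:ℝ) ^ γ)) * (1/4) ≤
      ∫ s in (0:ℝ)..1, (D - s) ^ (α - 1/2) * (1 - s) ^ (β - 1) * s ^ γ := by
  set c1 := min ((1/2:ℝ) ^ (α - 1/2)) (2 ^ (α - 1/2)) * min ((1/2:ℝ) ^ (β - 1)) ((3/4:ℝ) ^ (β - 1)) *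
      min ((1/4:ℝ) ^ γ) ((1/2:ℝ) ^ γ) with hc1
  calc c1 * (1/4) = ∫ _ in (1/4:ℝ)..(1/2), c1 := by
        rw [intervalIntegral.integral_const]; norm_num; ring
    _ ≤ ∫ s in (1/4:ℝ)..(1/2), (D - s) ^ (α - 1/2) * (1 - s) ^ (β - 1) * s ^ γ := by
        apply integral_mono_Ioo (by norm_num) intervalIntegrable_const
          (f_integrable_sub hβ hγ hD (by norm_num) (by norm_num) (by norm_num) (by norm_num))
        intro x hx
        obtain ⟨hx1, hx2⟩ := hx
        have := f_ptwise_lb (α := α) (β := β) (γ := γ) (D := D) (s := x)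
          (dlo := 1/2) (dhi := 2) (slo := 1/4) (shi := 1/2)
          (by norm_num) (by linarith) (by linarith) (by norm_num) (by linarith) (by linarith)
          (by linarith) (by linarith) (by norm_num)
        rw [hc1]; norm_num at this ⊢; convert this using 3 <;> norm_num
    _ ≤ _ := f_restrict hβ hγ hD (by norm_num) (by norm_num) (by norm_num)

lemma c1_pos (α β γ : ℝ) : 0 < min ((1/2:ℝ) ^ (α - 1/2)) (2 ^ (α - 1/2)) *
    min ((1/2:ℝ) ^ (β - 1)) ((3/4:ℝ) ^ (β - 1)) * min ((1/4:ℝ) ^ γ) ((1/2:ℝ) ^ γ) := by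
  have h1 := min_rpow_pos (a := 1/2) (b := 2) (by norm_num) (by norm_num) (α - 1/2)
  have h2 := min_rpow_pos (a := 1/2) (b := 3/4) (by norm_num) (by norm_num) (β - 1)
  have h3 := min_rpow_pos (a := 1/4) (b := 1/2) (by norm_num) (by norm_num) γ
  positivity
end core2

section casegt
variable {α β γ : ℝ}

lemma upper_gt (hβ : 0 < β) (hγ : -1 < γ) (h : 1/2 < α + β) :
    ∃ C : ℝ, 0 < C ∧ ∀ D : ℝ, 1 < D → D < 2 →
      (∫ s in (0:ℝ)..1, (D - s) ^ (α - 1/2) * (1 - s) ^ (β - 1) * s ^ γ) ≤ C := by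
  rcases le_or_gt 0 (α - 1/2) with ha | ha
  · set B := ∫ s in (0:ℝ)..1, (1 - s) ^ (β - 1) * s ^ γ with hB
    have hBnn : 0 ≤ B := by
      apply intervalIntegral.integral_nonneg (by norm_num)
      intro x hx
      have h1 : (0:ℝ) ≤ 1 - x := by have := hx.2; linarith
      have h2 : (0:ℝ) ≤ x := hx.1
      positivity
    refine ⟨2 ^ (α - 1/2) * B + 1, by positivity, fun D hD hD2 => ?_⟩
    have step : (∫ s in (0:ℝ)..1, (D - s) ^ (α - 1/2) * (1 - s) ^ (β - 1) * s ^ γ) ≤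
        ∫ s in (0:ℝ)..1, 2 ^ (α - 1/2) * ((1 - s) ^ (β - 1) * s ^ γ) := by
      apply integral_mono_Ioo (by norm_num) (f_integrable hβ hγ hD)
        ((betaIntegrable (by linarith) hγ).const_mul _)
      intro x hx
      have h1 : (0:ℝ) < 1 - x := by have := hx.2; linarith
      have h2 : (0:ℝ) < x := hx.1
      have hle : (D - x) ^ (α - 1/2) ≤ 2 ^ (α - 1/2) :=
        Real.rpow_le_rpow (by linarith) (by linarith) ha
      rw [mul_assoc]
      exact mul_le_mul_of_nonneg_right hle (by positivity)
    rw [intervalIntegral.integral_const_mul] at step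
    linarith
  · set B := ∫ s in (0:ℝ)..1, (1 - s) ^ (α - 1/2 + (β - 1)) * s ^ γ with hB
    have hBnn : 0 ≤ B := by
      apply intervalIntegral.integral_nonneg (by norm_num)
      intro x hx
      have h1 : (0:ℝ) ≤ 1 - x := by have := hx.2; linarith
      have h2 : (0:ℝ) ≤ x := hx.1
      positivity
    refine ⟨B + 1, by positivity, fun D hD hD2 => ?_⟩
    have step : (∫ s in (0:ℝ)..1, (D - s) ^ (α - 1/2) * (1 - s) ^ (β - 1) * s ^ γ) ≤
        ∫ s in (0:ℝ)..1, (1 - s) ^ (α - 1/2 + (β - 1)) * s ^ γ := by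
      apply integral_mono_Ioo (by norm_num) (f_integrable hβ hγ hD)
        (betaIntegrable (by linarith) hγ)
      intro x hx
      have h1 : (0:ℝ) < 1 - x := by have := hx.2; linarith
      have h2 : (0:ℝ) < x := hx.1
      have hle : (D - x) ^ (α - 1/2) ≤ (1 - x) ^ (α - 1/2) :=
        Real.rpow_le_rpow_of_nonpos h1 (by linarith) ha.le
      rw [Real.rpow_add h1]
      calc (D - x) ^ (α - 1/2) * (1 - x) ^ (β - 1) * x ^ γ
          ≤ (1 - x) ^ (α - 1/2) * (1 - x) ^ (β - 1) * x ^ γ := by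
            apply mul_le_mul_of_nonneg_right _ (Real.rpow_nonneg h2.le _)
            exact mul_le_mul_of_nonneg_right hle (Real.rpow_nonneg h1.le _)
        _ = (1 - x) ^ (α - 1/2) * (1 - x) ^ (β - 1) * x ^ γ := rfl
    linarith
end casegt

section caselt
variable {α β γ : ℝ}

set_option maxHeartbeats 2000000 in
lemma upper_lt (hβ : 0 < β) (hγ : -1 < γ) (h : α + β < 1/2) :
    ∃ C : ℝ, 0 < C ∧ ∀ D : ℝ, 1 < D → D < 2 →
      (∫ s in (0:ℝ)..1, (D - s) ^ (α - 1/2) * (1 - s) ^ (β - 1) * s ^ γ) ≤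
        C * (D - 1) ^ (α + β - 1/2) := by
  have ha : α - 1/2 < 0 := by linarith
  set e := α + β - 1/2 with he'
  have he : e < 0 := by rw [he']; linarith
  set Mγ := max ((1/2:ℝ) ^ γ) ((1:ℝ) ^ γ) with hMγ
  have hMγ0 : 0 < Mγ := (Real.rpow_pos_of_pos (by norm_num) γ).trans_le (le_max_left _ _)
  set K1' := (1/2:ℝ) ^ (α - 1/2) * max ((1/2:ℝ) ^ (β - 1)) ((1:ℝ) ^ (β - 1)) with hK1'
  have hK1'0 : 0 < K1' := by
    have := Real.rpow_pos_of_pos (show (0:ℝ) < 1/2 by norm_num) (α - 1/2)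
    have h2 : (0:ℝ) < max ((1/2:ℝ) ^ (β - 1)) ((1:ℝ) ^ (β - 1)) :=
      (Real.rpow_pos_of_pos (by norm_num) (β - 1)).trans_le (le_max_left _ _)
    positivity
  set K1 := K1' * ((1/2:ℝ) ^ (γ + 1) / (γ + 1)) with hK1
  have hK10 : 0 < K1 := by
    have h1 : (0:ℝ) < (1/2:ℝ) ^ (γ + 1) := Real.rpow_pos_of_pos (by norm_num) _
    have h2 : (0:ℝ) < γ + 1 := by linarith
    positivity
  set C2 := Mγ * ((1/2:ℝ) ^ e / (-e)) with hC2
  have hC20 : 0 < C2 := by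
    have h1 : (0:ℝ) < (1/2:ℝ) ^ e := Real.rpow_pos_of_pos (by norm_num) _
    have h2 : (0:ℝ) < -e := by linarith
    positivity
  refine ⟨K1 + C2 + Mγ / β, by positivity, fun D hD hD2 => ?_⟩
  have hd : 0 < D - 1 := by linarith
  have hd1 : D - 1 < 1 := by linarith
  set d := D - 1 with hdd
  set d' := min d (1/2) with hd''
  have hd'0 : 0 < d' := lt_min hd (by norm_num)
  have hd'h : d' ≤ 1/2 := min_le_right _ _
  have hd'd : d' ≤ d := min_le_left _ _
  have hdd' : d / 2 ≤ d' := le_min (by linarith) (by linarith)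
  have hde : (1:ℝ) ≤ d ^ e :=
    Real.one_le_rpow_of_pos_of_le_one_of_nonpos hd hd1.le he.le
  -- integrability of the three pieces
  have I1 := f_integrable_sub (α := α) (a := 0) (b := 1/2) hβ hγ hD (le_refl 0) zero_le_one
    (by norm_num) (by norm_num)
  have I2 := f_integrable_sub (α := α) (a := 1/2) (b := 1 - d') hβ hγ hD (by norm_num)
    (by norm_num) (by linarith) (by linarith)
  have I3 := f_integrable_sub (α := α) (a := 1 - d') (b := 1) hβ hγ hD (by linarith) (by linarith)
    zero_le_one le_rfl
  -- splitting
  have hsplit : (∫ s in (0:ℝ)..1, (D - s) ^ (α - 1/2) * (1 - s) ^ (β - 1) * s ^ γ) =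
      (∫ s in (0:ℝ)..(1/2), (D - s) ^ (α - 1/2) * (1 - s) ^ (β - 1) * s ^ γ) +
      (∫ s in (1/2:ℝ)..(1 - d'), (D - s) ^ (α - 1/2) * (1 - s) ^ (β - 1) * s ^ γ) +
      (∫ s in (1 - d':ℝ)..1, (D - s) ^ (α - 1/2) * (1 - s) ^ (β - 1) * s ^ γ) := by
    rw [intervalIntegral.integral_add_adjacent_intervals I1 I2,
      intervalIntegral.integral_add_adjacent_intervals
        (f_integrable_sub (α := α) (a := 0) (b := 1 - d') hβ hγ hD le_rfl zero_le_one (by linarith)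
          (by linarith)) I3]
  -- piece 1
  have hP1 : (∫ s in (0:ℝ)..(1/2), (D - s) ^ (α - 1/2) * (1 - s) ^ (β - 1) * s ^ γ) ≤ K1 := by
    have step : (∫ s in (0:ℝ)..(1/2), (D - s) ^ (α - 1/2) * (1 - s) ^ (β - 1) * s ^ γ) ≤
        ∫ s in (0:ℝ)..(1/2), K1' * s ^ γ := by
      apply integral_mono_Ioo (by norm_num) I1 ((intervalIntegrable_rpow' hγ).const_mul _)
      intro x hx
      obtain ⟨hx1, hx2⟩ := hx
      have hA : (D - x) ^ (α - 1/2) ≤ (1/2:ℝ) ^ (α - 1/2) :=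
        Real.rpow_le_rpow_of_nonpos (by norm_num) (by linarith) ha.le
      have hB : (1 - x) ^ (β - 1) ≤ max ((1/2:ℝ) ^ (β - 1)) ((1:ℝ) ^ (β - 1)) :=
        rpow_le_max (by norm_num) (by linarith) (by linarith)
      have hBnn : (0:ℝ) ≤ (1 - x) ^ (β - 1) := Real.rpow_nonneg (by linarith) _
      have hCnn : (0:ℝ) ≤ x ^ γ := Real.rpow_nonneg hx1.le _
      rw [hK1']
      exact mul_le_mul_of_nonneg_right
        (mul_le_mul hA hB hBnn (Real.rpow_nonneg (show (0:ℝ) ≤ 1/2 by norm_num) (α - 1/2))) hCnn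
    rw [intervalIntegral.integral_const_mul, integral_rpow (Or.inl hγ),
      Real.zero_rpow (show γ + 1 ≠ 0 by intro hh; linarith)] at step
    rw [hK1]
    calc _ ≤ K1' * (((1/2:ℝ) ^ (γ + 1) - 0) / (γ + 1)) := step
      _ = K1' * ((1/2:ℝ) ^ (γ + 1) / (γ + 1)) := by ring
  -- piece 2
  have hP2 : (∫ s in (1/2:ℝ)..(1 - d'), (D - s) ^ (α - 1/2) * (1 - s) ^ (β - 1) * s ^ γ) ≤
      C2 * d ^ e := by
    have step : (∫ s in (1/2:ℝ)..(1 - d'), (D - s) ^ (α - 1/2) * (1 - s) ^ (β - 1) * s ^ γ) ≤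
        ∫ s in (1/2:ℝ)..(1 - d'), Mγ * (1 - s) ^ (e - 1) := by
      apply integral_mono_Ioo (by linarith) I2
      · apply ContinuousOn.intervalIntegrable
        apply ContinuousOn.mul continuousOn_const
        apply ContinuousOn.rpow_const (by fun_prop)
        intro x hx
        rw [Set.uIcc_of_le (by linarith)] at hx
        exact Or.inl (by intro hh; have := hx.2; nlinarith)
      intro x hx
      obtain ⟨hx1, hx2⟩ := hx
      have h1x : 0 < 1 - x := by linarith
      have hA : (D - x) ^ (α - 1/2) ≤ (1 - x) ^ (α - 1/2) :=
        Real.rpow_le_rpow_of_nonpos h1x (by linarith) ha.le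
      have hC : x ^ γ ≤ Mγ := rpow_le_max (by norm_num) (by linarith) (by linarith)
      have key : (1 - x) ^ (α - 1/2) * (1 - x) ^ (β - 1) = (1 - x) ^ (e - 1) := by
        rw [← Real.rpow_add h1x]; congr 1; rw [he']; ring
      calc (D - x) ^ (α - 1/2) * (1 - x) ^ (β - 1) * x ^ γ
          ≤ (1 - x) ^ (α - 1/2) * (1 - x) ^ (β - 1) * x ^ γ := by
            apply mul_le_mul_of_nonneg_right _ (Real.rpow_nonneg (by linarith) _)
            exact mul_le_mul_of_nonneg_right hA (Real.rpow_nonneg h1x.le _)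
        _ = (1 - x) ^ (e - 1) * x ^ γ := by rw [key]
        _ ≤ (1 - x) ^ (e - 1) * Mγ := by
            apply mul_le_mul_of_nonneg_left hC (Real.rpow_nonneg h1x.le _)
        _ = Mγ * (1 - x) ^ (e - 1) := by ring
    have hval : (∫ s in (1/2:ℝ)..(1 - d'), Mγ * (1 - s) ^ (e - 1)) =
        Mγ * (((1/2:ℝ) ^ e - d' ^ e) / e) := by
      rw [intervalIntegral.integral_const_mul]
      congr 1
      have := intervalIntegral.integral_comp_sub_left (a := (1/2:ℝ)) (b := 1 - d')
        (fun t => t ^ (e - 1)) 1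
      simp only [sub_sub_cancel] at this
      rw [this, integral_rpow (Or.inr ⟨by intro hh; linarith, by
        rw [Set.uIcc_of_le (by linarith)]; intro hh; exact absurd hh.1 (by linarith)⟩)]
      norm_num
    have hbound : Mγ * (((1/2:ℝ) ^ e - d' ^ e) / e) ≤ C2 * d ^ e := by
      have hdub : d' ^ e ≤ (d / 2) ^ e :=
        Real.rpow_le_rpow_of_nonpos (by positivity) hdd' he.le
      have hmul : (d / 2) ^ e = d ^ e * (1/2:ℝ) ^ e := by
        rw [show d / 2 = d * (1/2) by ring, Real.mul_rpow hd.le (by norm_num)]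
      have hhalf : (0:ℝ) < (1/2:ℝ) ^ e := Real.rpow_pos_of_pos (by norm_num) _
      have hne : (0:ℝ) < -e := by linarith
      rw [hC2]
      have heq1 : ((1/2:ℝ) ^ e - d' ^ e) / e = (d' ^ e - (1/2:ℝ) ^ e) / (-e) := by
        rw [div_neg, ← neg_div, neg_sub]
      rw [heq1]
      have : (d' ^ e - (1/2:ℝ) ^ e) / (-e) ≤ (d ^ e * (1/2:ℝ) ^ e) / (-e) := by
        apply (div_le_div_iff_of_pos_right hne).mpr
        calc d' ^ e - (1/2:ℝ) ^ e ≤ d' ^ e := by linarith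
          _ ≤ (d / 2) ^ e := hdub
          _ = d ^ e * (1/2:ℝ) ^ e := hmul
      calc Mγ * ((d' ^ e - (1/2:ℝ) ^ e) / (-e)) ≤ Mγ * ((d ^ e * (1/2:ℝ) ^ e) / (-e)) :=
            mul_le_mul_of_nonneg_left this hMγ0.le
        _ = Mγ * ((1/2:ℝ) ^ e / (-e)) * d ^ e := by ring
    calc _ ≤ _ := step
      _ = _ := hval
      _ ≤ _ := hbound
  -- piece 3
  have hP3 : (∫ s in (1 - d':ℝ)..1, (D - s) ^ (α - 1/2) * (1 - s) ^ (β - 1) * s ^ γ) ≤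
      (Mγ / β) * d ^ e := by
    have step : (∫ s in (1 - d':ℝ)..1, (D - s) ^ (α - 1/2) * (1 - s) ^ (β - 1) * s ^ γ) ≤
        ∫ s in (1 - d':ℝ)..1, (d ^ (α - 1/2) * Mγ) * (1 - s) ^ (β - 1) := by
      apply integral_mono_Ioo (by linarith) I3
      · have base := (intervalIntegrable_rpow' (r := β - 1) (a := d') (b := 0)
          (by linarith)).comp_sub_left 1
        norm_num at base
        exact base.const_mul _
      intro x hx
      obtain ⟨hx1, hx2⟩ := hx
      have hA : (D - x) ^ (α - 1/2) ≤ d ^ (α - 1/2) :=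
        Real.rpow_le_rpow_of_nonpos hd (by rw [hdd]; linarith) ha.le
      have hC : x ^ γ ≤ Mγ := rpow_le_max (by norm_num) (by linarith) (by linarith)
      have hBnn : (0:ℝ) ≤ (1 - x) ^ (β - 1) := Real.rpow_nonneg (by linarith) _
      calc (D - x) ^ (α - 1/2) * (1 - x) ^ (β - 1) * x ^ γ
          ≤ d ^ (α - 1/2) * (1 - x) ^ (β - 1) * Mγ := by
            apply mul_le_mul (mul_le_mul_of_nonneg_right hA hBnn) hC
              (Real.rpow_nonneg (by linarith) _)
            have : (0:ℝ) ≤ d ^ (α - 1/2) := Real.rpow_nonneg hd.le _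
            positivity
        _ = (d ^ (α - 1/2) * Mγ) * (1 - x) ^ (β - 1) := by ring
    have hval : (∫ s in (1 - d':ℝ)..1, (d ^ (α - 1/2) * Mγ) * (1 - s) ^ (β - 1)) =
        (d ^ (α - 1/2) * Mγ) * (d' ^ β / β) := by
      rw [intervalIntegral.integral_const_mul]
      congr 1
      have := intervalIntegral.integral_comp_sub_left (a := (1 - d':ℝ)) (b := 1)
        (fun t => t ^ (β - 1)) 1
      simp only [sub_sub_cancel, sub_self] at this
      rw [this, integral_rpow (Or.inl (by linarith)),
        Real.zero_rpow (show β - 1 + 1 ≠ 0 by intro hh; linarith)]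
      rw [show β - 1 + 1 = β by ring]
      ring
    have hbound : (d ^ (α - 1/2) * Mγ) * (d' ^ β / β) ≤ (Mγ / β) * d ^ e := by
      have h1 : d' ^ β ≤ d ^ β := Real.rpow_le_rpow hd'0.le hd'd hβ.le
      have h2 : (0:ℝ) ≤ d ^ (α - 1/2) := Real.rpow_nonneg hd.le _
      have h3 : d ^ (α - 1/2) * d ^ β = d ^ e := by
        rw [← Real.rpow_add hd]; congr 1; rw [he']; ring
      calc (d ^ (α - 1/2) * Mγ) * (d' ^ β / β) ≤ (d ^ (α - 1/2) * Mγ) * (d ^ β / β) :=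
            mul_le_mul_of_nonneg_left ((div_le_div_iff_of_pos_right hβ).mpr h1) (by positivity)
        _ = (Mγ / β) * d ^ e := by rw [← h3]; ring
    calc _ ≤ _ := step
      _ = _ := hval
      _ ≤ _ := hbound
  calc (∫ s in (0:ℝ)..1, (D - s) ^ (α - 1/2) * (1 - s) ^ (β - 1) * s ^ γ)
      = _ := hsplit
    _ ≤ K1 + C2 * d ^ e + (Mγ / β) * d ^ e := by linarith
    _ ≤ K1 * d ^ e + C2 * d ^ e + (Mγ / β) * d ^ e := by nlinarith
    _ = (K1 + C2 + Mγ / β) * d ^ e := by ring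
end caselt

section caselt2
variable {α β γ : ℝ}

set_option maxHeartbeats 1000000 in
lemma lower_lt (hβ : 0 < β) (hγ : -1 < γ) (h : α + β < 1/2) :
    ∃ c : ℝ, 0 < c ∧ ∀ D : ℝ, 1 < D → D < 2 →
      c * (D - 1) ^ (α + β - 1/2) ≤
        (∫ s in (0:ℝ)..1, (D - s) ^ (α - 1/2) * (1 - s) ^ (β - 1) * s ^ γ) := by
  have ha : α - 1/2 < 0 := by linarith
  set mB := min ((1/4:ℝ) ^ (β - 1)) ((1/2:ℝ) ^ (β - 1)) with hmB
  set mC := min ((1/2:ℝ) ^ γ) ((1:ℝ) ^ γ) with hmC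
  have hmB0 : 0 < mB := min_rpow_pos (by norm_num) (by norm_num) _
  have hmC0 : 0 < mC := min_rpow_pos (by norm_num) (by norm_num) _
  set clt := 2 ^ (α - 1/2) * mB * mC with hclt
  have hclt0 : 0 < clt := by
    have : (0:ℝ) < 2 ^ (α - 1/2) := Real.rpow_pos_of_pos (by norm_num) _
    positivity
  refine ⟨clt / 4, by positivity, fun D hD hD2 => ?_⟩
  have hd : 0 < D - 1 := by linarith
  have hd1 : D - 1 < 1 := by linarith
  set d := D - 1 with hdd
  have key : ∀ x ∈ Set.Ioo (1 - d/2) (1 - d/4),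
      clt * d ^ (α + β - 3/2) ≤ (D - x) ^ (α - 1/2) * (1 - x) ^ (β - 1) * x ^ γ := by
    intro x hx
    obtain ⟨hx1, hx2⟩ := hx
    have hxhalf : 1/2 ≤ x := by simp only [hdd] at hx1 ⊢; linarith
    have hx1' : x ≤ 1 := by simp only [hdd] at hx2 ⊢; linarith
    have hDx : 0 < D - x := by simp only [hdd] at hx2 ⊢; linarith
    have hA : 2 ^ (α - 1/2) * d ^ (α - 1/2) ≤ (D - x) ^ (α - 1/2) := by
      have h1 : (D - x) ^ (α - 1/2) ≥ (2 * d) ^ (α - 1/2) := by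
        apply Real.rpow_le_rpow_of_nonpos hDx _ ha.le
        simp only [hdd] at hx1 ⊢; linarith
      rwa [Real.mul_rpow (by norm_num) hd.le] at h1
    have hB : d ^ (β - 1) * mB ≤ (1 - x) ^ (β - 1) := by
      have h1 : min ((d/4) ^ (β - 1)) ((d/2) ^ (β - 1)) ≤ (1 - x) ^ (β - 1) := by
        apply rpow_ge_min (by positivity) (by simp only [hdd] at hx2 ⊢; linarith)
          (by simp only [hdd] at hx1 ⊢; linarith)
      refine le_trans (le_min ?_ ?_) h1
      · rw [show d/4 = d * (1/4) by ring, Real.mul_rpow hd.le (by norm_num)]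
        exact mul_le_mul_of_nonneg_left (min_le_left _ _) (Real.rpow_nonneg hd.le _)
      · rw [show d/2 = d * (1/2) by ring, Real.mul_rpow hd.le (by norm_num)]
        exact mul_le_mul_of_nonneg_left (min_le_right _ _) (Real.rpow_nonneg hd.le _)
    have hC : mC ≤ x ^ γ := rpow_ge_min (by norm_num) hxhalf hx1'
    have h2pos : (0:ℝ) ≤ 2 ^ (α - 1/2) * d ^ (α - 1/2) := by
      have := Real.rpow_nonneg (show (0:ℝ) ≤ 2 by norm_num) (α - 1/2)
      have := Real.rpow_nonneg hd.le (α - 1/2)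
      positivity
    have hfinal : (2 ^ (α - 1/2) * d ^ (α - 1/2)) * (d ^ (β - 1) * mB) * mC ≤
        (D - x) ^ (α - 1/2) * (1 - x) ^ (β - 1) * x ^ γ := by
      apply mul_le_mul (mul_le_mul hA hB (by positivity)
        (Real.rpow_nonneg hDx.le _)) hC hmC0.le
      have := Real.rpow_nonneg hDx.le (α - 1/2)
      have := Real.rpow_nonneg (show (0:ℝ) ≤ 1 - x by linarith) (β - 1)
      positivity
    refine le_trans (le_of_eq ?_) hfinal
    rw [hclt]
    have hexp : d ^ (α - 1/2) * d ^ (β - 1) = d ^ (α + β - 3/2) := by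
      rw [← Real.rpow_add hd]; congr 1; ring
    calc 2 ^ (α - 1/2) * mB * mC * d ^ (α + β - 3/2)
        = (2 ^ (α - 1/2) * (d ^ (α - 1/2) * d ^ (β - 1)) * mB) * mC := by rw [hexp]; ring
      _ = 2 ^ (α - 1/2) * d ^ (α - 1/2) * (d ^ (β - 1) * mB) * mC := by ring
  have hab : (1 - d/2 : ℝ) ≤ 1 - d/4 := by simp only [hdd]; linarith
  calc clt / 4 * d ^ (α + β - 1/2)
      = ((1 - d/4) - (1 - d/2)) • (clt * d ^ (α + β - 3/2)) := by
        rw [smul_eq_mul]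
        have : d ^ (α + β - 1/2) = d ^ (α + β - 3/2) * d := by
          rw [show d ^ (α + β - 1/2) = d ^ (α + β - 3/2 + 1) by congr 1; ring,
            Real.rpow_add hd, Real.rpow_one]
        rw [this]; ring
    _ = ∫ _ in (1 - d/2 : ℝ)..(1 - d/4), clt * d ^ (α + β - 3/2) := by
        rw [intervalIntegral.integral_const]
    _ ≤ ∫ s in (1 - d/2 : ℝ)..(1 - d/4), (D - s) ^ (α - 1/2) * (1 - s) ^ (β - 1) * s ^ γ := by
        apply integral_mono_Ioo hab intervalIntegrable_const
          (f_integrable_sub (α := α) (a := 1 - d/2) (b := 1 - d/4) hβ hγ hD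
            (by simp only [hdd]; linarith) (by simp only [hdd]; linarith)
            (by simp only [hdd]; linarith) (by simp only [hdd]; linarith)) key
    _ ≤ _ := f_restrict hβ hγ hD (by simp only [hdd]; linarith) hab
        (by simp only [hdd]; linarith)
end caselt2

section caseeq
variable {α β γ : ℝ}

set_option maxHeartbeats 2000000 in
lemma upper_eq (hβ : 0 < β) (hγ : -1 < γ) (h : α + β = 1/2) :
    ∃ C : ℝ, 0 < C ∧ ∀ D : ℝ, 1 < D → D < 2 →
      (∫ s in (0:ℝ)..1, (D - s) ^ (α - 1/2) * (1 - s) ^ (β - 1) * s ^ γ) ≤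
        C * (1 + Real.log (1 / (D - 1))) := by
  have ha : α - 1/2 < 0 := by linarith
  have hab : α - 1/2 = -β := by linarith
  set Mγ := max ((1/2:ℝ) ^ γ) ((1:ℝ) ^ γ) with hMγ
  have hMγ0 : 0 < Mγ := (Real.rpow_pos_of_pos (by norm_num) γ).trans_le (le_max_left _ _)
  set K1' := (1/2:ℝ) ^ (α - 1/2) * max ((1/2:ℝ) ^ (β - 1)) ((1:ℝ) ^ (β - 1)) with hK1'
  have hK1'0 : 0 < K1' := by
    have := Real.rpow_pos_of_pos (show (0:ℝ) < 1/2 by norm_num) (α - 1/2)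
    have h2 : (0:ℝ) < max ((1/2:ℝ) ^ (β - 1)) ((1:ℝ) ^ (β - 1)) :=
      (Real.rpow_pos_of_pos (by norm_num) (β - 1)).trans_le (le_max_left _ _)
    positivity
  set K1 := K1' * ((1/2:ℝ) ^ (γ + 1) / (γ + 1)) with hK1
  have hK10 : 0 < K1 := by
    have h1 : (0:ℝ) < (1/2:ℝ) ^ (γ + 1) := Real.rpow_pos_of_pos (by norm_num) _
    have h2 : (0:ℝ) < γ + 1 := by linarith
    positivity
  refine ⟨K1 + Mγ + Mγ / β, by positivity, fun D hD hD2 => ?_⟩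
  have hd : 0 < D - 1 := by linarith
  have hd1 : D - 1 < 1 := by linarith
  set d := D - 1 with hdd
  set d' := min d (1/2) with hd''
  have hd'0 : 0 < d' := lt_min hd (by norm_num)
  have hd'h : d' ≤ 1/2 := min_le_right _ _
  have hd'd : d' ≤ d := min_le_left _ _
  have hdd' : d / 2 ≤ d' := le_min (by linarith) (by linarith)
  set L := Real.log (1 / d) with hL
  have hL0 : 0 ≤ L := Real.log_nonneg (by rw [le_div_iff₀ hd]; linarith)
  -- integrability
  have I1 := f_integrable_sub (α := α) (a := 0) (b := 1/2) hβ hγ hD (le_refl 0) zero_le_one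
    (by norm_num) (by norm_num)
  have I2 := f_integrable_sub (α := α) (a := 1/2) (b := 1 - d') hβ hγ hD (by norm_num)
    (by norm_num) (by linarith) (by linarith)
  have I3 := f_integrable_sub (α := α) (a := 1 - d') (b := 1) hβ hγ hD (by linarith) (by linarith)
    zero_le_one le_rfl
  have hsplit : (∫ s in (0:ℝ)..1, (D - s) ^ (α - 1/2) * (1 - s) ^ (β - 1) * s ^ γ) =
      (∫ s in (0:ℝ)..(1/2), (D - s) ^ (α - 1/2) * (1 - s) ^ (β - 1) * s ^ γ) +
      (∫ s in (1/2:ℝ)..(1 - d'), (D - s) ^ (α - 1/2) * (1 - s) ^ (β - 1) * s ^ γ) +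
      (∫ s in (1 - d':ℝ)..1, (D - s) ^ (α - 1/2) * (1 - s) ^ (β - 1) * s ^ γ) := by
    rw [intervalIntegral.integral_add_adjacent_intervals I1 I2,
      intervalIntegral.integral_add_adjacent_intervals
        (f_integrable_sub (α := α) (a := 0) (b := 1 - d') hβ hγ hD le_rfl zero_le_one (by linarith)
          (by linarith)) I3]
  -- piece 1
  have hP1 : (∫ s in (0:ℝ)..(1/2), (D - s) ^ (α - 1/2) * (1 - s) ^ (β - 1) * s ^ γ) ≤ K1 := by
    have step : (∫ s in (0:ℝ)..(1/2), (D - s) ^ (α - 1/2) * (1 - s) ^ (β - 1) * s ^ γ) ≤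
        ∫ s in (0:ℝ)..(1/2), K1' * s ^ γ := by
      apply integral_mono_Ioo (by norm_num) I1 ((intervalIntegrable_rpow' hγ).const_mul _)
      intro x hx
      obtain ⟨hx1, hx2⟩ := hx
      have hA : (D - x) ^ (α - 1/2) ≤ (1/2:ℝ) ^ (α - 1/2) :=
        Real.rpow_le_rpow_of_nonpos (by norm_num) (by linarith) ha.le
      have hB : (1 - x) ^ (β - 1) ≤ max ((1/2:ℝ) ^ (β - 1)) ((1:ℝ) ^ (β - 1)) :=
        rpow_le_max (by norm_num) (by linarith) (by linarith)
      have hBnn : (0:ℝ) ≤ (1 - x) ^ (β - 1) := Real.rpow_nonneg (by linarith) _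
      have hCnn : (0:ℝ) ≤ x ^ γ := Real.rpow_nonneg hx1.le _
      rw [hK1']
      exact mul_le_mul_of_nonneg_right
        (mul_le_mul hA hB hBnn (Real.rpow_nonneg (show (0:ℝ) ≤ 1/2 by norm_num) (α - 1/2))) hCnn
    rw [intervalIntegral.integral_const_mul, integral_rpow (Or.inl hγ),
      Real.zero_rpow (show γ + 1 ≠ 0 by intro hh; linarith)] at step
    rw [hK1]
    calc _ ≤ K1' * (((1/2:ℝ) ^ (γ + 1) - 0) / (γ + 1)) := step
      _ = K1' * ((1/2:ℝ) ^ (γ + 1) / (γ + 1)) := by ring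
  -- piece 2
  have hP2 : (∫ s in (1/2:ℝ)..(1 - d'), (D - s) ^ (α - 1/2) * (1 - s) ^ (β - 1) * s ^ γ) ≤
      Mγ * L := by
    have step : (∫ s in (1/2:ℝ)..(1 - d'), (D - s) ^ (α - 1/2) * (1 - s) ^ (β - 1) * s ^ γ) ≤
        ∫ s in (1/2:ℝ)..(1 - d'), Mγ * (1 - s)⁻¹ := by
      apply integral_mono_Ioo (by linarith) I2
      · apply ContinuousOn.intervalIntegrable
        apply ContinuousOn.mul continuousOn_const
        apply ContinuousOn.inv₀ (by fun_prop)
        intro x hx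
        rw [Set.uIcc_of_le (by linarith)] at hx
        intro hh; have := hx.2; nlinarith
      intro x hx
      obtain ⟨hx1, hx2⟩ := hx
      have h1x : 0 < 1 - x := by linarith
      have hA : (D - x) ^ (α - 1/2) ≤ (1 - x) ^ (α - 1/2) :=
        Real.rpow_le_rpow_of_nonpos h1x (by linarith) ha.le
      have hC : x ^ γ ≤ Mγ := rpow_le_max (by norm_num) (by linarith) (by linarith)
      have key : (1 - x) ^ (α - 1/2) * (1 - x) ^ (β - 1) = (1 - x)⁻¹ := by
        rw [← Real.rpow_add h1x, show α - 1/2 + (β - 1) = -1 by linarith, Real.rpow_neg_one]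
      calc (D - x) ^ (α - 1/2) * (1 - x) ^ (β - 1) * x ^ γ
          ≤ (1 - x) ^ (α - 1/2) * (1 - x) ^ (β - 1) * x ^ γ := by
            apply mul_le_mul_of_nonneg_right _ (Real.rpow_nonneg (by linarith) _)
            exact mul_le_mul_of_nonneg_right hA (Real.rpow_nonneg h1x.le _)
        _ = (1 - x)⁻¹ * x ^ γ := by rw [key]
        _ ≤ (1 - x)⁻¹ * Mγ := mul_le_mul_of_nonneg_left hC (by positivity)
        _ = Mγ * (1 - x)⁻¹ := by ring
    have hval : (∫ s in (1/2:ℝ)..(1 - d'), Mγ * (1 - s)⁻¹) =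
        Mγ * Real.log ((1/2) / d') := by
      rw [intervalIntegral.integral_const_mul]
      congr 1
      have := intervalIntegral.integral_comp_sub_left (a := (1/2:ℝ)) (b := 1 - d')
        (fun t => t⁻¹) 1
      simp only [sub_sub_cancel] at this
      have h0 : (0:ℝ) ∉ Set.uIcc d' (1/2) := by
        rw [Set.uIcc_of_le (by linarith)]
        intro hh
        exact absurd hh.1 (by linarith)
      rw [this, show (1:ℝ) - 1/2 = 1/2 by norm_num, integral_inv h0]
    have hlog : Real.log ((1/2) / d') ≤ L := by
      rw [hL]
      apply Real.log_le_log (by positivity)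
      rw [div_le_div_iff₀ (by positivity) hd]
      nlinarith
    calc _ ≤ _ := step
      _ = _ := hval
      _ ≤ Mγ * L := mul_le_mul_of_nonneg_left hlog hMγ0.le
  -- piece 3
  have hP3 : (∫ s in (1 - d':ℝ)..1, (D - s) ^ (α - 1/2) * (1 - s) ^ (β - 1) * s ^ γ) ≤
      Mγ / β := by
    have step : (∫ s in (1 - d':ℝ)..1, (D - s) ^ (α - 1/2) * (1 - s) ^ (β - 1) * s ^ γ) ≤
        ∫ s in (1 - d':ℝ)..1, (d ^ (α - 1/2) * Mγ) * (1 - s) ^ (β - 1) := by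
      apply integral_mono_Ioo (by linarith) I3
      · have base := (intervalIntegrable_rpow' (r := β - 1) (a := d') (b := 0)
          (by linarith)).comp_sub_left 1
        norm_num at base
        exact base.const_mul _
      intro x hx
      obtain ⟨hx1, hx2⟩ := hx
      have hA : (D - x) ^ (α - 1/2) ≤ d ^ (α - 1/2) :=
        Real.rpow_le_rpow_of_nonpos hd (by rw [hdd]; linarith) ha.le
      have hC : x ^ γ ≤ Mγ := rpow_le_max (by norm_num) (by linarith) (by linarith)
      have hBnn : (0:ℝ) ≤ (1 - x) ^ (β - 1) := Real.rpow_nonneg (by linarith) _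
      calc (D - x) ^ (α - 1/2) * (1 - x) ^ (β - 1) * x ^ γ
          ≤ d ^ (α - 1/2) * (1 - x) ^ (β - 1) * Mγ := by
            apply mul_le_mul (mul_le_mul_of_nonneg_right hA hBnn) hC
              (Real.rpow_nonneg (by linarith) _)
            have : (0:ℝ) ≤ d ^ (α - 1/2) := Real.rpow_nonneg hd.le _
            positivity
        _ = (d ^ (α - 1/2) * Mγ) * (1 - x) ^ (β - 1) := by ring
    have hval : (∫ s in (1 - d':ℝ)..1, (d ^ (α - 1/2) * Mγ) * (1 - s) ^ (β - 1)) =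
        (d ^ (α - 1/2) * Mγ) * (d' ^ β / β) := by
      rw [intervalIntegral.integral_const_mul]
      congr 1
      have := intervalIntegral.integral_comp_sub_left (a := (1 - d':ℝ)) (b := 1)
        (fun t => t ^ (β - 1)) 1
      simp only [sub_sub_cancel, sub_self] at this
      rw [this, integral_rpow (Or.inl (by linarith)),
        Real.zero_rpow (show β - 1 + 1 ≠ 0 by intro hh; linarith)]
      rw [show β - 1 + 1 = β by ring]
      ring
    have hbound : (d ^ (α - 1/2) * Mγ) * (d' ^ β / β) ≤ Mγ / β := by
      have h1 : d' ^ β ≤ d ^ β := Real.rpow_le_rpow hd'0.le hd'd hβ.le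
      have h3 : d ^ (α - 1/2) * d ^ β = 1 := by
        rw [← Real.rpow_add hd, show α - 1/2 + β = 0 by linarith, Real.rpow_zero]
      have h2 : (0:ℝ) ≤ d ^ (α - 1/2) := Real.rpow_nonneg hd.le _
      calc (d ^ (α - 1/2) * Mγ) * (d' ^ β / β) ≤ (d ^ (α - 1/2) * Mγ) * (d ^ β / β) :=
            mul_le_mul_of_nonneg_left ((div_le_div_iff_of_pos_right hβ).mpr h1) (by positivity)
        _ = (d ^ (α - 1/2) * d ^ β) * Mγ / β := by ring
        _ = Mγ / β := by rw [h3]; ring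
    calc _ ≤ _ := step
      _ = _ := hval
      _ ≤ _ := hbound
  have hterm1 : 0 ≤ K1 * L := mul_nonneg hK10.le hL0
  have hterm2 : 0 ≤ (Mγ / β) * L := mul_nonneg (by positivity) hL0
  calc (∫ s in (0:ℝ)..1, (D - s) ^ (α - 1/2) * (1 - s) ^ (β - 1) * s ^ γ)
      = _ := hsplit
    _ ≤ K1 + Mγ * L + Mγ / β := by linarith
    _ ≤ (K1 + Mγ + Mγ / β) * (1 + L) := by
        have expand : (K1 + Mγ + Mγ / β) * (1 + L) =
            K1 + Mγ + Mγ / β + K1 * L + Mγ * L + (Mγ / β) * L := by ring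
        rw [expand]
        linarith
end caseeq

section caseeq2
variable {α β γ : ℝ}

set_option maxHeartbeats 2000000 in
lemma lower_eq (hβ : 0 < β) (hγ : -1 < γ) (h : α + β = 1/2) :
    ∃ c : ℝ, 0 < c ∧ ∀ D : ℝ, 1 < D → D < 2 →
      c * (1 + Real.log (1 / (D - 1))) ≤
        (∫ s in (0:ℝ)..1, (D - s) ^ (α - 1/2) * (1 - s) ^ (β - 1) * s ^ γ) := by
  set c1q := (min ((1/2:ℝ) ^ (α - 1/2)) (2 ^ (α - 1/2)) *
      min ((1/2:ℝ) ^ (β - 1)) ((3/4:ℝ) ^ (β - 1)) *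
      min ((1/4:ℝ) ^ γ) ((1/2:ℝ) ^ γ)) * (1/4) with hc1q
  have hc1q0 : 0 < c1q := by
    have := c1_pos α β γ
    rw [hc1q]; positivity
  set mC4 := min ((1/4:ℝ) ^ γ) ((1:ℝ) ^ γ) with hmC4
  have hmC40 : 0 < mC4 := min_rpow_pos (by norm_num) (by norm_num) _
  set c4 := (2:ℝ) ^ (-β) * mC4 with hc4
  have hc40 : 0 < c4 := by
    have : (0:ℝ) < (2:ℝ) ^ (-β) := Real.rpow_pos_of_pos (by norm_num) _
    positivity
  have hlog4 : (1:ℝ) < Real.log 4 := by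
    rw [Real.lt_log_iff_exp_lt (by norm_num)]
    have := Real.exp_one_lt_d9
    linarith
  have hlog43 : 2 * Real.log (4/3) ≤ Real.log 4 := by
    have h1 : Real.log ((4/3:ℝ) ^ (2:ℕ)) = 2 * Real.log (4/3) := by
      rw [Real.log_pow]; norm_num
    have h2 : ((4/3:ℝ) ^ (2:ℕ)) = 16/9 := by norm_num
    have h3 : Real.log (16/9 : ℝ) ≤ Real.log 4 := Real.log_le_log (by norm_num) (by norm_num)
    rw [h2] at h1; linarith
  refine ⟨min (c1q/4) (c4/4), by positivity, fun D hD hD2 => ?_⟩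
  have hd : 0 < D - 1 := by linarith
  have hd1 : D - 1 < 1 := by linarith
  set d := D - 1 with hdd
  set L := Real.log (1 / d) with hL
  have hL0 : 0 ≤ L := Real.log_nonneg (by rw [le_div_iff₀ hd]; linarith)
  rcases le_or_gt d (1/4) with hcase | hcase
  · -- small d : use the log-growing part
    have hL4 : Real.log 4 ≤ L := by
      rw [hL]
      apply Real.log_le_log (by norm_num)
      rw [le_div_iff₀ hd]; linarith
    have hLlog : Real.log ((3/4) / d) = L - Real.log (4/3) := by
      have e1 : Real.log ((3/4) / d) = Real.log (3/4 : ℝ) - Real.log d :=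
        Real.log_div (by norm_num) (ne_of_gt hd)
      have e2 : L = -Real.log d := by rw [hL, one_div, Real.log_inv]
      have e3 : Real.log (3/4 : ℝ) = -Real.log (4/3) := by
        rw [show (3/4:ℝ) = (4/3:ℝ)⁻¹ by norm_num, Real.log_inv]
      linarith
    have key : ∀ x ∈ Set.Ioo (1/4 : ℝ) (1 - d),
        c4 * (1 - x)⁻¹ ≤ (D - x) ^ (α - 1/2) * (1 - x) ^ (β - 1) * x ^ γ := by
      intro x hx
      obtain ⟨hx1, hx2⟩ := hx
      have hx1' : x ≤ 1 := by simp only [hdd] at hx2 ⊢; linarith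
      have h1x : 0 < 1 - x := by simp only [hdd] at hx2 ⊢; linarith
      have hdx : d ≤ 1 - x := by simp only [hdd] at hx2 ⊢; linarith
      have hDx : 0 < D - x := by linarith
      have hA : (2:ℝ) ^ (-β) * (1 - x) ^ (-β) ≤ (D - x) ^ (α - 1/2) := by
        rw [show α - 1/2 = -β by linarith, ← Real.mul_rpow (by norm_num) h1x.le]
        apply Real.rpow_le_rpow_of_nonpos hDx (by simp only [hdd] at hdx ⊢; linarith)
          (by linarith)
      have hC : mC4 ≤ x ^ γ := rpow_ge_min (by norm_num) hx1.le hx1'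
      have key2 : (1 - x) ^ (-β) * (1 - x) ^ (β - 1) = (1 - x)⁻¹ := by
        rw [← Real.rpow_add h1x, show -β + (β - 1) = -1 by ring, Real.rpow_neg_one]
      have step : ((2:ℝ) ^ (-β) * (1 - x) ^ (-β)) * (1 - x) ^ (β - 1) * mC4 ≤
          (D - x) ^ (α - 1/2) * (1 - x) ^ (β - 1) * x ^ γ := by
        apply mul_le_mul (mul_le_mul_of_nonneg_right hA (Real.rpow_nonneg h1x.le _)) hC hmC40.le
        have h2 : (0:ℝ) ≤ (D - x) ^ (α - 1/2) := Real.rpow_nonneg hDx.le _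
        have h3 : (0:ℝ) ≤ (1 - x) ^ (β - 1) := Real.rpow_nonneg h1x.le _
        positivity
      refine le_trans (le_of_eq ?_) step
      rw [hc4]
      calc (2:ℝ) ^ (-β) * mC4 * (1 - x)⁻¹
          = (2:ℝ) ^ (-β) * ((1 - x) ^ (-β) * (1 - x) ^ (β - 1)) * mC4 := by rw [key2]; ring
        _ = ((2:ℝ) ^ (-β) * (1 - x) ^ (-β)) * (1 - x) ^ (β - 1) * mC4 := by ring
    have hint : IntervalIntegrable (fun x : ℝ => c4 * (1 - x)⁻¹) volume (1/4) (1 - d) := by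
      apply ContinuousOn.intervalIntegrable
      apply ContinuousOn.mul continuousOn_const
      apply ContinuousOn.inv₀ (by fun_prop)
      intro x hx
      rw [Set.uIcc_of_le (by simp only [hdd]; linarith)] at hx
      intro hh
      have h2 := hx.2
      simp only [hdd] at h2
      nlinarith
    have hval : (∫ x in (1/4 : ℝ)..(1 - d), c4 * (1 - x)⁻¹) = c4 * Real.log ((3/4) / d) := by
      rw [intervalIntegral.integral_const_mul]
      congr 1
      have := intervalIntegral.integral_comp_sub_left (a := (1/4:ℝ)) (b := 1 - d)
        (fun t => t⁻¹) 1
      simp only [sub_sub_cancel] at this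
      have h0 : (0:ℝ) ∉ Set.uIcc d (3/4) := by
        rw [Set.uIcc_of_le (by linarith)]
        intro hh
        exact absurd hh.1 (by linarith)
      rw [this, show (1:ℝ) - 1/4 = 3/4 by norm_num, integral_inv h0]
    calc min (c1q/4) (c4/4) * (1 + L)
        ≤ (c4/4) * (1 + L) :=
          mul_le_mul_of_nonneg_right (min_le_right _ _) (by linarith)
      _ ≤ c4 * Real.log ((3/4) / d) := by
          rw [hLlog]
          have hexpand : c4 * (L - Real.log (4/3)) - (c4/4) * (1 + L) =
              c4 * ((3/4) * L - Real.log (4/3) - 1/4) := by ring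
          have hterm : 0 ≤ (3/4) * L - Real.log (4/3) - 1/4 := by linarith
          nlinarith
      _ = ∫ x in (1/4 : ℝ)..(1 - d), c4 * (1 - x)⁻¹ := hval.symm
      _ ≤ ∫ x in (1/4 : ℝ)..(1 - d), (D - x) ^ (α - 1/2) * (1 - x) ^ (β - 1) * x ^ γ := by
          apply integral_mono_Ioo (by simp only [hdd]; linarith) hint
            (f_integrable_sub (α := α) (a := 1/4) (b := 1 - d) hβ hγ hD (by norm_num)
              (by norm_num) (by simp only [hdd]; linarith) (by simp only [hdd]; linarith)) key
      _ ≤ _ := f_restrict hβ hγ hD (by norm_num) (by simp only [hdd]; linarith)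
              (by simp only [hdd]; linarith)
  · -- large d : the integral is bounded below by a constant
    have hLle : L ≤ 3 := by
      have h1 : L ≤ 1/d - 1 := by
        rw [hL]; exact Real.log_le_sub_one_of_pos (by positivity)
      have h2 : 1/d < 4 := by rw [div_lt_iff₀ hd]; linarith
      linarith
    calc min (c1q/4) (c4/4) * (1 + L)
        ≤ (c1q/4) * 4 :=
          mul_le_mul (min_le_left _ _) (by linarith) (by linarith) (by positivity)
      _ = c1q := by ring
      _ ≤ _ := lower_univ hβ hγ hD hD2
end caseeq2

theorem stmt_2 (α β γ : ℝ) (hβ : 0 < β) (hγ : -1 < γ) :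
    ∃ c C : ℝ, 0 < c ∧ 0 < C ∧ ∀ D : ℝ, 1 < D → D < 2 →
      (α + β < 1/2 →
        c * (D - 1) ^ (α + β - 1/2) ≤
          (∫ s in (0:ℝ)..1, (D - s) ^ (α - 1/2) * (1 - s) ^ (β - 1) * s ^ γ) ∧
        (∫ s in (0:ℝ)..1, (D - s) ^ (α - 1/2) * (1 - s) ^ (β - 1) * s ^ γ) ≤
          C * (D - 1) ^ (α + β - 1/2)) ∧
      (α + β = 1/2 →
        c * (1 + Real.log (1 / (D - 1))) ≤
          (∫ s in (0:ℝ)..1, (D - s) ^ (α - 1/2) * (1 - s) ^ (β - 1) * s ^ γ) ∧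
        (∫ s in (0:ℝ)..1, (D - s) ^ (α - 1/2) * (1 - s) ^ (β - 1) * s ^ γ) ≤
          C * (1 + Real.log (1 / (D - 1)))) ∧
      (α + β > 1/2 →
        c ≤ (∫ s in (0:ℝ)..1, (D - s) ^ (α - 1/2) * (1 - s) ^ (β - 1) * s ^ γ) ∧
        (∫ s in (0:ℝ)..1, (D - s) ^ (α - 1/2) * (1 - s) ^ (β - 1) * s ^ γ) ≤ C) := by
  rcases lt_trichotomy (α + β) (1/2) with hcase | hcase | hcase
  · obtain ⟨c, hc0, hcl⟩ := lower_lt hβ hγ hcase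
    obtain ⟨C, hC0, hCu⟩ := upper_lt hβ hγ hcase
    refine ⟨c, C, hc0, hC0, fun D hD hD2 => ⟨fun _ => ⟨hcl D hD hD2, hCu D hD hD2⟩, ?_, ?_⟩⟩
    · intro h'; exfalso; linarith
    · intro h'; exfalso; linarith
  · obtain ⟨c, hc0, hcl⟩ := lower_eq hβ hγ hcase
    obtain ⟨C, hC0, hCu⟩ := upper_eq hβ hγ hcase
    refine ⟨c, C, hc0, hC0, fun D hD hD2 => ⟨?_, fun _ => ⟨hcl D hD hD2, hCu D hD hD2⟩, ?_⟩⟩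
    · intro h'; exfalso; linarith
    · intro h'; exfalso; linarith
  · obtain ⟨C, hC0, hCu⟩ := upper_gt hβ hγ hcase
    refine ⟨(min ((1/2:ℝ) ^ (α - 1/2)) (2 ^ (α - 1/2)) *
        min ((1/2:ℝ) ^ (β - 1)) ((3/4:ℝ) ^ (β - 1)) *
        min ((1/4:ℝ) ^ γ) ((1/2:ℝ) ^ γ)) * (1/4), C, ?_, hC0,
      fun D hD hD2 => ⟨?_, ?_, fun _ => ⟨lower_univ hβ hγ hD hD2, hCu D hD hD2⟩⟩⟩
    · have := c1_pos α β γ; positivity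
    · intro h'; exfalso; linarith
    · intro h'; exfalso; linarith
end

section
/- Let a, b ∈ ℝ and 1 < p ≤ q < ∞ with a - 1/p' = b + 1/q and a < 1/p', where 1/p + 1/p' = 1. Then there is a constant C such that for all nonnegative measurable g on (0,∞): (∫_0^∞ (x^b ∫_0^x g(y) dy)^q dx)^{1/q} ≤ C (∫_0^∞ (x^a g(x))^p dx)^{1/p}. -/
open MeasureTheory Set
open scoped ENNReal

lemma L1' {c x : ℝ} (hc : -1 < c) (hx : 0 < x) :
    ∫⁻ y in Ioo (0:ℝ) x, ENNReal.ofReal (y ^ c) = ENNReal.ofReal (x ^ (c+1) / (c+1)) := by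
  have hint : IntegrableOn (fun y : ℝ => y ^ c) (Ioo 0 x) := by
    have := (intervalIntegral.intervalIntegrable_rpow' hc (a := 0) (b := x))
    rw [intervalIntegrable_iff_integrableOn_Ioo_of_le hx.le] at this
    exact this
  rw [← ofReal_integral_eq_lintegral_ofReal hint]
  · congr 1
    rw [← integral_Ioc_eq_integral_Ioo, ← intervalIntegral.integral_of_le hx.le,
      integral_rpow (Or.inl hc), Real.zero_rpow (by linarith), sub_zero]
  · filter_upwards [ae_restrict_mem measurableSet_Ioo] with y hy
    exact Real.rpow_nonneg hy.1.le _


lemma L2' {c y : ℝ} (hc : c < -1) (hy : 0 < y) :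
    ∫⁻ x in Ioi y, ENNReal.ofReal (x ^ c) = ENNReal.ofReal (y ^ (c+1) / (-(c+1))) := by
  rw [← ofReal_integral_eq_lintegral_ofReal (integrableOn_Ioi_rpow_of_lt hc hy)]
  · rw [integral_Ioi_rpow_of_lt hc hy]
    congr 1
    rw [div_neg, neg_div]
  · filter_upwards [ae_restrict_mem measurableSet_Ioi] with x hx
    exact Real.rpow_nonneg (hy.trans hx).le _

lemma core (Φ : ℝ → ℝ≥0∞) (hΦ : Measurable Φ) {β r : ℝ} (hβ : β < -1) (hr : 1 ≤ r)
    (hfin : ∀ n : ℕ, (∫⁻ x in Ioo ((n:ℝ)+1)⁻¹ ((n:ℝ)+1),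
        ENNReal.ofReal (x ^ β) * (∫⁻ y in Ioo 0 x, Φ y) ^ r) ≠ ⊤) :
    ∫⁻ x in Ioi (0:ℝ), ENNReal.ofReal (x ^ β) * (∫⁻ y in Ioo 0 x, Φ y) ^ r
      ≤ (∫⁻ y in Ioi (0:ℝ), Φ y * ENNReal.ofReal (y ^ (β+1) / (-(β+1))) ^ (1/r)) ^ r := by
  have hr0 : (0:ℝ) < r := lt_of_lt_of_le one_pos hr
  set w : ℝ → ℝ≥0∞ := fun x => ENNReal.ofReal (x ^ β) with hw
  set F : ℝ → ℝ≥0∞ := fun x => ∫⁻ y in Ioo 0 x, Φ y with hFdef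
  set W : ℝ → ℝ≥0∞ := fun y => ENNReal.ofReal (y ^ (β+1) / (-(β+1))) with hWdef
  set D : ℝ≥0∞ := ∫⁻ y in Ioi (0:ℝ), Φ y * W y ^ (1/r) with hDdef
  have hFmono : Monotone F := fun x₁ x₂ h =>
    lintegral_mono_set (Ioo_subset_Ioo le_rfl h)
  have hFmeas : Measurable F := hFmono.measurable
  have hwmeas : Measurable w := by
    apply Measurable.ennreal_ofReal; measurability
  have hWeq : ∀ y : ℝ, 0 < y → ∫⁻ x in Ioi y, w x = W y := fun y hy => L2' hβ hy
  set S : ℕ → Set ℝ := fun n => Ioo ((n:ℝ)+1)⁻¹ ((n:ℝ)+1) with hSdef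
  set I : ℕ → ℝ≥0∞ := fun n => ∫⁻ x in S n, w x * F x ^ r with hIdef
  set H : ℝ → ℝ≥0∞ := fun x => w x * F x ^ (r-1) with hHdef
  have hHmeas : Measurable H := hwmeas.mul (hFmeas.pow_const _)
  have hHF : ∀ x, w x * F x ^ r = H x * F x := by
    intro x
    have h2 : F x ^ (r-1) * F x = F x ^ r := by
      nth_rewrite 2 [← ENNReal.rpow_one (F x)]
      rw [← ENNReal.rpow_add_of_nonneg _ _ (by linarith) zero_le_one, sub_add_cancel]
    rw [hHdef]; dsimp only; rw [mul_assoc, h2]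
  -- Fubini/Tonelli swap
  have swap : ∀ n : ℕ, I n = ∫⁻ y in Ioi (0:ℝ), (∫⁻ x in S n ∩ Ioi y, H x) * Φ y := by
    intro n
    have hSm : MeasurableSet (S n) := measurableSet_Ioo
    set k : ℝ × ℝ → ℝ≥0∞ := fun z =>
      (S n).indicator H z.1 * ({q : ℝ × ℝ | 0 < q.2 ∧ q.2 < q.1}.indicator (fun q => Φ q.2) z)
      with hkdef
    have hsetm : MeasurableSet {q : ℝ × ℝ | 0 < q.2 ∧ q.2 < q.1} :=
      (measurableSet_lt measurable_const measurable_snd).inter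
        (measurableSet_lt measurable_snd measurable_fst)
    have hkmeas : Measurable k :=
      (((hHmeas.indicator hSm).comp measurable_fst)).mul
        ((hΦ.comp measurable_snd).indicator hsetm)
    have h1 : ∀ x : ℝ, (∫⁻ y, k (x, y)) = (S n).indicator H x * F x := by
      intro x
      have he : (fun y => k (x, y)) = fun y => (S n).indicator H x * (Ioo 0 x).indicator Φ y := by
        funext y
        simp only [hkdef, Set.indicator_apply, Set.mem_setOf_eq, Set.mem_Ioo]
      rw [he, lintegral_const_mul _ (hΦ.indicator measurableSet_Ioo),
        lintegral_indicator measurableSet_Ioo]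
    have h2 : ∀ y : ℝ, (∫⁻ x, k (x, y)) =
        (Ioi (0:ℝ)).indicator (fun y => (∫⁻ x in S n ∩ Ioi y, H x) * Φ y) y := by
      intro y
      by_cases hy : 0 < y
      · have he : (fun x => k (x, y)) = (S n ∩ Ioi y).indicator (fun x => H x * Φ y) := by
          funext x
          simp only [hkdef, Set.indicator_apply, Set.mem_setOf_eq, Set.mem_inter_iff,
            Set.mem_Ioi, hy, true_and]
          by_cases hx : x ∈ S n <;> by_cases hxy : y < x <;> simp [hx, hxy]
        rw [he, lintegral_indicator (hSm.inter measurableSet_Ioi),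
          lintegral_mul_const _ hHmeas, Set.indicator_of_mem (Set.mem_Ioi.mpr hy)]
      · have he : (fun x => k (x, y)) = fun _ => 0 := by
          funext x
          have hne : ¬ (0 < y ∧ y < x) := fun h => hy h.1
          simp only [hkdef, Set.indicator_apply, Set.mem_setOf_eq, hne, if_false, mul_zero]
        rw [he, lintegral_const, zero_mul, Set.indicator_of_notMem (by simpa using hy)]
    calc I n = ∫⁻ x in S n, H x * F x := lintegral_congr fun x => hHF x
      _ = ∫⁻ x, (S n).indicator (fun x => H x * F x) x := (lintegral_indicator hSm _).symm
      _ = ∫⁻ x, ∫⁻ y, k (x, y) := by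
          apply lintegral_congr; intro x
          rw [h1 x]
          by_cases hx : x ∈ S n <;>
            simp [Set.indicator_of_mem, Set.indicator_of_notMem, hx]
      _ = ∫⁻ y, ∫⁻ x, k (x, y) := lintegral_lintegral_swap hkmeas.aemeasurable
      _ = ∫⁻ y, (Ioi (0:ℝ)).indicator (fun y => (∫⁻ x in S n ∩ Ioi y, H x) * Φ y) y :=
          lintegral_congr h2
      _ = ∫⁻ y in Ioi (0:ℝ), (∫⁻ x in S n ∩ Ioi y, H x) * Φ y :=
          lintegral_indicator measurableSet_Ioi _
  -- Hölder on the inner integral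
  have holder : ∀ n : ℕ, ∀ y : ℝ, 0 < y →
      (∫⁻ x in S n ∩ Ioi y, H x) ≤ I n ^ (1 - 1/r) * W y ^ (1/r) := by
    intro n y hy
    have hWy : ∫⁻ x in S n ∩ Ioi y, w x ≤ W y := by
      rw [← hWeq y hy]; exact lintegral_mono_set inter_subset_right
    have hIy : ∫⁻ x in S n ∩ Ioi y, w x * F x ^ r ≤ I n :=
      lintegral_mono_set inter_subset_left
    rcases eq_or_lt_of_le hr with h1 | h1
    · subst h1
      simp only [sub_self, ENNReal.rpow_zero, one_mul, div_self (one_ne_zero (α := ℝ)),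
        ENNReal.rpow_one] at *
      calc ∫⁻ x in S n ∩ Ioi y, H x = ∫⁻ x in S n ∩ Ioi y, w x := by
            apply lintegral_congr; intro x
            rw [hHdef]; simp
        _ ≤ W y := hWy
    · have hr1 : (0:ℝ) < r - 1 := by linarith
      have hconj : (r / (r-1)).HolderConjugate r := by
        rw [Real.holderConjugate_iff]
        constructor
        · rw [lt_div_iff₀ hr1]; linarith
        · rw [inv_div]; field_simp; ring
      set u := r / (r-1) with hu
      have hu0 : (0:ℝ) < u := div_pos hr0 hr1
      have hu_inv : 1 / u = 1 - 1/r := by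
        rw [hu, one_div, inv_div]; field_simp
      have key := ENNReal.lintegral_mul_le_Lp_mul_Lq (volume.restrict (S n ∩ Ioi y)) hconj
        (f := fun x => w x ^ (1 - 1/r) * F x ^ (r-1)) (g := fun x => w x ^ (1/r))
        (((hwmeas.pow_const _).mul (hFmeas.pow_const _)).aemeasurable)
        ((hwmeas.pow_const _).aemeasurable)
      have hfg : ∀ x, H x = (w x ^ (1-(1:ℝ)/r) * F x ^ (r-1)) * w x ^ ((1:ℝ)/r) := by
        intro x
        rw [hHdef]; dsimp only
        rw [mul_right_comm, ← ENNReal.rpow_add_of_nonneg _ _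
          (by rw [sub_nonneg, div_le_one hr0]; exact hr) (by positivity : (0:ℝ) ≤ 1/r)]
        norm_num
      have hfu : ∀ x, (w x ^ (1-(1:ℝ)/r) * F x ^ (r-1)) ^ u = w x * F x ^ r := by
        intro x
        have e1 : (1-(1:ℝ)/r)*u = 1 := by rw [hu]; field_simp
        have e2 : (r-1)*u = r := by rw [hu]; field_simp
        rw [ENNReal.mul_rpow_of_nonneg _ _ hu0.le, ← ENNReal.rpow_mul, ← ENNReal.rpow_mul,
          e1, e2, ENNReal.rpow_one]
      have hgr : ∀ x, (w x ^ ((1:ℝ)/r)) ^ r = w x := by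
        intro x
        rw [← ENNReal.rpow_mul, one_div, inv_mul_cancel₀ hr0.ne', ENNReal.rpow_one]
      calc ∫⁻ x in S n ∩ Ioi y, H x
          = ∫⁻ x in S n ∩ Ioi y,
            (w x ^ (1-(1:ℝ)/r) * F x ^ (r-1)) * w x ^ ((1:ℝ)/r) :=
            lintegral_congr fun x => hfg x
        _ ≤ (∫⁻ x in S n ∩ Ioi y, (w x ^ (1-(1:ℝ)/r) * F x ^ (r-1)) ^ u) ^ (1/u) *
            (∫⁻ x in S n ∩ Ioi y, (w x ^ ((1:ℝ)/r)) ^ r) ^ (1/r) := key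
        _ = (∫⁻ x in S n ∩ Ioi y, w x * F x ^ r) ^ (1/u) *
            (∫⁻ x in S n ∩ Ioi y, w x) ^ (1/r) := by
            rw [lintegral_congr hfu, lintegral_congr hgr]
        _ ≤ I n ^ (1/u) * W y ^ (1/r) :=
            mul_le_mul' (ENNReal.rpow_le_rpow hIy (by positivity))
              (ENNReal.rpow_le_rpow hWy (by positivity))
        _ = I n ^ (1 - 1/r) * W y ^ (1/r) := by rw [hu_inv]
  -- combine: I n ≤ I n ^ (1-1/r) * D
  have bound : ∀ n : ℕ, I n ≤ I n ^ (1 - 1/r) * D := by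
    intro n
    have hItop : I n ≠ ⊤ := hfin n
    have hc_top : I n ^ (1 - 1/r) ≠ ⊤ :=
      ENNReal.rpow_ne_top_of_nonneg (by rw [sub_nonneg, div_le_one hr0]; exact hr) hItop
    calc I n = ∫⁻ y in Ioi (0:ℝ), (∫⁻ x in S n ∩ Ioi y, H x) * Φ y := swap n
      _ ≤ ∫⁻ y in Ioi (0:ℝ), I n ^ (1 - 1/r) * (Φ y * W y ^ (1/r)) := by
          apply lintegral_mono_ae
          filter_upwards [ae_restrict_mem measurableSet_Ioi] with y hy
          calc (∫⁻ x in S n ∩ Ioi y, H x) * Φ y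
              ≤ (I n ^ (1 - 1/r) * W y ^ (1/r)) * Φ y := by
                gcongr; exact holder n y hy
            _ = I n ^ (1 - 1/r) * (Φ y * W y ^ (1/r)) := by ring
      _ = I n ^ (1 - 1/r) * D := lintegral_const_mul' _ _ hc_top
  have absorb : ∀ n : ℕ, I n ≤ D ^ r := by
    intro n
    by_cases h0 : I n = 0
    · rw [h0]; exact zero_le
    have hItop : I n ≠ ⊤ := hfin n
    have hsplit : I n = I n ^ (1 - 1/r) * I n ^ ((1:ℝ)/r) := by
      rw [← ENNReal.rpow_add _ _ h0 hItop, sub_add_cancel, ENNReal.rpow_one]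
    have hle : I n ^ (1 - 1/r) * I n ^ ((1:ℝ)/r) ≤ I n ^ (1 - 1/r) * D := by
      rw [← hsplit]; exact bound n
    have hc0 : I n ^ (1 - 1/r) ≠ 0 :=
      (ENNReal.rpow_pos (pos_iff_ne_zero.mpr h0) hItop).ne'
    have hc_top : I n ^ (1 - 1/r) ≠ ⊤ :=
      ENNReal.rpow_ne_top_of_nonneg (by rw [sub_nonneg, div_le_one hr0]; exact hr) hItop
    have h2 : I n ^ ((1:ℝ)/r) ≤ D := (ENNReal.mul_le_mul_iff_right hc0 hc_top).mp hle
    calc I n = (I n ^ ((1:ℝ)/r)) ^ r := by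
          rw [← ENNReal.rpow_mul, one_div, inv_mul_cancel₀ hr0.ne', ENNReal.rpow_one]
      _ ≤ D ^ r := ENNReal.rpow_le_rpow h2 hr0.le
  -- supremum step
  have hhm : Measurable fun x => w x * F x ^ r := hwmeas.mul (hFmeas.pow_const _)
  have hSmono : ∀ {n m : ℕ}, n ≤ m → S n ⊆ S m := by
    intro n m hnm
    have hc : (n:ℝ) ≤ m := Nat.cast_le.mpr hnm
    apply Ioo_subset_Ioo
    · exact inv_anti₀ (by positivity) (by linarith)
    · linarith
  have hind : ∀ x : ℝ, (Ioi (0:ℝ)).indicator (fun x => w x * F x ^ r) x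
      = ⨆ n, (S n).indicator (fun x => w x * F x ^ r) x := by
    intro x
    by_cases hx : 0 < x
    · rw [Set.indicator_of_mem (Set.mem_Ioi.mpr hx)]
      obtain ⟨n, hn⟩ := exists_nat_gt (max x x⁻¹)
      have hxn : x ∈ S n := by
        constructor
        · have h1 : x⁻¹ < (n:ℝ) + 1 := (le_max_right _ _).trans_lt (hn.trans (by linarith))
          have := inv_strictAnti₀ (inv_pos.mpr hx) h1
          rwa [inv_inv] at this
        · exact (le_max_left x x⁻¹).trans_lt (hn.trans (by linarith))
      apply le_antisymm
      · exact le_iSup_of_le n (by rw [Set.indicator_of_mem hxn])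
      · exact iSup_le fun n => Set.indicator_le_self _ _ x
    · have hx' : x ∉ Ioi (0:ℝ) := hx
      rw [Set.indicator_of_notMem hx']
      symm
      simp only [ENNReal.iSup_eq_zero]
      intro n
      apply Set.indicator_of_notMem
      intro hxn
      exact hx (lt_trans (by positivity) hxn.1)
  calc ∫⁻ x in Ioi (0:ℝ), w x * F x ^ r
      = ∫⁻ x, (Ioi (0:ℝ)).indicator (fun x => w x * F x ^ r) x :=
        (lintegral_indicator measurableSet_Ioi _).symm
    _ = ∫⁻ x, ⨆ n, (S n).indicator (fun x => w x * F x ^ r) x := lintegral_congr hind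
    _ = ⨆ n, ∫⁻ x, (S n).indicator (fun x => w x * F x ^ r) x := by
        apply lintegral_iSup
        · exact fun n => hhm.indicator measurableSet_Ioo
        · intro n m hnm
          exact Set.indicator_le_indicator_of_subset (hSmono hnm) (fun _ => zero_le)
    _ = ⨆ n, I n := by
        apply iSup_congr; intro n
        exact lintegral_indicator measurableSet_Ioo _
    _ ≤ D ^ r := iSup_le absorb

lemma measAux0 (c : ℝ) {g : ℝ → ℝ} (hg : Measurable g) :
    Measurable fun y : ℝ => ENNReal.ofReal (y ^ c * g y) := by
  apply Measurable.ennreal_ofReal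
  measurability

lemma measAux1 (c : ℝ) : Measurable fun y : ℝ => ENNReal.ofReal (y ^ c) := by
  apply Measurable.ennreal_ofReal
  measurability

lemma measAux (c : ℝ) {g : ℝ → ℝ} (hg : Measurable g) (e : ℝ) :
    Measurable fun y : ℝ => ENNReal.ofReal (y ^ c * g y) ^ e := by
  apply Measurable.pow_const
  apply Measurable.ennreal_ofReal
  measurability


set_option maxHeartbeats 2000000 in
theorem stmt_9 (a b p q p' : ℝ) (hp : 1 < p) (hpq : p ≤ q)
    (hp' : 1/p + 1/p' = 1) (hab : a - 1/p' = b + 1/q) (ha : a < 1/p') :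
    ∃ C : ℝ, 0 < C ∧ ∀ g : ℝ → ℝ, Measurable g → (∀ x, 0 ≤ g x) →
      (∫⁻ x in Set.Ioi (0:ℝ),
          (ENNReal.ofReal (x ^ b) * ∫⁻ y in Set.Ioo (0:ℝ) x, ENNReal.ofReal (g y)) ^ q) ^ (1/q)
      ≤ ENNReal.ofReal C *
        (∫⁻ x in Set.Ioi (0:ℝ),
          (ENNReal.ofReal (x ^ a * g x)) ^ p) ^ (1/p) := by
  -- basic exponent facts
  have hp0 : (0:ℝ) < p := by linarith
  have hq1 : (1:ℝ) < q := lt_of_lt_of_le hp hpq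
  have hq0 : (0:ℝ) < q := by linarith
  have hpinv : 1/p < 1 := by rw [div_lt_one hp0]; exact hp
  have hpinv0 : 0 < 1/p := by positivity
  have h1p' : 1/p' = 1 - 1/p := by linarith
  have hp'inv0 : 0 < 1/p' := by rw [h1p']; linarith
  have hp'0 : 0 < p' := by
    rcases lt_trichotomy p' 0 with h | h | h
    · exfalso; have : 1/p' < 0 := by exact div_neg_of_pos_of_neg one_pos h
      linarith
    · exfalso; rw [h] at hp'inv0; simp at hp'inv0
    · exact h
  have hp'1 : 1 < p' := by
    have h2 : 1/p' < 1 := by rw [h1p']; linarith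
    rwa [div_lt_one hp'0] at h2
  have conj : p.HolderConjugate p' := Real.holderConjugate_iff.mpr ⟨hp, by rw [← one_div, ← one_div]; exact hp'⟩
  set s : ℝ := (1/p' - a)/2 with hsdef
  have hs : 0 < s := by
    have := sub_pos.mpr ha
    positivity
  have hr1 : 1 ≤ q/p := (one_le_div hp0).mpr hpq
  set r : ℝ := q/p with hrdef
  have hr0 : (0:ℝ) < r := by positivity
  have hrq : r * (1/q) = 1/p := by rw [hrdef]; field_simp
  have h1r : 1/r = p/q := by rw [hrdef]; rw [one_div_div]
  -- exponent identities
  have e1 : -((a+s)*p') + 1 = s*p' := by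
    have h2s : 2*s = 1/p' - a := by rw [hsdef]; ring
    have hh : p' * (1/p') = 1 := by field_simp
    nlinarith [hh, h2s]
  have hasp' : -1 < -((a+s)*p') := by nlinarith [mul_pos hs hp'0]
  have hb : b = -(2*s) - 1/q := by
    have h2s : 2*s = 1/p' - a := by rw [hsdef]; ring
    linarith
  have hbeta : b*q + s*q = -(1+s*q) := by
    have hq' : q * (1/q) = 1 := by field_simp
    nlinarith [hb]
  have hbeta1 : b*q + s*q + 1 = -(s*q) := by linarith
  have hβlt : b*q + s*q < -1 := by nlinarith [mul_pos hs hq0]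
  -- the constant
  set c₁ : ℝ := (s*p') ^ (1/p') with hc₁
  have hc₁0 : 0 < c₁ := by positivity
  set k : ℝ := 1/(s*q)^(p/q) with hk
  have hk0 : 0 < k := by positivity
  refine ⟨(1/c₁^q)^(1/q) * k^(1/p), by positivity, ?_⟩
  intro g hg hg0
  set ψ : ℝ → ℝ≥0∞ := fun y => ENNReal.ofReal (y ^ a * g y) ^ p with hψ
  set A : ℝ≥0∞ := ∫⁻ x in Ioi (0:ℝ), ψ x with hA
  have hψmeas : Measurable ψ := measAux a hg p
  by_cases hAtop : A = ⊤
  · have : ENNReal.ofReal ((1/c₁^q)^(1/q) * k^(1/p)) * A ^ (1/p) = ⊤ := by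
      rw [hAtop, ENNReal.top_rpow_of_pos hpinv0, ENNReal.mul_top]
      simp only [ne_eq, ENNReal.ofReal_eq_zero, not_le]
      positivity
    rw [this]; exact le_top
  -- main case
  set Φ : ℝ → ℝ≥0∞ := fun y => ENNReal.ofReal (y ^ (a+s) * g y) ^ p with hΦdef
  have hΦmeas : Measurable Φ := measAux (a+s) hg p
  set F : ℝ → ℝ≥0∞ := fun x => ∫⁻ y in Ioo (0:ℝ) x, Φ y with hF
  -- F bound
  have hFbound : ∀ x : ℝ, 0 < x → F x ≤ ENNReal.ofReal (x^(s*p)) * A := by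
    intro x hx
    have step : ∀ y ∈ Ioo (0:ℝ) x, Φ y ≤ ENNReal.ofReal (x^(s*p)) * ψ y := by
      intro y hy
      have hy0 : (0:ℝ) < y := hy.1
      have key : y ^ (a+s) * g y = (y^a * g y) * y^s := by
        rw [Real.rpow_add hy0]; ring
      rw [hΦdef]
      dsimp only
      rw [key, ENNReal.ofReal_mul (mul_nonneg (Real.rpow_nonneg hy0.le _) (hg0 y)),
        ENNReal.mul_rpow_of_nonneg _ _ hp0.le, mul_comm]
      apply mul_le_mul_left
      rw [ENNReal.ofReal_rpow_of_nonneg (Real.rpow_nonneg hy0.le _) hp0.le,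
        ← Real.rpow_mul hy0.le]
      exact ENNReal.ofReal_le_ofReal
        (Real.rpow_le_rpow hy0.le hy.2.le (by positivity))
    calc F x ≤ ∫⁻ y in Ioo (0:ℝ) x, ENNReal.ofReal (x^(s*p)) * ψ y := by
          apply setLIntegral_mono (hψmeas.const_mul _) step
      _ = ENNReal.ofReal (x^(s*p)) * ∫⁻ y in Ioo (0:ℝ) x, ψ y :=
          lintegral_const_mul _ hψmeas
      _ ≤ ENNReal.ofReal (x^(s*p)) * A := by
          apply mul_le_mul_right
          exact lintegral_mono_set Ioo_subset_Ioi_self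
  -- finiteness hypothesis for `core`
  have hfin : ∀ n : ℕ, (∫⁻ x in Ioo ((n:ℝ)+1)⁻¹ ((n:ℝ)+1),
      ENNReal.ofReal (x ^ (b*q+s*q)) * F x ^ r) ≠ ⊤ := by
    intro n
    have hn0 : (0:ℝ) < (n:ℝ)+1 := by positivity
    have hninv : (0:ℝ) < ((n:ℝ)+1)⁻¹ := by positivity
    set K : ℝ≥0∞ := ENNReal.ofReal ((((n:ℝ)+1)⁻¹) ^ (b*q+s*q)) *
      (ENNReal.ofReal (((n:ℝ)+1)^(s*p)) * A) ^ r with hK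
    have hKtop : K ≠ ⊤ := by
      apply ENNReal.mul_ne_top ENNReal.ofReal_ne_top
      apply ENNReal.rpow_ne_top_of_nonneg hr0.le
      exact ENNReal.mul_ne_top ENNReal.ofReal_ne_top hAtop
    have hbound : ∀ x ∈ Ioo (((n:ℝ)+1)⁻¹) ((n:ℝ)+1),
        ENNReal.ofReal (x ^ (b*q+s*q)) * F x ^ r ≤ K := by
      intro x hx
      have hx0 : 0 < x := lt_trans hninv hx.1
      apply mul_le_mul'
      · exact ENNReal.ofReal_le_ofReal
          (Real.rpow_le_rpow_of_nonpos hninv hx.1.le (by linarith [hβlt]))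
      · apply ENNReal.rpow_le_rpow _ hr0.le
        calc F x ≤ ENNReal.ofReal (x^(s*p)) * A := hFbound x hx0
          _ ≤ ENNReal.ofReal (((n:ℝ)+1)^(s*p)) * A := by
              apply mul_le_mul_left
              exact ENNReal.ofReal_le_ofReal
                (Real.rpow_le_rpow hx0.le hx.2.le (by positivity))
    have hvol : volume (Ioo (((n:ℝ)+1)⁻¹) ((n:ℝ)+1)) ≠ ⊤ := by
      rw [Real.volume_Ioo]; exact ENNReal.ofReal_ne_top
    refine ne_top_of_le_ne_top (ENNReal.mul_ne_top hKtop hvol) ?_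
    refine le_trans (setLIntegral_mono measurable_const hbound) ?_
    rw [setLIntegral_const]
  -- pointwise Hoelder
  have hstep : ∀ x : ℝ, 0 < x →
      (∫⁻ y in Ioo (0:ℝ) x, ENNReal.ofReal (g y))
        ≤ F x ^ (1/p) * ENNReal.ofReal (x ^ (s*p') / (s*p')) ^ (1/p') := by
    intro x hx
    have hcongr : (∫⁻ y in Ioo (0:ℝ) x, ENNReal.ofReal (g y))
        = ∫⁻ y in Ioo (0:ℝ) x,
          ENNReal.ofReal (y^(a+s) * g y) * ENNReal.ofReal (y^(-(a+s))) := by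
      apply setLIntegral_congr_fun_ae measurableSet_Ioo
      filter_upwards with y hy
      rw [← ENNReal.ofReal_mul (mul_nonneg (Real.rpow_nonneg hy.1.le _) (hg0 y))]
      congr 1
      rw [mul_comm (y^(a+s)) (g y), mul_assoc, ← Real.rpow_add hy.1,
        show a + s + -(a + s) = (0:ℝ) from by ring, Real.rpow_zero, mul_one]
    rw [hcongr]
    refine le_trans (ENNReal.lintegral_mul_le_Lp_mul_Lq (volume.restrict (Ioo (0:ℝ) x)) conj
      ((measAux0 (a+s) hg).aemeasurable) ((measAux1 (-(a+s))).aemeasurable)) ?_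
    have hf1 : (∫⁻ y in Ioo (0:ℝ) x, ENNReal.ofReal (y^(a+s) * g y) ^ p) = F x := rfl
    have h2 : (∫⁻ y in Ioo (0:ℝ) x, ENNReal.ofReal (y^(-(a+s))) ^ p')
        = ENNReal.ofReal (x ^ (s*p') / (s*p')) := by
      have hc : (∫⁻ y in Ioo (0:ℝ) x, ENNReal.ofReal (y^(-(a+s))) ^ p')
          = ∫⁻ y in Ioo (0:ℝ) x, ENNReal.ofReal (y^(-((a+s)*p'))) := by
        apply setLIntegral_congr_fun_ae measurableSet_Ioo
        filter_upwards with y hy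
        rw [ENNReal.ofReal_rpow_of_nonneg (Real.rpow_nonneg hy.1.le _) hp'0.le,
          ← Real.rpow_mul hy.1.le]
        ring_nf
      rw [hc, L1' (by linarith [hasp']) hx, e1]
    rw [hf1, h2]
  -- pointwise q-power bound
  have hq_pt : ∀ x : ℝ, 0 < x →
      (ENNReal.ofReal (x ^ b) * ∫⁻ y in Ioo (0:ℝ) x, ENNReal.ofReal (g y)) ^ q
        ≤ ENNReal.ofReal (1/c₁^q) * (ENNReal.ofReal (x ^ (b*q+s*q)) * F x ^ r) := by
    intro x hx
    have h1 : ENNReal.ofReal (x ^ b) * (∫⁻ y in Ioo (0:ℝ) x, ENNReal.ofReal (g y))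
        ≤ ENNReal.ofReal (x ^ b) *
          (F x ^ (1/p) * ENNReal.ofReal (x ^ (s*p') / (s*p')) ^ (1/p')) :=
      mul_le_mul_right (hstep x hx) _
    refine le_trans (ENNReal.rpow_le_rpow h1 hq0.le) (le_of_eq ?_)
    have h2 : ENNReal.ofReal (x ^ (s*p') / (s*p')) ^ (1/p') = ENNReal.ofReal (x^s / c₁) := by
      rw [ENNReal.ofReal_rpow_of_nonneg (by positivity) (by positivity)]
      congr 1
      rw [Real.div_rpow (by positivity) (by positivity), ← Real.rpow_mul hx.le, hc₁]
      congr 2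
      field_simp
    rw [h2]
    rw [ENNReal.mul_rpow_of_nonneg _ _ hq0.le, ENNReal.mul_rpow_of_nonneg _ _ hq0.le,
      ← ENNReal.rpow_mul (F x),
      ENNReal.ofReal_rpow_of_nonneg (Real.rpow_nonneg hx.le _) hq0.le,
      ← Real.rpow_mul hx.le,
      ENNReal.ofReal_rpow_of_nonneg (by positivity) hq0.le,
      Real.div_rpow (by positivity) hc₁0.le, ← Real.rpow_mul hx.le,
      show 1/p*q = r from by rw [hrdef]; field_simp,
      show b*q+s*q = b*q + s*q from rfl]
    rw [Real.rpow_add hx (b*q) (s*q)]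
    rw [div_eq_mul_one_div (x^(s*q)) (c₁^q), ENNReal.ofReal_mul (by positivity),
      ENNReal.ofReal_mul (by positivity)]
    ring
  -- compute the dual integral
  have hD : (∫⁻ y in Ioi (0:ℝ),
      Φ y * ENNReal.ofReal (y ^ ((b*q+s*q)+1) / (-((b*q+s*q)+1))) ^ (1/r))
      = ENNReal.ofReal k * A := by
    have hptw : ∀ᵐ y ∂(volume : Measure ℝ), y ∈ Ioi (0:ℝ) →
        Φ y * ENNReal.ofReal (y ^ ((b*q+s*q)+1) / (-((b*q+s*q)+1))) ^ (1/r)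
          = ENNReal.ofReal k * ψ y := by
      filter_upwards with y hy
      have hy0 : (0:ℝ) < y := hy
      rw [hbeta1, neg_neg,
        ENNReal.ofReal_rpow_of_nonneg (by positivity) (by positivity), h1r,
        Real.div_rpow (Real.rpow_nonneg hy0.le _) (by positivity),
        ← Real.rpow_mul hy0.le,
        show -(s*q)*(p/q) = -(s*p) from by field_simp]
      simp only [hΦdef, hψ]
      rw [ENNReal.ofReal_rpow_of_nonneg (mul_nonneg (Real.rpow_nonneg hy0.le _) (hg0 y)) hp0.le,
        ENNReal.ofReal_rpow_of_nonneg (mul_nonneg (Real.rpow_nonneg hy0.le _) (hg0 y)) hp0.le,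
        ← ENNReal.ofReal_mul
          (Real.rpow_nonneg (mul_nonneg (Real.rpow_nonneg hy0.le _) (hg0 y)) _),
        ← ENNReal.ofReal_mul (by positivity : (0:ℝ) ≤ k)]
      congr 1
      rw [Real.mul_rpow (Real.rpow_nonneg hy0.le _) (hg0 y),
        Real.mul_rpow (Real.rpow_nonneg hy0.le _) (hg0 y),
        ← Real.rpow_mul hy0.le, ← Real.rpow_mul hy0.le]
      have hyy : y^((a+s)*p) * y^(-(s*p)) = y^(a*p) := by
        rw [← Real.rpow_add hy0]; congr 1; ring
      calc (y^((a+s)*p) * g y^p) * (y^(-(s*p)) / (s*q)^(p/q))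
          = (y^((a+s)*p) * y^(-(s*p))) * (g y^p * (1/(s*q)^(p/q))) := by ring
        _ = k * (y^(a*p) * g y^p) := by rw [hyy, hk]; ring
    rw [setLIntegral_congr_fun_ae measurableSet_Ioi hptw,
      lintegral_const_mul' _ _ ENNReal.ofReal_ne_top]
  -- final assembly
  calc (∫⁻ x in Ioi (0:ℝ),
        (ENNReal.ofReal (x ^ b) * ∫⁻ y in Ioo (0:ℝ) x, ENNReal.ofReal (g y)) ^ q) ^ (1/q)
      ≤ (∫⁻ x in Ioi (0:ℝ),
          ENNReal.ofReal (1/c₁^q) * (ENNReal.ofReal (x ^ (b*q+s*q)) * F x ^ r)) ^ (1/q) := by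
        apply ENNReal.rpow_le_rpow _ (by positivity)
        apply lintegral_mono_ae
        filter_upwards [ae_restrict_mem measurableSet_Ioi] with x hx
        exact hq_pt x hx
    _ = (ENNReal.ofReal (1/c₁^q) *
          ∫⁻ x in Ioi (0:ℝ), ENNReal.ofReal (x ^ (b*q+s*q)) * F x ^ r) ^ (1/q) := by
        rw [lintegral_const_mul' _ _ ENNReal.ofReal_ne_top]
    _ ≤ (ENNReal.ofReal (1/c₁^q) *
          (∫⁻ y in Ioi (0:ℝ),
            Φ y * ENNReal.ofReal (y ^ ((b*q+s*q)+1) / (-((b*q+s*q)+1))) ^ (1/r)) ^ r) ^ (1/q) := by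
        apply ENNReal.rpow_le_rpow _ (by positivity)
        apply mul_le_mul_right
        exact core Φ hΦmeas hβlt hr1 hfin
    _ = (ENNReal.ofReal (1/c₁^q) * (ENNReal.ofReal k * A) ^ r) ^ (1/q) := by rw [hD]
    _ = ENNReal.ofReal ((1/c₁^q)^(1/q) * k^(1/p)) * A ^ (1/p) := by
        rw [ENNReal.mul_rpow_of_nonneg _ _ (by positivity : (0:ℝ) ≤ 1/q),
          ENNReal.mul_rpow_of_nonneg _ _ hr0.le,
          ENNReal.mul_rpow_of_nonneg _ _ (by positivity : (0:ℝ) ≤ 1/q),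
          ← ENNReal.rpow_mul (ENNReal.ofReal k), ← ENNReal.rpow_mul A, hrq,
          ENNReal.ofReal_rpow_of_nonneg (by positivity) (by positivity : (0:ℝ) ≤ 1/q),
          ENNReal.ofReal_rpow_of_nonneg hk0.le hpinv0.le,
          ENNReal.ofReal_mul (by positivity : (0:ℝ) ≤ (1/c₁^q)^(1/q))]
        ring
end

section
/- Let a, b ∈ ℝ and 1 < p ≤ q < ∞ with a - 1/p' = b + 1/q and b > -1/q. Then there is a constant C such that for all nonnegative measurable g on (0,∞): (∫_0^∞ (x^b ∫_x^∞ g(y) dy)^q dx)^{1/q} ≤ C (∫_0^∞ (x^a g(x))^p dx)^{1/p}. -/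
open MeasureTheory Set ENNReal

private lemma lint_Ioi_rpow {c r : ℝ} (hc : 0 < c) (hr : r < -1) :
    ∫⁻ y in Set.Ioi c, ENNReal.ofReal (y ^ r) = ENNReal.ofReal (-c ^ (r+1) / (r+1)) := by
  rw [← ofReal_integral_eq_lintegral_ofReal (integrableOn_Ioi_rpow_of_lt hr hc)
      (Filter.Eventually.mono (ae_restrict_mem measurableSet_Ioi)
        (fun y hy => Real.rpow_nonneg (le_of_lt (hc.trans hy)) r)),
    integral_Ioi_rpow_of_lt hr hc]

private lemma lint_Ioo_rpow {y r : ℝ} (hy : 0 < y) (hr : -1 < r) :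
    ∫⁻ x in Set.Ioo (0:ℝ) y, ENNReal.ofReal (x ^ r) = ENNReal.ofReal (y ^ (r+1) / (r+1)) := by
  have h1 : (volume : Measure ℝ).restrict (Set.Ioo (0:ℝ) y)
      = (volume : Measure ℝ).restrict (Set.Ioc (0:ℝ) y) := by
    rw [Measure.restrict_congr_set Ioo_ae_eq_Ioc]
  have hint : IntegrableOn (fun x : ℝ => x ^ r) (Set.Ioc (0:ℝ) y) volume := by
    have := intervalIntegral.intervalIntegrable_rpow' (a := 0) (b := y) hr
    rwa [intervalIntegrable_iff_integrableOn_Ioc_of_le hy.le] at this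
  rw [h1, ← ofReal_integral_eq_lintegral_ofReal hint
      (Filter.Eventually.mono (ae_restrict_mem measurableSet_Ioc)
        (fun x hx => Real.rpow_nonneg (le_of_lt hx.1) r))]
  congr 1
  rw [← intervalIntegral.integral_of_le hy.le, integral_rpow (Or.inl hr),
    Real.zero_rpow (by linarith), sub_zero]

private lemma swap_lemma (w f : ℝ → ℝ≥0∞) (hw : Measurable w) (hf : Measurable f) :
    ∫⁻ x in Set.Ioi (0:ℝ), w x * ∫⁻ y in Set.Ioi x, f y
      = ∫⁻ y in Set.Ioi (0:ℝ), f y * ∫⁻ x in Set.Ioo 0 y, w x := by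
  have hS : MeasurableSet {q : ℝ × ℝ | q.1 < q.2} :=
    measurableSet_lt measurable_fst measurable_snd
  set k : ℝ → ℝ → ℝ≥0∞ := fun x y =>
    w x * f y * ({q : ℝ × ℝ | q.1 < q.2}.indicator (fun _ => 1) (x, y)) with hk
  have hkm : Measurable (Function.uncurry k) := by
    apply Measurable.mul
    · exact (hw.comp measurable_fst).mul (hf.comp measurable_snd)
    · exact (Measurable.indicator measurable_const hS)
  have h1 : ∫⁻ x in Set.Ioi (0:ℝ), w x * ∫⁻ y in Set.Ioi x, f y
      = ∫⁻ x in Set.Ioi (0:ℝ), ∫⁻ y in Set.Ioi (0:ℝ), k x y := by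
    refine setLIntegral_congr_fun_ae measurableSet_Ioi (Filter.Eventually.of_forall ?_)
    intro x hx
    have : ∀ y : ℝ, k x y = w x * (Set.Ioi x).indicator f y := by
      intro y
      by_cases hy : x < y
      · simp [hk, Set.indicator_of_mem, hy, Set.mem_Ioi.mpr hy, mul_assoc]
      · simp [hk, Set.indicator_of_notMem, hy, fun h => hy (Set.mem_Ioi.mp h)]
    simp only [this]
    rw [lintegral_const_mul'' _ ((hf.indicator measurableSet_Ioi).aemeasurable)]
    congr 1
    rw [lintegral_indicator measurableSet_Ioi, Measure.restrict_restrict measurableSet_Ioi,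
      Set.inter_eq_left.mpr (Set.Ioi_subset_Ioi (le_of_lt (Set.mem_Ioi.mp hx)))]
  have h2 : ∫⁻ y in Set.Ioi (0:ℝ), f y * ∫⁻ x in Set.Ioo 0 y, w x
      = ∫⁻ y in Set.Ioi (0:ℝ), ∫⁻ x in Set.Ioi (0:ℝ), k x y := by
    refine setLIntegral_congr_fun_ae measurableSet_Ioi (Filter.Eventually.of_forall ?_)
    intro y hy
    have : ∀ x : ℝ, k x y = f y * (Set.Iio y).indicator w x := by
      intro x
      by_cases hxy : x < y
      · simp only [hk, Set.indicator_of_mem (Set.mem_Iio.mpr hxy),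
          Set.indicator_of_mem (show (x, y) ∈ {q : ℝ × ℝ | q.1 < q.2} from hxy)]
        ring
      · simp [hk, Set.indicator_of_notMem, hxy, fun h => hxy (Set.mem_Iio.mp h)]
    simp only [this]
    rw [lintegral_const_mul'' _ ((hw.indicator measurableSet_Iio).aemeasurable)]
    congr 1
    rw [lintegral_indicator measurableSet_Iio, Measure.restrict_restrict measurableSet_Iio,
      Set.inter_comm, Set.Ioi_inter_Iio]
  rw [h1, h2, lintegral_lintegral_swap hkm.aemeasurable]

private lemma holder_tail {p p' : ℝ} (a' : ℝ) (hpp' : Real.HolderConjugate p p')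
    (ha' : 1 < a' * p')
    (g : ℝ → ℝ) (hg : Measurable g) (hg0 : ∀ y, 0 ≤ g y) {x : ℝ} (hx : 0 < x) :
    ∫⁻ y in Set.Ioi x, ENNReal.ofReal (g y)
      ≤ (∫⁻ y in Set.Ioi x, ENNReal.ofReal (y ^ a' * g y) ^ p) ^ (1/p)
        * ENNReal.ofReal ((x ^ (1 - a' * p') / (a' * p' - 1)) ^ (1/p')) := by
  have hsplit : ∫⁻ y in Set.Ioi x, ENNReal.ofReal (g y)
      = ∫⁻ y in Set.Ioi x,
          ((fun y => ENNReal.ofReal (y ^ a' * g y)) * (fun y => ENNReal.ofReal (y ^ (-a')))) y := by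
    refine setLIntegral_congr_fun_ae measurableSet_Ioi (Filter.Eventually.of_forall ?_)
    intro y hy
    have hy0 : 0 < y := hx.trans hy
    simp only [Pi.mul_apply]
    rw [← ENNReal.ofReal_mul (mul_nonneg (Real.rpow_nonneg hy0.le _) (hg0 y))]
    congr 1
    rw [mul_comm (y ^ a') (g y), mul_assoc, ← Real.rpow_add hy0, add_neg_cancel,
      Real.rpow_zero, mul_one]
  rw [hsplit]
  have m1 : Measurable fun y : ℝ => ENNReal.ofReal (y ^ a' * g y) :=
    ((measurable_id.pow_const a').mul hg).ennreal_ofReal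
  have m2 : Measurable fun y : ℝ => ENNReal.ofReal (y ^ (-a')) :=
    (measurable_id.pow_const (-a')).ennreal_ofReal
  refine le_trans (ENNReal.lintegral_mul_le_Lp_mul_Lq _ hpp'
    m1.aemeasurable m2.aemeasurable) ?_
  beta_reduce
  refine mul_le_mul_right (le_of_eq ?_) _
  have hcongr : ∫⁻ y in Set.Ioi x, ENNReal.ofReal (y ^ (-a')) ^ p'
      = ∫⁻ y in Set.Ioi x, ENNReal.ofReal (y ^ (-(a' * p'))) := by
    refine setLIntegral_congr_fun_ae measurableSet_Ioi (Filter.Eventually.of_forall ?_)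
    intro y hy
    have hy0 : 0 < y := hx.trans hy
    rw [ENNReal.ofReal_rpow_of_pos (Real.rpow_pos_of_pos hy0 _), ← Real.rpow_mul hy0.le,
      neg_mul]
  rw [hcongr, lint_Ioi_rpow hx (by linarith), ← ENNReal.ofReal_rpow_of_nonneg
      (div_nonneg (Real.rpow_nonneg hx.le _) (by linarith))
      (div_nonneg zero_le_one hpp'.symm.pos.le)]
  congr 2
  rw [neg_add_eq_sub, neg_div, ← div_neg, neg_sub]

private lemma holder_tail' {p p' : ℝ} (a' : ℝ) (hpp' : Real.HolderConjugate p p')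
    (ha' : 1 < a' * p')
    (g : ℝ → ℝ) (hg : Measurable g) (hg0 : ∀ y, 0 ≤ g y) {x : ℝ} (hx : 0 < x) :
    ∫⁻ y in Set.Ioi x, ENNReal.ofReal (g y)
      ≤ (∫⁻ y in Set.Ioi x, ENNReal.ofReal (y ^ a' * g y) ^ p) ^ (1/p)
        * ENNReal.ofReal ((a' * p' - 1) ^ (-(1/p')) * x ^ (1/p' - a')) := by
  refine (holder_tail a' hpp' ha' g hg hg0 hx).trans (le_of_eq ?_)
  have hp'0 : p' ≠ 0 := hpp'.symm.pos.ne'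
  congr 1
  congr 1
  rw [Real.div_rpow (Real.rpow_nonneg hx.le _) (by linarith), ← Real.rpow_mul hx.le,
    div_eq_mul_inv, ← Real.rpow_neg (by linarith : (0:ℝ) ≤ a' * p' - 1), mul_comm]
  congr 1
  field_simp

theorem stmt_10 (a b p q p' : ℝ) (hp : 1 < p) (hpq : p ≤ q)
    (hp' : 1/p + 1/p' = 1) (hab : a - 1/p' = b + 1/q) (hb : b > -(1/q)) :
    ∃ C : ℝ, 0 < C ∧ ∀ g : ℝ → ℝ, Measurable g → (∀ x, 0 ≤ g x) →
      (∫⁻ x in Set.Ioi (0:ℝ),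
          (ENNReal.ofReal (x ^ b) * ∫⁻ y in Set.Ioi x, ENNReal.ofReal (g y)) ^ q) ^ (1/q)
      ≤ ENNReal.ofReal C *
        (∫⁻ x in Set.Ioi (0:ℝ),
          (ENNReal.ofReal (x ^ a * g x)) ^ p) ^ (1/p) := by
  have hppos : 0 < p := by linarith
  have hq1 : 1 < q := lt_of_lt_of_le hp hpq
  have hqpos : 0 < q := by linarith
  have hpp' : Real.HolderConjugate p p' := Real.holderConjugate_iff.mpr ⟨hp, by rw [← one_div, ← one_div]; exact hp'⟩
  have hp'1 : 1 < p' := hpp'.symm.lt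
  have hp'pos : 0 < p' := by linarith
  set σ := a - 1/p' with hσdef
  have hσ : 0 < σ := by rw [hab]; have := hb; linarith
  set ε := σ/2 with hεdef
  have hε : 0 < ε := by rw [hεdef]; linarith
  have hεσ : σ - ε = ε := by rw [hεdef]; ring
  have hσp' : σ * p' = a * p' - 1 := by rw [hσdef]; field_simp
  have hap' : 1 < a * p' := by nlinarith [mul_pos hσ hp'pos]
  have haε : 1 < (a - ε) * p' := by
    have h1 : (a - ε) * p' = a * p' - ε * p' := by ring
    nlinarith [mul_pos hε hp'pos, mul_pos hσ hp'pos, hεσ]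
  set d₁ := (a * p' - 1) ^ (-(1/p')) with hd₁def
  set d₂ := ((a - ε) * p' - 1) ^ (-(1/p')) with hd₂def
  have hd₁ : 0 < d₁ := Real.rpow_pos_of_pos (by linarith) _
  have hd₂ : 0 < d₂ := Real.rpow_pos_of_pos (by linarith) _
  set C₀ := (d₁ ^ (q - p) * (d₂ ^ p * (ε * p)⁻¹)) ^ (1/q) with hC₀def
  have hC₀ : 0 < C₀ := by rw [hC₀def]; positivity
  refine ⟨C₀, hC₀, ?_⟩
  intro g hgm hg0
  set F : ℝ → ℝ≥0∞ := fun x => ∫⁻ y in Set.Ioi x, ENNReal.ofReal (g y) with hFdef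
  have hFeq : ∀ x : ℝ, (∫⁻ y in Set.Ioi x, ENNReal.ofReal (g y)) = F x := fun _ => rfl
  simp only [hFeq]
  set Ap := ∫⁻ x in Set.Ioi (0:ℝ), (ENNReal.ofReal (x ^ a * g x)) ^ p with hApdef
  set A := Ap ^ (1/p) with hAdef
  -- pointwise bound
  have hFb : ∀ x : ℝ, 0 < x → F x ≤ A * ENNReal.ofReal (d₁ * x ^ (-σ)) := by
    intro x hx
    refine le_trans (holder_tail' a hpp' hap' g hgm hg0 hx) ?_
    have h1 : (∫⁻ y in Set.Ioi x, ENNReal.ofReal (y ^ a * g y) ^ p) ^ (1/p) ≤ A := by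
      refine ENNReal.rpow_le_rpow ?_ (by positivity)
      exact lintegral_mono_set (Set.Ioi_subset_Ioi hx.le)
    have h2 : 1/p' - a = -σ := by rw [hσdef]; ring
    rw [h2, ← hd₁def]
    exact mul_le_mul_left h1 _
  by_cases hAtop : A = ⊤
  · rw [hAtop, ENNReal.mul_top (ENNReal.ofReal_pos.mpr hC₀).ne']
    exact le_top
  by_cases hA0 : A = 0
  · have hz : ∫⁻ x in Set.Ioi (0:ℝ), (ENNReal.ofReal (x ^ b) * F x) ^ q = 0 := by
      rw [show (0:ℝ≥0∞) = ∫⁻ _ in Set.Ioi (0:ℝ), 0 from (lintegral_zero).symm]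
      refine setLIntegral_congr_fun_ae measurableSet_Ioi (Filter.Eventually.of_forall ?_)
      intro x hx
      have : F x = 0 := le_antisymm (by simpa [hA0] using hFb x hx) zero_le
      rw [this, mul_zero, ENNReal.zero_rpow_of_pos hqpos]
    rw [hz, ENNReal.zero_rpow_of_pos (by positivity)]
    exact zero_le
  -- step B : reduce power q to power p
  have key1 : ∀ x : ℝ, 0 < x →
      ENNReal.ofReal (x ^ b) ^ q * ENNReal.ofReal (d₁ * x ^ (-σ)) ^ (q - p)
        = ENNReal.ofReal (d₁ ^ (q - p)) * ENNReal.ofReal (x ^ (σ * p - 1)) := by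
    intro x hx
    rw [ENNReal.ofReal_rpow_of_pos (Real.rpow_pos_of_pos hx b),
      ENNReal.ofReal_rpow_of_pos (show (0:ℝ) < d₁ * x ^ (-σ) by positivity),
      ← ENNReal.ofReal_mul (by positivity), ← ENNReal.ofReal_mul (by positivity)]
    congr 1
    rw [Real.mul_rpow hd₁.le (Real.rpow_nonneg hx.le _), ← Real.rpow_mul hx.le,
      ← Real.rpow_mul hx.le,
      show x ^ (b * q) * (d₁ ^ (q - p) * x ^ (-σ * (q - p)))
        = d₁ ^ (q - p) * (x ^ (b * q) * x ^ (-σ * (q - p))) from by ring,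
      ← Real.rpow_add hx]
    congr 2
    have hσb : σ = b + 1/q := hab
    rw [hσb]
    field_simp
    ring
  have hKne : A ^ (q - p) * ENNReal.ofReal (d₁ ^ (q - p)) ≠ ⊤ :=
    ENNReal.mul_ne_top (ENNReal.rpow_ne_top_of_nonneg (by linarith) hAtop) ENNReal.ofReal_ne_top
  have hstepB : ∫⁻ x in Set.Ioi (0:ℝ), (ENNReal.ofReal (x ^ b) * F x) ^ q
      ≤ A ^ (q - p) * ENNReal.ofReal (d₁ ^ (q - p)) *
        ∫⁻ x in Set.Ioi (0:ℝ), ENNReal.ofReal (x ^ (σ * p - 1)) * F x ^ p := by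
    rw [← lintegral_const_mul' _ _ hKne]
    refine lintegral_mono_ae ((ae_restrict_mem measurableSet_Ioi).mono ?_)
    intro x hx
    have hx0 : (0:ℝ) < x := hx
    calc (ENNReal.ofReal (x ^ b) * F x) ^ q
        = ENNReal.ofReal (x ^ b) ^ q * (F x ^ (q - p) * F x ^ p) := by
          rw [ENNReal.mul_rpow_of_nonneg _ _ hqpos.le,
            ← ENNReal.rpow_add_of_nonneg (q - p) p (by linarith) hppos.le, sub_add_cancel]
      _ ≤ ENNReal.ofReal (x ^ b) ^ q *
            ((A * ENNReal.ofReal (d₁ * x ^ (-σ))) ^ (q - p) * F x ^ p) := by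
          exact mul_le_mul_right
            (mul_le_mul_left (ENNReal.rpow_le_rpow (hFb x hx0) (by linarith)) _) _
      _ = A ^ (q - p) *
            (ENNReal.ofReal (x ^ b) ^ q * ENNReal.ofReal (d₁ * x ^ (-σ)) ^ (q - p)) *
            F x ^ p := by
          rw [ENNReal.mul_rpow_of_nonneg _ _ (by linarith : (0:ℝ) ≤ q - p)]
          ring
      _ = A ^ (q - p) * ENNReal.ofReal (d₁ ^ (q - p)) *
            (ENNReal.ofReal (x ^ (σ * p - 1)) * F x ^ p) := by
          rw [key1 x hx0]; ring
  -- step C : Hardy with equal exponents p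
  set G : ℝ → ℝ≥0∞ := fun x => ∫⁻ y in Set.Ioi x, ENNReal.ofReal (y ^ (a - ε) * g y) ^ p
    with hGdef
  have hstepC : ∫⁻ x in Set.Ioi (0:ℝ), ENNReal.ofReal (x ^ (σ * p - 1)) * F x ^ p
      ≤ ENNReal.ofReal (d₂ ^ p) *
        ∫⁻ x in Set.Ioi (0:ℝ), ENNReal.ofReal (x ^ (ε * p - 1)) * G x := by
    rw [← lintegral_const_mul' _ _ ENNReal.ofReal_ne_top]
    refine lintegral_mono_ae ((ae_restrict_mem measurableSet_Ioi).mono ?_)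
    intro x hx
    have hx0 : (0:ℝ) < x := hx
    have hF2 : F x ^ p ≤ G x * ENNReal.ofReal ((d₂ * x ^ (-(σ - ε))) ^ p) := by
      have h1 := holder_tail' (a - ε) hpp' haε g hgm hg0 hx0
      have h2 : 1/p' - (a - ε) = -(σ - ε) := by rw [hσdef]; ring
      rw [h2, ← hd₂def] at h1
      calc F x ^ p ≤ ((G x) ^ (1/p) * ENNReal.ofReal (d₂ * x ^ (-(σ - ε)))) ^ p :=
            ENNReal.rpow_le_rpow h1 hppos.le
        _ = G x * ENNReal.ofReal ((d₂ * x ^ (-(σ - ε))) ^ p) := by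
            rw [ENNReal.mul_rpow_of_nonneg _ _ hppos.le, ← ENNReal.rpow_mul,
              one_div_mul_cancel hppos.ne', ENNReal.rpow_one,
              ENNReal.ofReal_rpow_of_pos (by positivity)]
    calc ENNReal.ofReal (x ^ (σ * p - 1)) * F x ^ p
        ≤ ENNReal.ofReal (x ^ (σ * p - 1)) *
            (G x * ENNReal.ofReal ((d₂ * x ^ (-(σ - ε))) ^ p)) := mul_le_mul_right hF2 _
      _ = ENNReal.ofReal (x ^ (σ * p - 1) * (d₂ * x ^ (-(σ - ε))) ^ p) * G x := by
          rw [ENNReal.ofReal_mul (by positivity)]; ring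
      _ = ENNReal.ofReal (d₂ ^ p) * (ENNReal.ofReal (x ^ (ε * p - 1)) * G x) := by
          rw [show x ^ (σ * p - 1) * (d₂ * x ^ (-(σ - ε))) ^ p
              = d₂ ^ p * x ^ (ε * p - 1) from ?_,
            ENNReal.ofReal_mul (by positivity)]
          · ring
          · rw [Real.mul_rpow hd₂.le (Real.rpow_nonneg hx0.le _), ← Real.rpow_mul hx0.le,
              show x ^ (σ * p - 1) * (d₂ ^ p * x ^ (-(σ - ε) * p))
                = d₂ ^ p * (x ^ (σ * p - 1) * x ^ (-(σ - ε) * p)) from by ring,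
              ← Real.rpow_add hx0]
            congr 2
            ring
  -- Tonelli swap
  have hwmeas : Measurable (fun x : ℝ => ENNReal.ofReal (x ^ (ε * p - 1))) :=
    (measurable_id.pow_const _).ennreal_ofReal
  have hfmeas : Measurable (fun y : ℝ => ENNReal.ofReal (y ^ (a - ε) * g y) ^ p) :=
    (((measurable_id.pow_const _).mul hgm).ennreal_ofReal).pow_const _
  have hswap : ∫⁻ x in Set.Ioi (0:ℝ), ENNReal.ofReal (x ^ (ε * p - 1)) * G x
      = ∫⁻ y in Set.Ioi (0:ℝ), ENNReal.ofReal (y ^ (a - ε) * g y) ^ p *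
          ∫⁻ x in Set.Ioo (0:ℝ) y, ENNReal.ofReal (x ^ (ε * p - 1)) :=
    swap_lemma _ _ hwmeas hfmeas
  have hinner : ∫⁻ y in Set.Ioi (0:ℝ), ENNReal.ofReal (y ^ (a - ε) * g y) ^ p *
          ∫⁻ x in Set.Ioo (0:ℝ) y, ENNReal.ofReal (x ^ (ε * p - 1))
      = ENNReal.ofReal ((ε * p)⁻¹) * Ap := by
    rw [hApdef, ← lintegral_const_mul' _ _ ENNReal.ofReal_ne_top]
    refine setLIntegral_congr_fun_ae measurableSet_Ioi (Filter.Eventually.of_forall ?_)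
    intro y hy
    have hy0 : (0:ℝ) < y := hy
    rw [lint_Ioo_rpow hy0 (by nlinarith), show ε * p - 1 + 1 = ε * p from by ring,
      ENNReal.ofReal_rpow_of_nonneg (mul_nonneg (Real.rpow_nonneg hy0.le _) (hg0 y)) hppos.le,
      ENNReal.ofReal_rpow_of_nonneg (mul_nonneg (Real.rpow_nonneg hy0.le _) (hg0 y)) hppos.le,
      ← ENNReal.ofReal_mul
        (Real.rpow_nonneg (mul_nonneg (Real.rpow_nonneg hy0.le _) (hg0 y)) p),
      ← ENNReal.ofReal_mul (by positivity)]
    congr 1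
    have hy2 : y ^ ((a - ε) * p) * y ^ (ε * p) = y ^ (a * p) := by
      rw [← Real.rpow_add hy0]; congr 1; ring
    rw [Real.mul_rpow (Real.rpow_nonneg hy0.le _) (hg0 y),
      Real.mul_rpow (Real.rpow_nonneg hy0.le _) (hg0 y),
      ← Real.rpow_mul hy0.le, ← Real.rpow_mul hy0.le, ← hy2, div_eq_mul_inv]
    ring
  -- assemble
  have main : ∫⁻ x in Set.Ioi (0:ℝ), (ENNReal.ofReal (x ^ b) * F x) ^ q
      ≤ A ^ (q - p) * ENNReal.ofReal (d₁ ^ (q - p)) *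
        (ENNReal.ofReal (d₂ ^ p) * (ENNReal.ofReal ((ε * p)⁻¹) * Ap)) := by
    refine hstepB.trans (mul_le_mul_right ?_ _)
    refine hstepC.trans (le_of_eq ?_)
    rw [hswap, hinner]
  refine le_trans (ENNReal.rpow_le_rpow main (by positivity)) (le_of_eq ?_)
  have hcollect : A ^ (q - p) * ENNReal.ofReal (d₁ ^ (q - p)) *
        (ENNReal.ofReal (d₂ ^ p) * (ENNReal.ofReal ((ε * p)⁻¹) * Ap))
      = A ^ (q - p) * Ap * ENNReal.ofReal (d₁ ^ (q - p) * (d₂ ^ p * (ε * p)⁻¹)) := by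
    rw [ENNReal.ofReal_mul (by positivity), ENNReal.ofReal_mul (by positivity)]
    ring
  rw [hcollect, ENNReal.mul_rpow_of_nonneg _ _ (by positivity : (0:ℝ) ≤ 1/q),
    ENNReal.mul_rpow_of_nonneg _ _ (by positivity : (0:ℝ) ≤ 1/q),
    ENNReal.ofReal_rpow_of_nonneg (by positivity) (by positivity), ← hC₀def]
  have hApA : Ap ^ (1/q) = A ^ (p * (1/q)) := by
    rw [hAdef, ← ENNReal.rpow_mul, show 1/p * (p * (1/q)) = 1/q from by field_simp]
  rw [hApA, ← ENNReal.rpow_mul, ← ENNReal.rpow_add _ _ hA0 hAtop,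
    show (q - p) * (1/q) + p * (1/q) = 1 from by field_simp; ring, ENNReal.rpow_one]
  ring
end

section
/- Let -1 < γ < 0. Define L(x,z) = ((1-|x-z|)(x+z-1)/(x+z-|x-z|))^γ for x, z > 0 with |x-z| < 1 and x+z > 1, and L(x,z) = 0 otherwise. Then there is a constant C, depending only on γ, such that ∫_0^∞ L(x,z) dz ≤ C for every x > 0. -/
open MeasureTheory Set
open scoped ENNReal NNReal

private lemma J_lt_top (γ : ℝ) (hγ₁ : -1 < γ) :
    (∫⁻ u in Set.Ioo (0:ℝ) 2, ENNReal.ofReal (u ^ γ)) < ⊤ := by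
  have h : IntervalIntegrable (fun u : ℝ => u ^ γ) volume 0 2 :=
    intervalIntegral.intervalIntegrable_rpow' hγ₁
  have h2 : IntegrableOn (fun u : ℝ => u ^ γ) (Set.Ioo (0:ℝ) 2) volume :=
    ((intervalIntegrable_iff_integrableOn_Ioc_of_le (by norm_num)).1 h).mono_set
      Ioo_subset_Ioc_self
  exact h2.lintegral_lt_top

private lemma shift_eq (γ c : ℝ) :
    (∫⁻ z in Set.Ioo c (c + 2), ENNReal.ofReal ((z - c) ^ γ))
      = ∫⁻ u in Set.Ioo (0:ℝ) 2, ENNReal.ofReal (u ^ γ) := by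
  have := (measurePreserving_add_right (volume : Measure ℝ) c).setLIntegral_comp_preimage_emb
    (measurableEmbedding_addRight c) (fun z => ENNReal.ofReal ((z - c) ^ γ)) (Set.Ioo c (c+2))
  rw [← this]
  simp [preimage_add_const_Ioo]

private lemma reflect_eq (γ d : ℝ) :
    (∫⁻ z in Set.Ioo (d - 2) d, ENNReal.ofReal ((d - z) ^ γ))
      = ∫⁻ u in Set.Ioo (0:ℝ) 2, ENNReal.ofReal (u ^ γ) := by
  have h := (MeasureTheory.Measure.measurePreserving_sub_left (volume : Measure ℝ)
      d).setLIntegral_comp_preimage_emb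
    (MeasurableEquiv.subLeft d).measurableEmbedding (fun z => ENNReal.ofReal ((d - z) ^ γ))
    (Set.Ioo (d-2) d)
  rw [← h]
  have hs : (fun x : ℝ => d - x) ⁻¹' Set.Ioo (d-2) d = Set.Ioo 0 2 := by
    ext u
    simp only [Set.mem_preimage, Set.mem_Ioo]
    constructor <;> intro h <;> exact ⟨by linarith [h.1, h.2], by linarith [h.1, h.2]⟩
  rw [hs]
  refine setLIntegral_congr_fun measurableSet_Ioo (fun u _ => ?_)
  norm_num

theorem stmt_11 (γ : ℝ) (hγ₁ : -1 < γ) (hγ₂ : γ < 0) :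
    ∃ C : ℝ, 0 < C ∧ ∀ x : ℝ, 0 < x →
      (∫⁻ z in Set.Ioi (0:ℝ),
        ENNReal.ofReal (if |x - z| < 1 ∧ 1 < x + z then
          ((1 - |x - z|) * (x + z - 1) / (x + z - |x - z|)) ^ γ else 0))
      ≤ ENNReal.ofReal C := by
  set J : ℝ≥0∞ := ∫⁻ u in Set.Ioo (0:ℝ) 2, ENNReal.ofReal (u ^ γ) with hJdef
  have hJ : J ≠ ⊤ := (J_lt_top γ hγ₁).ne
  set T : ℝ≥0∞ := ENNReal.ofReal (2 ^ (-γ)) * ((J + J + 2) + J) with hTdef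
  have hT : T ≠ ⊤ := by
    apply ENNReal.mul_ne_top ENNReal.ofReal_ne_top
    finiteness
  refine ⟨T.toReal + 1, by positivity, fun x hx => ?_⟩
  have hTC : T ≤ ENNReal.ofReal (T.toReal + 1) := by
    conv_lhs => rw [← ENNReal.ofReal_toReal hT]
    exact ENNReal.ofReal_le_ofReal (by linarith)
  refine le_trans ?_ hTC
  -- the dominating function
  set g : ℝ → ℝ≥0∞ := fun z => ENNReal.ofReal (2 ^ (-γ)) *
    ((Set.Ioo (x-1) (x+1)).indicator
        (fun z => ENNReal.ofReal ((z - (x-1)) ^ γ) + ENNReal.ofReal (((x+1) - z) ^ γ) + 1) z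
      + (Set.Ioo (1-x) (3-x)).indicator (fun z => ENNReal.ofReal ((z - (1-x)) ^ γ)) z) with hgdef
  have hpt : ∀ z : ℝ,
      ENNReal.ofReal (if |x - z| < 1 ∧ 1 < x + z then
        ((1 - |x - z|) * (x + z - 1) / (x + z - |x - z|)) ^ γ else 0) ≤ g z := by
    intro z
    by_cases h : |x - z| < 1 ∧ 1 < x + z
    · simp only [if_pos h]
      set a : ℝ := 1 - |x - z| with ha_def
      set b : ℝ := x + z - 1 with hb_def
      have ha : 0 < a := by simp [ha_def]; linarith [h.1]
      have hb : 0 < b := by simp [hb_def]; linarith [h.2]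
      have hden : x + z - |x - z| = a + b := by rw [ha_def, hb_def]; ring
      have hz1 : x - 1 < z := by cases' abs_lt.1 h.1 with h1 h2; linarith
      have hz2 : z < x + 1 := by cases' abs_lt.1 h.1 with h1 h2; linarith
      have hzmem : z ∈ Set.Ioo (x-1) (x+1) := ⟨hz1, hz2⟩
      -- step 1: min a b / 2 ≤ a*b/(a+b)
      have hmin : min a b / 2 ≤ a * b / (a + b) := by
        rcases le_total a b with hab | hab
        · rw [min_eq_left hab, div_le_div_iff₀ (by norm_num) (by linarith)]
          nlinarith
        · rw [min_eq_right hab, div_le_div_iff₀ (by norm_num) (by linarith)]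
          nlinarith
      have hminpos : 0 < min a b := lt_min ha hb
      -- step 2
      have hstep2 : (a * b / (a + b)) ^ γ ≤ 2 ^ (-γ) * (min a b) ^ γ := by
        have := Real.rpow_le_rpow_of_nonpos (by positivity) hmin hγ₂.le
        calc (a * b / (a + b)) ^ γ ≤ (min a b / 2) ^ γ := this
          _ = (min a b) ^ γ / 2 ^ γ := Real.div_rpow hminpos.le (by norm_num : (0:ℝ) ≤ 2) γ
          _ = 2 ^ (-γ) * (min a b) ^ γ := by
              rw [Real.rpow_neg (by norm_num)]
              field_simp
      rw [hden]
      refine le_trans (ENNReal.ofReal_le_ofReal hstep2) ?_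
      rw [ENNReal.ofReal_mul (by positivity), hgdef]
      refine mul_le_mul_right ?_ _
      rw [Set.indicator_of_mem hzmem]
      -- bound ofReal ((min a b)^γ)
      rcases le_total a b with hab | hab
      · rw [min_eq_left hab]
        have haeq : a = min (z - (x-1)) ((x+1) - z) := by
          rw [ha_def]
          rcases abs_cases (x - z) with ⟨he, _⟩ | ⟨he, _⟩ <;> rw [he] <;>
            [rw [min_eq_left (by linarith)]; rw [min_eq_right (by linarith)]] <;> ring
        rcases le_total (z - (x-1)) ((x+1) - z) with hpq | hpq
        · rw [haeq, min_eq_left hpq]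
          exact le_add_right (le_add_right (le_add_right le_rfl))
        · rw [haeq, min_eq_right hpq]
          exact le_add_right (le_add_right (le_add_left le_rfl))
      · rw [min_eq_right hab]
        by_cases h3 : x + z < 3
        · refine le_add_left ?_
          have hzmem2 : z ∈ Set.Ioo (1-x) (3-x) := ⟨by linarith [h.2], by linarith⟩
          rw [Set.indicator_of_mem hzmem2]
          have hbz : b = z - (1 - x) := by rw [hb_def]; ring
          rw [hbz]
        · have hb2 : (1:ℝ) ≤ b := by rw [hb_def]; linarith
          have : b ^ γ ≤ 1 := by
            calc b ^ γ ≤ 1 ^ γ := Real.rpow_le_rpow_of_nonpos one_pos hb2 hγ₂.le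
              _ = 1 := Real.one_rpow γ
          refine le_add_right ?_
          calc ENNReal.ofReal (b ^ γ) ≤ ENNReal.ofReal 1 := ENNReal.ofReal_le_ofReal this
            _ = 1 := ENNReal.ofReal_one
            _ ≤ _ := le_add_self
    · simp [if_neg h]
  calc (∫⁻ z in Set.Ioi (0:ℝ),
        ENNReal.ofReal (if |x - z| < 1 ∧ 1 < x + z then
          ((1 - |x - z|) * (x + z - 1) / (x + z - |x - z|)) ^ γ else 0))
      ≤ ∫⁻ z in Set.Ioi (0:ℝ), g z := lintegral_mono hpt
    _ ≤ ∫⁻ z, g z := setLIntegral_le_lintegral _ _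
    _ = T := by
        rw [hgdef]
        have hm1 : Measurable fun z : ℝ =>
            ENNReal.ofReal ((z - (x-1)) ^ γ) + ENNReal.ofReal (((x+1) - z) ^ γ) + 1 := by
          fun_prop
        have hm2 : Measurable fun z : ℝ => ENNReal.ofReal ((z - (1-x)) ^ γ) := by fun_prop
        rw [lintegral_const_mul _ (by
          exact ((hm1.indicator measurableSet_Ioo).add (hm2.indicator measurableSet_Ioo)))]
        rw [lintegral_add_left (hm1.indicator measurableSet_Ioo),
          lintegral_indicator measurableSet_Ioo _, lintegral_indicator measurableSet_Ioo _]
        have e1 : (∫⁻ z in Set.Ioo (x-1) (x+1),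
            (ENNReal.ofReal ((z - (x-1)) ^ γ) + ENNReal.ofReal (((x+1) - z) ^ γ) + 1))
            = J + J + 2 := by
          rw [lintegral_add_right _ measurable_const,
            lintegral_add_left (by fun_prop)]
          have h1 : (∫⁻ z in Set.Ioo (x-1) (x+1), ENNReal.ofReal ((z - (x-1)) ^ γ)) = J := by
            have : x + 1 = (x - 1) + 2 := by ring
            rw [this, shift_eq]
          have h2 : (∫⁻ z in Set.Ioo (x-1) (x+1), ENNReal.ofReal (((x+1) - z) ^ γ)) = J := by
            have : x - 1 = (x + 1) - 2 := by ring
            rw [this, reflect_eq]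
          have h3 : (∫⁻ _ in Set.Ioo (x-1) (x+1), (1:ℝ≥0∞)) = 2 := by
            rw [setLIntegral_one, Real.volume_Ioo]
            norm_num
          rw [h1, h2, h3]
        have e2 : (∫⁻ z in Set.Ioo (1-x) (3-x), ENNReal.ofReal ((z - (1-x)) ^ γ)) = J := by
          have : (3:ℝ) - x = (1 - x) + 2 := by ring
          rw [this, shift_eq]
        rw [e1, e2, hTdef]
end

section
/- Let α > -1 and -1 < γ < 0. Then there exists C > 0 such that for all F ∈ L²((0,∞), dx): (∫_0^1 (∫_0^y (z/y)^{α+1/2} (y-z)^γ |F(z)| dz)² dy)^{1/2} ≤ C (∫_0^∞ F(z)² dz)^{1/2}. -/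
open MeasureTheory Set ENNReal

lemma my_cov {s : Set ℝ} {f f' : ℝ → ℝ} (hs : MeasurableSet s)
    (hf' : ∀ x ∈ s, HasDerivWithinAt f (f' x) s x) (hf : Set.InjOn f s) (g : ℝ → ℝ≥0∞) :
    ∫⁻ x in f '' s, g x = ∫⁻ x in s, ENNReal.ofReal |f' x| * g (f x) := by
  simpa only [ContinuousLinearMap.det_toSpanSingleton] using
    lintegral_image_eq_lintegral_abs_det_fderiv_mul volume hs
      (fun x hx => (hf' x hx).hasFDerivWithinAt) hf g

lemma my_rpow_fin {p : ℝ} (hp : -1 < p) :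
    ∫⁻ r in Set.Ioo (0:ℝ) 1, ENNReal.ofReal (r ^ p) < ⊤ := by
  have h : IntegrableOn (fun r : ℝ => r ^ p) (Set.Ioo (0:ℝ) 1) := by
    have := (intervalIntegral.intervalIntegrable_rpow' (a := 0) (b := 1) hp).1
    simpa using this.mono_set Set.Ioo_subset_Ioc_self
  have h2 := h.2
  rw [hasFiniteIntegral_iff_norm] at h2
  calc ∫⁻ r in Set.Ioo (0:ℝ) 1, ENNReal.ofReal (r ^ p)
      ≤ ∫⁻ r in Set.Ioo (0:ℝ) 1, ENNReal.ofReal ‖(r:ℝ) ^ p‖ := by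
        exact lintegral_mono fun r => ENNReal.ofReal_le_ofReal (le_abs_self _)
    _ < ⊤ := h2

lemma my_qmeas (α γ : ℝ) : Measurable (fun r : ℝ => ENNReal.ofReal (r ^ α * (1-r) ^ γ)) := by
  fun_prop

lemma my_beta_fin {α γ : ℝ} (hα : -1 < α) (hγ : -1 < γ) :
    ∫⁻ r in Set.Ioo (0:ℝ) 1, ENNReal.ofReal (r ^ α * (1-r) ^ γ) < ⊤ := by
  set M : ℝ := max (max 1 ((2:ℝ)⁻¹ ^ α)) (max 1 ((2:ℝ)⁻¹ ^ γ)) with hM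
  have hM0 : 0 ≤ M := le_trans zero_le_one (le_trans (le_max_left _ _) (le_max_left _ _))
  have key : ∀ r ∈ Set.Ioo (0:ℝ) 1,
      r ^ α * (1-r) ^ γ ≤ M * (r ^ α + (1-r) ^ γ) := by
    intro r hr
    obtain ⟨hr0, hr1⟩ := hr
    have h1r : 0 < 1 - r := by linarith
    have hra : 0 ≤ r ^ α := Real.rpow_nonneg hr0.le _
    have hrg : 0 ≤ (1-r) ^ γ := Real.rpow_nonneg h1r.le _
    rcases le_total r 2⁻¹ with h | h
    · have : (1-r) ^ γ ≤ max 1 ((2:ℝ)⁻¹ ^ γ) := by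
        rcases le_total 0 γ with hg | hg
        · exact le_trans (Real.rpow_le_one h1r.le (by linarith) hg) (le_max_left _ _)
        · exact le_trans (Real.rpow_le_rpow_of_nonpos (by norm_num) (by linarith) hg)
            (le_max_right _ _)
      have hMle : max 1 ((2:ℝ)⁻¹ ^ γ) ≤ M := le_max_right _ _
      nlinarith
    · have : r ^ α ≤ max 1 ((2:ℝ)⁻¹ ^ α) := by
        rcases le_total 0 α with hg | hg
        · exact le_trans (Real.rpow_le_one hr0.le hr1.le hg) (le_max_left _ _)
        · exact le_trans (Real.rpow_le_rpow_of_nonpos (by norm_num) h hg) (le_max_right _ _)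
      have hMle : max 1 ((2:ℝ)⁻¹ ^ α) ≤ M := le_max_left _ _
      nlinarith
  have hrefl : ∫⁻ r in Set.Ioo (0:ℝ) 1, ENNReal.ofReal ((1-r) ^ γ)
      = ∫⁻ r in Set.Ioo (0:ℝ) 1, ENNReal.ofReal (r ^ γ) := by
    have := my_cov (s := Set.Ioo (0:ℝ) 1) (f := fun r => 1 - r) (f' := fun _ => -1)
      measurableSet_Ioo (fun x _ => ((hasDerivWithinAt_const _ _ 1).sub
        (hasDerivWithinAt_id _ _)).congr_deriv (by norm_num))
      (fun a _ b _ h => by dsimp at h; linarith) (fun x => ENNReal.ofReal (x ^ γ))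
    rw [show (fun r : ℝ => 1 - r) '' Set.Ioo 0 1 = Set.Ioo (0:ℝ) 1 by
      rw [show (fun r : ℝ => 1 - r) = (fun r : ℝ => 1 - r) from rfl, Set.image_const_sub_Ioo]
      norm_num] at this
    rw [this]
    simp
  calc ∫⁻ r in Set.Ioo (0:ℝ) 1, ENNReal.ofReal (r ^ α * (1-r) ^ γ)
      ≤ ∫⁻ r in Set.Ioo (0:ℝ) 1, ENNReal.ofReal M * (ENNReal.ofReal (r ^ α) + ENNReal.ofReal ((1-r) ^ γ)) := by
        refine setLIntegral_mono (by fun_prop) fun r hr => ?_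
        rw [← ENNReal.ofReal_add (Real.rpow_nonneg hr.1.le _)
          (Real.rpow_nonneg (by linarith [hr.2] : (0:ℝ) ≤ 1 - r) _), ← ENNReal.ofReal_mul hM0]
        exact ENNReal.ofReal_le_ofReal (key r hr)
    _ = ENNReal.ofReal M * (∫⁻ r in Set.Ioo (0:ℝ) 1, (ENNReal.ofReal (r ^ α) + ENNReal.ofReal ((1-r) ^ γ))) := by
        rw [lintegral_const_mul']; exact ENNReal.ofReal_ne_top
    _ < ⊤ := by
        rw [lintegral_add_left (by fun_prop)]
        refine ENNReal.mul_lt_top ENNReal.ofReal_lt_top ?_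
        rw [hrefl] at *
        exact ENNReal.add_lt_top.2 ⟨my_rpow_fin hα, my_rpow_fin hγ⟩

lemma my_substA {α γ : ℝ} {y : ℝ} (hy : 0 < y) :
    ∫⁻ z in Set.Ioo 0 y, ENNReal.ofReal ((z/y) ^ (α + 1/2) * (y-z) ^ γ * z ^ (-(1/2) : ℝ))
      = ENNReal.ofReal (y ^ (γ + 1/2)) * ∫⁻ r in Set.Ioo (0:ℝ) 1, ENNReal.ofReal (r ^ α * (1-r) ^ γ) := by
  have himg : (fun r : ℝ => y * r) '' Set.Ioo 0 1 = Set.Ioo 0 y := by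
    rw [Set.image_mul_left_Ioo hy]; norm_num
  rw [← himg, my_cov measurableSet_Ioo
    (fun x _ => by simpa using ((hasDerivAt_id x).const_mul y).hasDerivWithinAt)
    (fun a _ b _ h => mul_left_cancel₀ hy.ne' h) _]
  rw [← lintegral_const_mul' _ _ ENNReal.ofReal_ne_top]
  refine setLIntegral_congr_fun measurableSet_Ioo (fun r hr => ?_)
  obtain ⟨hr0, hr1⟩ := hr
  have h1r : (0:ℝ) < 1 - r := by linarith
  rw [abs_of_pos hy, ← ENNReal.ofReal_mul hy.le, ← ENNReal.ofReal_mul (Real.rpow_nonneg hy.le _)]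
  congr 1
  rw [mul_div_cancel_left₀ _ hy.ne', show y - y * r = y * (1-r) by ring,
    Real.mul_rpow hy.le h1r.le, Real.mul_rpow hy.le hr0.le,
    show y ^ (γ + 1/2) = y ^ (1:ℝ) * y ^ γ * y ^ (-(1/2) : ℝ) by
      rw [← Real.rpow_add hy, ← Real.rpow_add hy]; ring_nf,
    show r ^ α = r ^ (α + 1/2) * r ^ (-(1/2) : ℝ) by
      rw [← Real.rpow_add hr0]; ring_nf,
    Real.rpow_one]
  ring

lemma my_substB {α γ : ℝ} {z : ℝ} (hz : 0 < z) (hz1 : z < 1) :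
    ∫⁻ y in Set.Ioo z 1, ENNReal.ofReal (y ^ (-γ - 3/2) * ((z/y) ^ (α + 1/2) * (y-z) ^ γ))
      ≤ ENNReal.ofReal (z ^ (-(1/2) : ℝ)) * ∫⁻ r in Set.Ioo (0:ℝ) 1, ENNReal.ofReal (r ^ α * (1-r) ^ γ) := by
  have hmem : ∀ r ∈ Set.Ioo z 1, z / r ∈ Set.Ioo z 1 := by
    intro r hr
    have hr0 : 0 < r := hz.trans hr.1
    constructor
    · rw [lt_div_iff₀ hr0]; nlinarith [hr.2]
    · rw [div_lt_one hr0]; exact hr.1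
  have himg : (fun r : ℝ => z / r) '' Set.Ioo z 1 = Set.Ioo z 1 := by
    apply Set.Subset.antisymm
    · rintro w ⟨r, hr, rfl⟩; exact hmem r hr
    · intro w hw
      refine ⟨z / w, hmem w hw, ?_⟩
      have hw0 : (0:ℝ) < w := hz.trans hw.1
      field_simp
  have hd : ∀ r ∈ Set.Ioo z 1, HasDerivWithinAt (fun r : ℝ => z / r) (-(z / r^2)) (Set.Ioo z 1) r := by
    intro r hr
    have hrne : r ≠ 0 := (hz.trans hr.1).ne'
    simpa [div_eq_mul_inv, mul_neg] using ((hasDerivAt_inv hrne).const_mul z).hasDerivWithinAt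
  have hinj : Set.InjOn (fun r : ℝ => z / r) (Set.Ioo z 1) := by
    intro a ha b hb h
    have ha0 : a ≠ 0 := (hz.trans ha.1).ne'
    have hb0 : b ≠ 0 := (hz.trans hb.1).ne'
    dsimp at h
    rw [div_eq_div_iff ha0 hb0] at h
    exact mul_left_cancel₀ hz.ne' (by linarith)
  calc ∫⁻ y in Set.Ioo z 1, ENNReal.ofReal (y ^ (-γ - 3/2) * ((z/y) ^ (α + 1/2) * (y-z) ^ γ))
      = ∫⁻ r in Set.Ioo z 1, ENNReal.ofReal |(-(z / r^2))| *
          ENNReal.ofReal ((z/r) ^ (-γ - 3/2) * ((z/(z/r)) ^ (α + 1/2) * (z/r - z) ^ γ)) := by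
        conv_lhs => rw [← himg]
        exact my_cov measurableSet_Ioo hd hinj _
    _ = ∫⁻ r in Set.Ioo z 1, ENNReal.ofReal (z ^ (-(1/2) : ℝ)) * ENNReal.ofReal (r ^ α * (1-r) ^ γ) := by
        refine setLIntegral_congr_fun measurableSet_Ioo (fun r hr => ?_)
        obtain ⟨hrz, hr1⟩ := hr
        have hr0 : (0:ℝ) < r := hz.trans hrz
        have h1r : (0:ℝ) < 1 - r := by linarith
        have hzr : z / (z/r) = r := by field_simp
        have hsub : z/r - z = z * (1-r) / r := by field_simp
        rw [abs_neg, abs_of_pos (by positivity), hzr, hsub,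
          ← ENNReal.ofReal_mul (by positivity), ← ENNReal.ofReal_mul (by positivity)]
        congr 1
        have e1 : (z/r) ^ (-γ - 3/2) = z ^ (-γ - 3/2) * r ^ (γ + 3/2) := by
          rw [Real.div_rpow hz.le hr0.le, div_eq_mul_inv, ← Real.rpow_neg hr0.le]
          ring_nf
        have e2 : (z * (1-r) / r) ^ γ = z ^ γ * (1-r) ^ γ * r ^ (-γ) := by
          rw [Real.div_rpow (by positivity) hr0.le, Real.mul_rpow hz.le h1r.le,
            div_eq_mul_inv, ← Real.rpow_neg hr0.le]
        have e3 : z / r^2 = z ^ (1:ℝ) * r ^ (-2:ℝ) := by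
          rw [Real.rpow_one, div_eq_mul_inv, show ((-2:ℝ)) = -((2:ℕ):ℝ) by norm_num,
            Real.rpow_neg hr0.le, Real.rpow_natCast]
        rw [e1, e2, e3,
          show z ^ (-(1/2):ℝ) = z ^ (1:ℝ) * z ^ (-γ - 3/2) * z ^ γ by
            rw [← Real.rpow_add hz, ← Real.rpow_add hz]; ring_nf,
          show r ^ α = r ^ (-2:ℝ) * r ^ (γ + 3/2) * (r ^ (α + 1/2) * r ^ (-γ)) by
            rw [← Real.rpow_add hr0, ← Real.rpow_add hr0, ← Real.rpow_add hr0]; ring_nf]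
        ring
    _ = ENNReal.ofReal (z ^ (-(1/2) : ℝ)) * ∫⁻ r in Set.Ioo z 1, ENNReal.ofReal (r ^ α * (1-r) ^ γ) := by
        rw [lintegral_const_mul' _ _ ENNReal.ofReal_ne_top]
    _ ≤ ENNReal.ofReal (z ^ (-(1/2) : ℝ)) * ∫⁻ r in Set.Ioo (0:ℝ) 1, ENNReal.ofReal (r ^ α * (1-r) ^ γ) := by
        gcongr

noncomputable def myk (α γ y z : ℝ) : ℝ≥0∞ := ENNReal.ofReal ((z / y) ^ (α + 1/2) * (y - z) ^ γ)
noncomputable def myh (z : ℝ) : ℝ≥0∞ := ENNReal.ofReal (z ^ (-(1/2) : ℝ))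
noncomputable def myh' (z : ℝ) : ℝ≥0∞ := ENNReal.ofReal (z ^ ((1/2) : ℝ))
noncomputable def myg (γ y : ℝ) : ℝ≥0∞ := ENNReal.ofReal (y ^ (-γ - 3/2))

lemma myk_meas (α γ y : ℝ) : Measurable (myk α γ y) := by unfold myk; fun_prop

lemma myhh' {z : ℝ} (hz : 0 < z) : myh z * myh' z = 1 := by
  rw [myh, myh', ← ENNReal.ofReal_mul (Real.rpow_nonneg hz.le _), ← Real.rpow_add hz]
  norm_num

lemma my_ptwise (x u c c' : ℝ≥0∞) (hcc' : c * c' = 1) :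
    x * u = ((x * c) ^ (1/2:ℝ)) * ((x * (u ^ (2:ℝ) * c')) ^ (1/2:ℝ)) := by
  rw [← ENNReal.mul_rpow_of_nonneg _ _ (by norm_num : (0:ℝ) ≤ 1/2),
    show (x*c) * (x * (u ^ (2:ℝ) * c')) = (x*u) ^ (2:ℝ) * (c * c') by
      rw [ENNReal.mul_rpow_of_nonneg _ _ (by norm_num : (0:ℝ) ≤ 2), ENNReal.rpow_two,
        ENNReal.rpow_two]; ring,
    hcc', mul_one, ← ENNReal.rpow_mul]
  norm_num

lemma my_CS (α γ : ℝ) (hγ₁ : -1 < γ) {F : ℝ → ℝ} (hF : Measurable F) {y : ℝ}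
    (hy : y ∈ Set.Ioo (0:ℝ) 1) :
    (∫⁻ z in Set.Ioo 0 y, myk α γ y z * ENNReal.ofReal |F z|) ^ (2:ℝ)
      ≤ (∫⁻ r in Set.Ioo (0:ℝ) 1, ENNReal.ofReal (r ^ α * (1-r) ^ γ)) *
        (myg γ y * ∫⁻ z in Set.Ioo 0 y,
          myk α γ y z * (ENNReal.ofReal |F z| ^ (2:ℝ) * myh' z)) := by
  set Bε := ∫⁻ r in Set.Ioo (0:ℝ) 1, ENNReal.ofReal (r ^ α * (1-r) ^ γ) with hB
  set A := ∫⁻ z in Set.Ioo 0 y, myk α γ y z * myh z with hA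
  set Bi := ∫⁻ z in Set.Ioo 0 y, myk α γ y z * (ENNReal.ofReal |F z| ^ (2:ℝ) * myh' z) with hBi
  have h1 : ∫⁻ z in Set.Ioo 0 y, myk α γ y z * ENNReal.ofReal |F z|
      ≤ A ^ (1/2:ℝ) * Bi ^ (1/2:ℝ) := by
    calc ∫⁻ z in Set.Ioo 0 y, myk α γ y z * ENNReal.ofReal |F z|
        = ∫⁻ z in Set.Ioo 0 y,
            ((fun z => (myk α γ y z * myh z) ^ (1/2:ℝ)) *
             (fun z => (myk α γ y z * (ENNReal.ofReal |F z| ^ (2:ℝ) * myh' z)) ^ (1/2:ℝ))) z := by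
          refine setLIntegral_congr_fun measurableSet_Ioo (fun z hz => ?_)
          exact my_ptwise _ _ _ _ (myhh' hz.1)
      _ ≤ (∫⁻ z in Set.Ioo 0 y, ((myk α γ y z * myh z) ^ (1/2:ℝ)) ^ (2:ℝ)) ^ (1/2:ℝ) *
          (∫⁻ z in Set.Ioo 0 y,
            ((myk α γ y z * (ENNReal.ofReal |F z| ^ (2:ℝ) * myh' z)) ^ (1/2:ℝ)) ^ (2:ℝ)) ^ (1/2:ℝ) := by
          refine ENNReal.lintegral_mul_le_Lp_mul_Lq _ Real.HolderConjugate.two_two ?_ ?_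
          · apply Measurable.aemeasurable; unfold myk myh; fun_prop
          · apply Measurable.aemeasurable; unfold myk myh'; fun_prop
      _ = A ^ (1/2:ℝ) * Bi ^ (1/2:ℝ) := by
          rw [hA, hBi]
          simp_rw [← ENNReal.rpow_mul]
          norm_num
  have hAle : A ≤ myg γ y * Bε := by
    have : A = ENNReal.ofReal (y ^ (γ + 1/2)) * Bε := by
      rw [hA, ← my_substA hy.1]
      refine setLIntegral_congr_fun measurableSet_Ioo (fun z hz => ?_)
      unfold myk myh
      rw [← ENNReal.ofReal_mul
        (mul_nonneg (Real.rpow_nonneg (div_nonneg hz.1.le hy.1.le) _)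
          (Real.rpow_nonneg (by linarith [hz.2] : (0:ℝ) ≤ y - z) _))]
    rw [this]
    unfold myg
    exact mul_le_mul_left (ENNReal.ofReal_le_ofReal
      (Real.rpow_le_rpow_of_exponent_ge hy.1 hy.2.le (by linarith))) _
  calc (∫⁻ z in Set.Ioo 0 y, myk α γ y z * ENNReal.ofReal |F z|) ^ (2:ℝ)
      ≤ (A ^ (1/2:ℝ) * Bi ^ (1/2:ℝ)) ^ (2:ℝ) := ENNReal.rpow_le_rpow h1 (by norm_num)
    _ = A * Bi := by
        rw [ENNReal.mul_rpow_of_nonneg _ _ (by norm_num : (0:ℝ) ≤ 2), ← ENNReal.rpow_mul,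
          ← ENNReal.rpow_mul]
        norm_num
    _ ≤ (myg γ y * Bε) * Bi := by gcongr
    _ = Bε * (myg γ y * Bi) := by ring

lemma my_swap (P : ℝ → ℝ → ℝ≥0∞) (hP : Measurable (Function.uncurry P)) :
    ∫⁻ y in Set.Ioo (0:ℝ) 1, ∫⁻ z in Set.Ioo 0 y, P y z
      = ∫⁻ z in Set.Ioo (0:ℝ) 1, ∫⁻ y in Set.Ioo z 1, P y z := by
  set R : Set (ℝ × ℝ) := {p : ℝ × ℝ | 0 < p.2 ∧ p.2 < p.1 ∧ p.1 < 1} with hRdef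
  have hR : MeasurableSet R := by
    have : R = {p : ℝ × ℝ | 0 < p.2} ∩ ({p : ℝ × ℝ | p.2 < p.1} ∩ {p : ℝ × ℝ | p.1 < 1}) := by
      ext p; simp [hRdef, and_assoc]
    rw [this]
    exact (measurableSet_lt measurable_const measurable_snd).inter
      ((measurableSet_lt measurable_snd measurable_fst).inter
        (measurableSet_lt measurable_fst measurable_const))
  set Q : ℝ × ℝ → ℝ≥0∞ := R.indicator (Function.uncurry P) with hQdef
  have hQ : Measurable Q := hP.indicator hR
  have e1 : ∀ y, ∫⁻ z, Q (y, z)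
      = (Set.Ioo (0:ℝ) 1).indicator (fun y => ∫⁻ z in Set.Ioo 0 y, P y z) y := by
    intro y
    by_cases hy : y ∈ Set.Ioo (0:ℝ) 1
    · rw [Set.indicator_of_mem hy, ← lintegral_indicator measurableSet_Ioo]
      refine lintegral_congr fun z => ?_
      rw [hQdef, Set.indicator_apply, Set.indicator_apply]
      have hiff : ((y, z) ∈ R) ↔ z ∈ Set.Ioo 0 y :=
        ⟨fun h => ⟨h.1, h.2.1⟩, fun h => ⟨h.1, h.2, hy.2⟩⟩
      rw [if_congr hiff rfl rfl]; rfl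
    · rw [Set.indicator_of_notMem hy]
      have : ∀ z : ℝ, Q (y, z) = 0 := fun z =>
        Set.indicator_of_notMem (fun hmem => hy ⟨lt_trans hmem.1 hmem.2.1, hmem.2.2⟩) _
      simp only [this, lintegral_zero]
  have e2 : ∀ z, ∫⁻ y, Q (y, z)
      = (Set.Ioo (0:ℝ) 1).indicator (fun z => ∫⁻ y in Set.Ioo z 1, P y z) z := by
    intro z
    by_cases hz : z ∈ Set.Ioo (0:ℝ) 1
    · rw [Set.indicator_of_mem hz, ← lintegral_indicator measurableSet_Ioo]
      refine lintegral_congr fun y => ?_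
      rw [hQdef, Set.indicator_apply, Set.indicator_apply]
      have hiff : ((y, z) ∈ R) ↔ y ∈ Set.Ioo z 1 :=
        ⟨fun h => ⟨h.2.1, h.2.2⟩, fun h => ⟨hz.1, h.1, h.2⟩⟩
      rw [if_congr hiff rfl rfl]; rfl
    · rw [Set.indicator_of_notMem hz]
      have : ∀ y : ℝ, Q (y, z) = 0 := fun y =>
        Set.indicator_of_notMem (fun hmem => hz ⟨hmem.1, lt_trans hmem.2.1 hmem.2.2⟩) _
      simp only [this, lintegral_zero]
  calc ∫⁻ y in Set.Ioo (0:ℝ) 1, ∫⁻ z in Set.Ioo 0 y, P y z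
      = ∫⁻ y, (Set.Ioo (0:ℝ) 1).indicator (fun y => ∫⁻ z in Set.Ioo 0 y, P y z) y :=
        (lintegral_indicator measurableSet_Ioo _).symm
    _ = ∫⁻ y, ∫⁻ z, Q (y, z) := by simp_rw [e1]
    _ = ∫⁻ z, ∫⁻ y, Q (y, z) := lintegral_lintegral_swap (hQ.comp
        (measurable_fst.prodMk measurable_snd)).aemeasurable
    _ = ∫⁻ z, (Set.Ioo (0:ℝ) 1).indicator (fun z => ∫⁻ y in Set.Ioo z 1, P y z) z := by
        simp_rw [e2]
    _ = ∫⁻ z in Set.Ioo (0:ℝ) 1, ∫⁻ y in Set.Ioo z 1, P y z :=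
        lintegral_indicator measurableSet_Ioo _

lemma my_inner_y (α γ : ℝ) (F : ℝ → ℝ) {z : ℝ} (hz : z ∈ Set.Ioo (0:ℝ) 1) :
    ∫⁻ y in Set.Ioo z 1, myg γ y * (myk α γ y z * (ENNReal.ofReal |F z| ^ (2:ℝ) * myh' z))
      ≤ (∫⁻ r in Set.Ioo (0:ℝ) 1, ENNReal.ofReal (r ^ α * (1-r) ^ γ)) *
        (ENNReal.ofReal |F z| ^ (2:ℝ)) := by
  set Bε := ∫⁻ r in Set.Ioo (0:ℝ) 1, ENNReal.ofReal (r ^ α * (1-r) ^ γ) with hB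
  have hc : ENNReal.ofReal |F z| ^ (2:ℝ) * myh' z ≠ ⊤ :=
    ENNReal.mul_ne_top (ENNReal.rpow_ne_top_of_nonneg (by norm_num) ENNReal.ofReal_ne_top)
      ENNReal.ofReal_ne_top
  calc ∫⁻ y in Set.Ioo z 1, myg γ y * (myk α γ y z * (ENNReal.ofReal |F z| ^ (2:ℝ) * myh' z))
      = (∫⁻ y in Set.Ioo z 1, myg γ y * myk α γ y z) * (ENNReal.ofReal |F z| ^ (2:ℝ) * myh' z) := by
        rw [← lintegral_mul_const' _ _ hc]
        exact lintegral_congr fun y => by ring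
    _ ≤ (myh z * Bε) * (ENNReal.ofReal |F z| ^ (2:ℝ) * myh' z) := by
        refine mul_le_mul_left ?_ _
        calc ∫⁻ y in Set.Ioo z 1, myg γ y * myk α γ y z
            = ∫⁻ y in Set.Ioo z 1,
                ENNReal.ofReal (y ^ (-γ - 3/2) * ((z/y) ^ (α + 1/2) * (y-z) ^ γ)) := by
              refine setLIntegral_congr_fun measurableSet_Ioo (fun y hy => ?_)
              unfold myg myk
              rw [← ENNReal.ofReal_mul (Real.rpow_nonneg (lt_trans hz.1 hy.1).le _)]
          _ ≤ ENNReal.ofReal (z ^ (-(1/2) : ℝ)) * Bε := my_substB hz.1 hz.2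
          _ = myh z * Bε := rfl
    _ = (Bε * ENNReal.ofReal |F z| ^ (2:ℝ)) * (myh z * myh' z) := by ring
    _ = Bε * ENNReal.ofReal |F z| ^ (2:ℝ) := by rw [myhh' hz.1, mul_one]

theorem stmt_14 (α γ : ℝ) (hα : -1 < α) (hγ₁ : -1 < γ) (hγ₂ : γ < 0) :
    ∃ C : ℝ, 0 < C ∧ ∀ F : ℝ → ℝ, Measurable F →
      (∫⁻ y in Set.Ioo (0:ℝ) 1,
        (∫⁻ z in Set.Ioo (0:ℝ) y,
          ENNReal.ofReal ((z / y) ^ (α + 1/2) * (y - z) ^ γ * |F z|)) ^ (2:ℝ)) ^ (1/2 : ℝ)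
      ≤ ENNReal.ofReal C *
        (∫⁻ z in Set.Ioi (0:ℝ), ENNReal.ofReal (F z ^ 2)) ^ (1/2 : ℝ) := by
  set Bε := ∫⁻ r in Set.Ioo (0:ℝ) 1, ENNReal.ofReal (r ^ α * (1-r) ^ γ) with hB
  have hBfin : Bε ≠ ⊤ := (my_beta_fin hα hγ₁).ne
  refine ⟨Bε.toReal + 1, by positivity, fun F hF => ?_⟩
  have hBC : Bε ≤ ENNReal.ofReal (Bε.toReal + 1) := by
    conv_lhs => rw [← ENNReal.ofReal_toReal hBfin]
    exact ENNReal.ofReal_le_ofReal (by linarith)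
  set J := ∫⁻ z in Set.Ioi (0:ℝ), ENNReal.ofReal (F z ^ 2) with hJ
  have key : (∫⁻ y in Set.Ioo (0:ℝ) 1,
      (∫⁻ z in Set.Ioo (0:ℝ) y,
        ENNReal.ofReal ((z / y) ^ (α + 1/2) * (y - z) ^ γ * |F z|)) ^ (2:ℝ))
      ≤ (Bε * Bε) * J := by
    calc ∫⁻ y in Set.Ioo (0:ℝ) 1,
        (∫⁻ z in Set.Ioo (0:ℝ) y,
          ENNReal.ofReal ((z / y) ^ (α + 1/2) * (y - z) ^ γ * |F z|)) ^ (2:ℝ)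
        = ∫⁻ y in Set.Ioo (0:ℝ) 1,
            (∫⁻ z in Set.Ioo (0:ℝ) y, myk α γ y z * ENNReal.ofReal |F z|) ^ (2:ℝ) := by
          refine setLIntegral_congr_fun measurableSet_Ioo (fun y hy => ?_)
          congr 1
          refine setLIntegral_congr_fun measurableSet_Ioo (fun z hz => ?_)
          unfold myk
          rw [← ENNReal.ofReal_mul
            (mul_nonneg (Real.rpow_nonneg (div_nonneg hz.1.le hy.1.le) _)
              (Real.rpow_nonneg (by linarith [hz.2] : (0:ℝ) ≤ y - z) _))]
      _ ≤ ∫⁻ y in Set.Ioo (0:ℝ) 1, Bε * (myg γ y * ∫⁻ z in Set.Ioo 0 y,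
            myk α γ y z * (ENNReal.ofReal |F z| ^ (2:ℝ) * myh' z)) := by
          refine lintegral_mono_ae ((ae_restrict_iff' measurableSet_Ioo).2
            (ae_of_all _ fun y hy => ?_))
          exact my_CS α γ hγ₁ hF hy
      _ = Bε * ∫⁻ y in Set.Ioo (0:ℝ) 1, ∫⁻ z in Set.Ioo 0 y,
            myg γ y * (myk α γ y z * (ENNReal.ofReal |F z| ^ (2:ℝ) * myh' z)) := by
          rw [lintegral_const_mul' _ _ hBfin]
          congr 1
          exact lintegral_congr fun y =>
            (lintegral_const_mul' _ _ ENNReal.ofReal_ne_top).symm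
      _ = Bε * ∫⁻ z in Set.Ioo (0:ℝ) 1, ∫⁻ y in Set.Ioo z 1,
            myg γ y * (myk α γ y z * (ENNReal.ofReal |F z| ^ (2:ℝ) * myh' z)) := by
          congr 1
          refine my_swap _ ?_
          unfold myg myk myh'
          fun_prop
      _ ≤ Bε * ∫⁻ z in Set.Ioo (0:ℝ) 1, Bε * (ENNReal.ofReal |F z| ^ (2:ℝ)) := by
          refine mul_le_mul_right (lintegral_mono_ae ((ae_restrict_iff' measurableSet_Ioo).2
            (ae_of_all _ fun z hz => my_inner_y α γ F hz))) _
      _ = (Bε * Bε) * ∫⁻ z in Set.Ioo (0:ℝ) 1, ENNReal.ofReal (F z ^ 2) := by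
          rw [lintegral_const_mul' _ _ hBfin, ← mul_assoc]
          congr 1
          refine lintegral_congr fun z => ?_
          rw [ENNReal.ofReal_rpow_of_nonneg (abs_nonneg _) (by norm_num),
            Real.rpow_two, sq_abs]
      _ ≤ (Bε * Bε) * J := by
          exact mul_le_mul_right (lintegral_mono_set Set.Ioo_subset_Ioi_self) _
  calc (∫⁻ y in Set.Ioo (0:ℝ) 1,
      (∫⁻ z in Set.Ioo (0:ℝ) y,
        ENNReal.ofReal ((z / y) ^ (α + 1/2) * (y - z) ^ γ * |F z|)) ^ (2:ℝ)) ^ (1/2 : ℝ)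
      ≤ ((Bε * Bε) * J) ^ (1/2 : ℝ) := ENNReal.rpow_le_rpow key (by norm_num)
    _ = Bε * J ^ (1/2 : ℝ) := by
        rw [ENNReal.mul_rpow_of_nonneg _ _ (by norm_num : (0:ℝ) ≤ 1/2),
          show Bε * Bε = Bε ^ (2:ℝ) by rw [ENNReal.rpow_two, pow_two],
          ← ENNReal.rpow_mul]
        norm_num
    _ ≤ ENNReal.ofReal (Bε.toReal + 1) * J ^ (1/2 : ℝ) := mul_le_mul_left hBC _
end
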